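/- arXiv:1804.09485 — 12 statements merged into one kernel-verified Lean document; each statement's English description precedes it below -/
import Mathlib

section
/- For any odd prime p, the double sum over i and j from 0 to p-1 of S(i,j) is congruent to the Legendre symbol (p/3) modulo p. -/
open Finset

/-- The super Catalan numbers `S(m,n) = C(2m,m)·C(2n,n)/C(m+n,m)` (the division is exact). -/
def superCatalan (m n : ℕ) : ℕ :=
  (Nat.choose (2 * m) m * Nat.choose (2 * n) n) / Nat.choose (m + n) m

lemma div_ineq (m n k : ℕ) : m / k + n / k + (m + n) / k ≤ 2 * m / k + 2 * n / k := by
  rcases Nat.eq_zero_or_pos k with rfl | hk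
  · simp
  obtain ⟨q1, r1, hr1, rfl⟩ : ∃ q r, r < k ∧ m = k * q + r :=
    ⟨m / k, m % k, Nat.mod_lt _ hk, by rw [Nat.div_add_mod]⟩
  obtain ⟨q2, r2, hr2, rfl⟩ : ∃ q r, r < k ∧ n = k * q + r :=
    ⟨n / k, n % k, Nat.mod_lt _ hk, by rw [Nat.div_add_mod]⟩
  have key : ∀ q r : ℕ, (k * q + r) / k = q + r / k := fun q r => Nat.mul_add_div hk q r
  have e1 : k * q1 + r1 + (k * q2 + r2) = k * (q1 + q2) + (r1 + r2) := by ring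
  have e2 : 2 * (k * q1 + r1) = k * (2 * q1) + 2 * r1 := by ring
  have e3 : 2 * (k * q2 + r2) = k * (2 * q2) + 2 * r2 := by ring
  rw [e1, e2, e3, key, key, key, key, key]
  have z1 : r1 / k = 0 := Nat.div_eq_of_lt hr1
  have z2 : r2 / k = 0 := Nat.div_eq_of_lt hr2
  have : (r1 + r2) / k ≤ 2 * r1 / k + 2 * r2 / k := by
    rcases Nat.lt_or_ge (r1 + r2) k with h | h
    · simp [Nat.div_eq_of_lt h]
    · have h2 : (r1 + r2) / k < 2 := by rw [Nat.div_lt_iff_lt_mul hk]; omega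
      have h3 : 1 ≤ 2 * r1 / k + 2 * r2 / k := by
        rcases Nat.lt_or_ge (2 * r1) k with h4 | h4
        · have h5 : 1 ≤ 2 * r2 / k := by rw [Nat.le_div_iff_mul_le hk]; omega
          exact le_trans h5 (Nat.le_add_left _ _)
        · have h5 : 1 ≤ 2 * r1 / k := by rw [Nat.le_div_iff_mul_le hk]; omega
          exact le_trans h5 (Nat.le_add_right _ _)
      exact le_trans (Nat.lt_succ_iff.mp h2) h3
  omega

lemma fact_dvd (m n : ℕ) :
    (m + n).factorial * (m.factorial * n.factorial) ∣ (2 * m).factorial * (2 * n).factorial := by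
  have hL : (m + n).factorial * (m.factorial * n.factorial) ≠ 0 := by
    positivity
  have hR : (2 * m).factorial * (2 * n).factorial ≠ 0 := by positivity
  rw [← Nat.factorization_le_iff_dvd hL hR]
  intro q
  by_cases hq : q.Prime
  · haveI : Fact q.Prime := ⟨hq⟩
    have hfac : ∀ x : ℕ, x ≤ 2 * (m + n) →
        (x.factorial).factorization q = ∑ i ∈ Finset.Ico 1 (2 * (m + n) + 1), x / q ^ i := by
      intro x hx
      rw [Nat.factorization_def _ hq]
      exact padicValNat_factorial (lt_of_le_of_lt (Nat.log_le_self q x) (by omega))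
    rw [Nat.factorization_mul (by positivity) (by positivity),
        Nat.factorization_mul (by positivity) (by positivity),
        Nat.factorization_mul (by positivity) (by positivity)]
    simp only [Finsupp.coe_add, Pi.add_apply]
    rw [hfac (m + n) (by omega), hfac m (by omega), hfac n (by omega),
        hfac (2 * m) (by omega), hfac (2 * n) (by omega),
        ← Finset.sum_add_distrib, ← Finset.sum_add_distrib, ← Finset.sum_add_distrib]
    exact Finset.sum_le_sum fun i _ => by
      have := div_ineq m n (q ^ i)
      omega
  · simp [Nat.factorization_eq_zero_of_not_prime _ hq]

lemma choose_dvd_choose_mul (m n : ℕ) :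
    Nat.choose (m + n) m ∣ Nat.choose (2 * m) m * Nat.choose (2 * n) n := by
  obtain ⟨c, hc⟩ := fact_dvd m n
  have h1 : Nat.choose (2 * m) m * m.factorial * m.factorial = (2 * m).factorial := by
    have := Nat.choose_mul_factorial_mul_factorial (show m ≤ 2 * m by omega)
    rwa [show 2 * m - m = m by omega] at this
  have h2 : Nat.choose (2 * n) n * n.factorial * n.factorial = (2 * n).factorial := by
    have := Nat.choose_mul_factorial_mul_factorial (show n ≤ 2 * n by omega)
    rwa [show 2 * n - n = n by omega] at this
  have h3 : Nat.choose (m + n) m * m.factorial * n.factorial = (m + n).factorial := by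
    have := Nat.choose_mul_factorial_mul_factorial (show m ≤ m + n by omega)
    rwa [show m + n - m = n by omega] at this
  refine ⟨c, ?_⟩
  have pos : 0 < m.factorial * m.factorial * (n.factorial * n.factorial) := by positivity
  refine Nat.eq_of_mul_eq_mul_right pos ?_
  calc Nat.choose (2 * m) m * Nat.choose (2 * n) n *
        (m.factorial * m.factorial * (n.factorial * n.factorial))
      = (Nat.choose (2 * m) m * m.factorial * m.factorial) *
        (Nat.choose (2 * n) n * n.factorial * n.factorial) := by ring
    _ = (2 * m).factorial * (2 * n).factorial := by rw [h1, h2]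
    _ = (m + n).factorial * (m.factorial * n.factorial) * c := hc
    _ = (Nat.choose (m + n) m * m.factorial * n.factorial) * (m.factorial * n.factorial) * c := by
        rw [h3]
    _ = Nat.choose (m + n) m * c *
        (m.factorial * m.factorial * (n.factorial * n.factorial)) := by ring

lemma superCatalan_spec (m n : ℕ) :
    superCatalan m n * Nat.choose (m + n) m = Nat.choose (2 * m) m * Nat.choose (2 * n) n :=
  Nat.div_mul_cancel (choose_dvd_choose_mul m n)

lemma superCatalan_fact (m n : ℕ) :
    superCatalan m n * (m.factorial * n.factorial * (m + n).factorial) =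
      (2 * m).factorial * (2 * n).factorial := by
  have h1 : Nat.choose (2 * m) m * m.factorial * m.factorial = (2 * m).factorial := by
    have := Nat.choose_mul_factorial_mul_factorial (show m ≤ 2 * m by omega)
    rwa [show 2 * m - m = m by omega] at this
  have h2 : Nat.choose (2 * n) n * n.factorial * n.factorial = (2 * n).factorial := by
    have := Nat.choose_mul_factorial_mul_factorial (show n ≤ 2 * n by omega)
    rwa [show 2 * n - n = n by omega] at this
  have h3 : Nat.choose (m + n) m * m.factorial * n.factorial = (m + n).factorial := by
    have := Nat.choose_mul_factorial_mul_factorial (show m ≤ m + n by omega)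
    rwa [show m + n - m = n by omega] at this
  have hs := superCatalan_spec m n
  calc superCatalan m n * (m.factorial * n.factorial * (m + n).factorial)
      = superCatalan m n * (m.factorial * n.factorial *
          (Nat.choose (m + n) m * m.factorial * n.factorial)) := by rw [h3]
    _ = (superCatalan m n * Nat.choose (m + n) m) *
          (m.factorial * m.factorial * (n.factorial * n.factorial)) := by ring
    _ = (Nat.choose (2 * m) m * Nat.choose (2 * n) n) *
          (m.factorial * m.factorial * (n.factorial * n.factorial)) := by rw [hs]
    _ = (Nat.choose (2 * m) m * m.factorial * m.factorial) *
          (Nat.choose (2 * n) n * n.factorial * n.factorial) := by ring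
    _ = _ := by rw [h1, h2]

lemma superCatalan_rec (m n : ℕ) :
    4 * superCatalan m n = superCatalan (m + 1) n + superCatalan m (n + 1) := by
  have E1 := superCatalan_fact m n
  have E2 := superCatalan_fact (m + 1) n
  have E3 := superCatalan_fact m (n + 1)
  rw [show 2 * (m + 1) = (2 * m + 1) + 1 by ring, show m + 1 + n = (m + n) + 1 by ring,
      Nat.factorial_succ (2 * m + 1), Nat.factorial_succ (2 * m), Nat.factorial_succ m,
      Nat.factorial_succ (m + n)] at E2
  rw [show 2 * (n + 1) = (2 * n + 1) + 1 by ring, show m + (n + 1) = (m + n) + 1 by ring,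
      Nat.factorial_succ (2 * n + 1), Nat.factorial_succ (2 * n), Nat.factorial_succ n,
      Nat.factorial_succ (m + n)] at E3
  have key : (4 * superCatalan m n : ℤ) =
      superCatalan (m + 1) n + superCatalan m (n + 1) := by
    have D0 : ((m.factorial : ℤ) * n.factorial * (m + n).factorial *
        ((m : ℤ) + 1) * ((n : ℤ) + 1) * ((m : ℤ) + (n : ℤ) + 1)) ≠ 0 := by
      have := m.factorial_pos
      have := n.factorial_pos
      have := (m + n).factorial_pos
      positivity
    refine mul_right_cancel₀ D0 ?_
    have E1' : (superCatalan m n : ℤ) * (m.factorial * n.factorial * (m + n).factorial) =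
        (2 * m).factorial * (2 * n).factorial := by exact_mod_cast E1
    have E2' : (superCatalan (m + 1) n : ℤ) *
        (((m : ℤ) + 1) * m.factorial * n.factorial * (((m : ℤ) + n + 1) * (m + n).factorial)) =
        ((2 * m : ℤ) + 1 + 1) * (((2 * m : ℤ) + 1) * (2 * m).factorial) * (2 * n).factorial := by
      exact_mod_cast E2
    have E3' : (superCatalan m (n + 1) : ℤ) *
        (m.factorial * (((n : ℤ) + 1) * n.factorial) * (((m : ℤ) + n + 1) * (m + n).factorial)) =
        (2 * m).factorial * (((2 * n : ℤ) + 1 + 1) * (((2 * n : ℤ) + 1) * (2 * n).factorial)) := by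
      exact_mod_cast E3
    linear_combination (4 * ((m : ℤ) + 1) * ((n : ℤ) + 1) * ((m : ℤ) + n + 1)) * E1' -
      ((n : ℤ) + 1) * E2' - ((m : ℤ) + 1) * E3'
  exact_mod_cast key

lemma superCatalan_symm (m n : ℕ) : superCatalan m n = superCatalan n m := by
  unfold superCatalan
  rw [mul_comm, Nat.add_comm, Nat.choose_symm_add]

lemma superCatalan_zero_left (n : ℕ) : superCatalan 0 n = Nat.choose (2 * n) n := by
  simp [superCatalan]

lemma superCatalan_zero_right (m : ℕ) : superCatalan m 0 = Nat.choose (2 * m) m := by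
  simp [superCatalan]

open Finset in
/-- product of odd numbers -/
def dfact (k : ℕ) : ℕ := ∏ j ∈ Finset.range k, (2 * j + 1)

lemma two_mul_factorial (k : ℕ) : (2 * k).factorial = 2 ^ k * k.factorial * dfact k := by
  induction k with
  | zero => simp [dfact]
  | succ k ih =>
    have : 2 * (k + 1) = (2 * k + 1) + 1 := by ring
    rw [this, Nat.factorial_succ (2 * k + 1), Nat.factorial_succ (2 * k), Nat.factorial_succ k,
        dfact, Finset.prod_range_succ, ← dfact, ih]
    ring

lemma central_binom_eq (k : ℕ) : Nat.choose (2 * k) k * k.factorial = 2 ^ k * dfact k := by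
  have h1 : Nat.choose (2 * k) k * k.factorial * k.factorial = (2 * k).factorial := by
    have := Nat.choose_mul_factorial_mul_factorial (show k ≤ 2 * k by omega)
    rwa [show 2 * k - k = k by omega] at this
  have h2 := two_mul_factorial k
  have hpos : 0 < k.factorial := k.factorial_pos
  refine Nat.eq_of_mul_eq_mul_right hpos ?_
  rw [h1, h2]; ring

section Prime
variable {p : ℕ} (hp : p.Prime)

lemma choose_half_eq {h : ℕ} (hph : p = 2 * h + 1) :
    ∀ k, k ≤ h → ((-2 : ZMod p)) ^ k * ((Nat.choose h k : ZMod p) * (k.factorial : ZMod p)) =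
      (dfact k : ZMod p) := by
  intro k
  induction k with
  | zero => intro _; simp [dfact]
  | succ k ih =>
    intro hk
    have hkh : k ≤ h := by omega
    have hrec : Nat.choose h (k + 1) * (k + 1) = Nat.choose h k * (h - k) :=
      Nat.choose_succ_right_eq h k
    have hcast : ((h - k : ℕ) : ZMod p) = (h : ZMod p) - (k : ZMod p) := by
      exact_mod_cast Nat.cast_sub hkh
    have hp0 : ((p : ZMod p)) = 0 := ZMod.natCast_self p
    have h2h : (2 : ZMod p) * (h : ZMod p) + 1 = 0 := by
      have : ((2 * h + 1 : ℕ) : ZMod p) = 0 := by rw [← hph]; exact hp0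
      push_cast at this; linear_combination this
    have key : (-2 : ZMod p) * ((h : ZMod p) - (k : ZMod p)) = 2 * k + 1 := by
      linear_combination (-1 : ZMod p) * h2h
    have hfs : ((k + 1).factorial : ZMod p) = (k + 1) * (k.factorial : ZMod p) := by
      rw [Nat.factorial_succ]; push_cast; ring
    have hrec' : (Nat.choose h (k + 1) : ZMod p) * ((k : ZMod p) + 1) =
        (Nat.choose h k : ZMod p) * ((h : ZMod p) - (k : ZMod p)) := by
      rw [← hcast]; exact_mod_cast congrArg (Nat.cast : ℕ → ZMod p) hrec
    rw [dfact, Finset.prod_range_succ, ← dfact]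
    push_cast
    rw [← ih hkh]
    rw [pow_succ, hfs]
    push_cast
    linear_combination ((-2 : ZMod p)) ^ k * (-2) * (k.factorial : ZMod p) * hrec' +
      ((-2 : ZMod p)) ^ k * (k.factorial : ZMod p) * (Nat.choose h k : ZMod p) * key

include hp in
lemma central_binom_cong {h : ℕ} (hph : p = 2 * h + 1) {k : ℕ} (hk : k ≤ h) :
    ((Nat.choose (2 * k) k : ℕ) : ZMod p) = (-4 : ZMod p) ^ k * (Nat.choose h k : ZMod p) := by
  haveI : Fact p.Prime := ⟨hp⟩
  have hfacne : ((k.factorial : ℕ) : ZMod p) ≠ 0 := by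
    rw [Ne, ZMod.natCast_eq_zero_iff]
    intro hdvd
    have := (Nat.Prime.dvd_factorial hp).mp hdvd
    omega
  have h1 : ((Nat.choose (2 * k) k : ℕ) : ZMod p) * (k.factorial : ZMod p) =
      (2 : ZMod p) ^ k * (dfact k : ZMod p) := by
    exact_mod_cast congrArg (Nat.cast : ℕ → ZMod p) (central_binom_eq k)
  have h2 := choose_half_eq (p := p) hph k hk
  refine mul_right_cancel₀ hfacne ?_
  rw [h1, ← h2]
  have : (-4 : ZMod p) = 2 * (-2) := by ring
  rw [this, mul_pow]
  ring

include hp in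
lemma central_binom_zero {h : ℕ} (hph : p = 2 * h + 1) {k : ℕ} (hk1 : h < k) (hk2 : k < p) :
    ((Nat.choose (2 * k) k : ℕ) : ZMod p) = 0 := by
  rw [ZMod.natCast_eq_zero_iff]
  rw [two_mul]
  exact Nat.Prime.dvd_choose_add hp hk2 hk2 (by omega)

include hp in
lemma sum_central_binom {h : ℕ} (hph : p = 2 * h + 1) :
    (∑ k ∈ Finset.range p, ((Nat.choose (2 * k) k : ℕ) : ZMod p)) = (-3 : ZMod p) ^ h := by
  have hsub : Finset.range (h + 1) ⊆ Finset.range p := by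
    intro x hx; rw [Finset.mem_range] at *; omega
  rw [← Finset.sum_subset hsub (fun x hx hnx => by
    rw [Finset.mem_range] at hx hnx
    exact central_binom_zero hp hph (by omega) hx)]
  have : ∀ k ∈ Finset.range (h + 1),
      ((Nat.choose (2 * k) k : ℕ) : ZMod p) =
        (-4 : ZMod p) ^ k * 1 ^ (h - k) * (Nat.choose h k : ZMod p) := by
    intro k hk
    rw [Finset.mem_range] at hk
    rw [central_binom_cong hp hph (by omega)]
    ring
  rw [Finset.sum_congr rfl this]
  have := add_pow (-4 : ZMod p) 1 h
  rw [show (-4 : ZMod p) + 1 = -3 by ring] at this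
  rw [← this]

include hp in
lemma choose_p_add_cong {n : ℕ} (hn : n < p) : ((Nat.choose (p + n) p : ℕ) : ZMod p) = 1 := by
  rw [Nat.add_choose_eq]
  push_cast
  rw [Finset.sum_eq_single_of_mem (p, 0) (Finset.HasAntidiagonal.mem_antidiagonal.mpr (by omega))]
  · simp
  · rintro ⟨i, j⟩ hmem hne
    rw [Finset.HasAntidiagonal.mem_antidiagonal] at hmem
    simp only at hmem ⊢
    rcases Nat.eq_zero_or_pos i with rfl | hi
    · have : Nat.choose n j = 0 := Nat.choose_eq_zero_of_lt (by omega)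
      simp [this]
    · have hip : i < p := by
        rcases Nat.lt_or_ge i p with h | h
        · exact h
        · exfalso; exact hne (by ext <;> simp <;> omega)
      have : ((Nat.choose p i : ℕ) : ZMod p) = 0 := by
        rw [ZMod.natCast_eq_zero_iff]
        exact Nat.Prime.dvd_choose_self hp (by omega) hip
      rw [this, zero_mul]

include hp in
lemma choose_two_p_cong (hodd : Odd p) : ((Nat.choose (2 * p) p : ℕ) : ZMod p) = 2 := by
  rw [two_mul, Nat.add_choose_eq]
  push_cast
  rw [Finset.sum_eq_add_of_mem (p, 0) (0, p)
      (Finset.HasAntidiagonal.mem_antidiagonal.mpr (by omega)) (Finset.HasAntidiagonal.mem_antidiagonal.mpr (by omega))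
      (by have := hp.pos; intro hc; rw [Prod.mk.injEq] at hc; omega) ?_]
  · simp; ring
  · rintro ⟨i, j⟩ hmem ⟨hne1, hne2⟩
    rw [Finset.HasAntidiagonal.mem_antidiagonal] at hmem
    simp only at hmem ⊢
    have hi0 : i ≠ 0 := fun h => hne2 (by ext <;> simp <;> omega)
    have hip : i < p := by
      rcases Nat.lt_or_ge i p with h | h
      · exact h
      · exfalso; exact hne1 (by ext <;> simp <;> omega)
    have : ((Nat.choose p i : ℕ) : ZMod p) = 0 := by
      rw [ZMod.natCast_eq_zero_iff]
      exact Nat.Prime.dvd_choose_self hp hi0 hip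
    rw [this, zero_mul]

include hp in
lemma superCatalan_p_cong (hodd : Odd p) {n : ℕ} (hn : n < p) :
    ((superCatalan p n : ℕ) : ZMod p) = 2 * ((Nat.choose (2 * n) n : ℕ) : ZMod p) := by
  have hs := superCatalan_spec p n
  have : ((superCatalan p n : ℕ) : ZMod p) * ((Nat.choose (p + n) p : ℕ) : ZMod p) =
      ((Nat.choose (2 * p) p : ℕ) : ZMod p) * ((Nat.choose (2 * n) n : ℕ) : ZMod p) := by
    exact_mod_cast congrArg (Nat.cast : ℕ → ZMod p) hs
  rwa [choose_p_add_cong hp hn, choose_two_p_cong hp hodd, mul_one] at this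

end Prime

lemma telescope (p : ℕ) :
    2 * (∑ i ∈ Finset.range p, ∑ j ∈ Finset.range p, superCatalan i j) +
      (∑ j ∈ Finset.range p, superCatalan 0 j + ∑ i ∈ Finset.range p, superCatalan i 0) =
    ∑ j ∈ Finset.range p, superCatalan p j + ∑ i ∈ Finset.range p, superCatalan i p := by
  set T := ∑ i ∈ Finset.range p, ∑ j ∈ Finset.range p, superCatalan i j with hT
  have h4 : 4 * T = (∑ i ∈ Finset.range p, ∑ j ∈ Finset.range p, superCatalan (i + 1) j) +
      (∑ i ∈ Finset.range p, ∑ j ∈ Finset.range p, superCatalan i (j + 1)) := by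
    rw [hT, Finset.mul_sum]
    rw [← Finset.sum_add_distrib]
    refine Finset.sum_congr rfl fun i _ => ?_
    rw [Finset.mul_sum, ← Finset.sum_add_distrib]
    exact Finset.sum_congr rfl fun j _ => superCatalan_rec i j
  have X1 : (∑ i ∈ Finset.range p, ∑ j ∈ Finset.range p, superCatalan (i + 1) j) +
      ∑ j ∈ Finset.range p, superCatalan 0 j = T + ∑ j ∈ Finset.range p, superCatalan p j := by
    rw [Finset.sum_comm, ← Finset.sum_add_distrib]
    rw [hT, Finset.sum_comm (s := Finset.range p), ← Finset.sum_add_distrib]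
    refine Finset.sum_congr rfl fun j _ => ?_
    rw [← Finset.sum_range_succ' (fun i => superCatalan i j) p,
        Finset.sum_range_succ (fun i => superCatalan i j) p]
  have X2 : (∑ i ∈ Finset.range p, ∑ j ∈ Finset.range p, superCatalan i (j + 1)) +
      ∑ i ∈ Finset.range p, superCatalan i 0 = T + ∑ i ∈ Finset.range p, superCatalan i p := by
    rw [← Finset.sum_add_distrib, hT, ← Finset.sum_add_distrib]
    refine Finset.sum_congr rfl fun i _ => ?_
    rw [← Finset.sum_range_succ' (fun j => superCatalan i j) p,
        Finset.sum_range_succ (fun j => superCatalan i j) p]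
  omega

theorem stmt0 (p : ℕ) (hp : p.Prime) (hodd : Odd p) :
    (↑(∑ i ∈ Finset.range p, ∑ j ∈ Finset.range p, superCatalan i j) : ZMod p) =
      (legendreSym 3 p : ZMod p) := by
  haveI : Fact p.Prime := ⟨hp⟩
  obtain ⟨h, hph⟩ : ∃ h, p = 2 * h + 1 := by
    obtain ⟨h, hh⟩ := hodd; exact ⟨h, by omega⟩
  have hp2 : p ≠ 2 := by rintro rfl; exact (by norm_num : ¬ Odd 2) hodd
  set Scb : ZMod p := ∑ k ∈ Finset.range p, ((Nat.choose (2 * k) k : ℕ) : ZMod p) with hScb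
  -- cast the telescoping identity
  have htel := telescope p
  have htelz : (2 : ZMod p) * (∑ i ∈ Finset.range p, ∑ j ∈ Finset.range p,
        ((superCatalan i j : ℕ) : ZMod p)) +
      ((∑ j ∈ Finset.range p, ((superCatalan 0 j : ℕ) : ZMod p)) +
        ∑ i ∈ Finset.range p, ((superCatalan i 0 : ℕ) : ZMod p)) =
      (∑ j ∈ Finset.range p, ((superCatalan p j : ℕ) : ZMod p)) +
        ∑ i ∈ Finset.range p, ((superCatalan i p : ℕ) : ZMod p) := by
    have := congrArg (Nat.cast : ℕ → ZMod p) htel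
    push_cast at this
    exact_mod_cast this
  have hB1 : (∑ j ∈ Finset.range p, ((superCatalan 0 j : ℕ) : ZMod p)) = Scb := by
    refine Finset.sum_congr rfl fun j _ => ?_
    rw [superCatalan_zero_left]
  have hB2 : (∑ i ∈ Finset.range p, ((superCatalan i 0 : ℕ) : ZMod p)) = Scb := by
    refine Finset.sum_congr rfl fun i _ => ?_
    rw [superCatalan_zero_right]
  have hC1 : (∑ j ∈ Finset.range p, ((superCatalan p j : ℕ) : ZMod p)) = 2 * Scb := by
    rw [hScb, Finset.mul_sum]
    refine Finset.sum_congr rfl fun j hj => ?_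
    exact superCatalan_p_cong hp hodd (Finset.mem_range.mp hj)
  have hC2 : (∑ i ∈ Finset.range p, ((superCatalan i p : ℕ) : ZMod p)) = 2 * Scb := by
    rw [hScb, Finset.mul_sum]
    refine Finset.sum_congr rfl fun i hi => ?_
    rw [superCatalan_symm]
    exact superCatalan_p_cong hp hodd (Finset.mem_range.mp hi)
  rw [hB1, hB2, hC1, hC2] at htelz
  have h2ne : (2 : ZMod p) ≠ 0 := by
    intro hc
    have : ((2 : ℕ) : ZMod p) = 0 := by exact_mod_cast hc
    rw [ZMod.natCast_eq_zero_iff] at this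
    exact hp2 ((Nat.prime_dvd_prime_iff_eq hp Nat.prime_two).mp this)
  have hT : (∑ i ∈ Finset.range p, ∑ j ∈ Finset.range p,
      ((superCatalan i j : ℕ) : ZMod p)) = Scb := by
    have : (2 : ZMod p) * (∑ i ∈ Finset.range p, ∑ j ∈ Finset.range p,
        ((superCatalan i j : ℕ) : ZMod p)) = 2 * Scb := by
      linear_combination htelz
    exact mul_left_cancel₀ h2ne this
  have hpow : Scb = (-3 : ZMod p) ^ h := sum_central_binom hp hph
  have hleg : ((legendreSym 3 p : ℤ) : ZMod p) = (-3 : ZMod p) ^ h := by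
    by_cases hp3 : p = 3
    · subst hp3
      have h1 : h = 1 := by omega
      have hz : legendreSym 3 ((3 : ℕ) : ℤ) = 0 := by
        rw [legendreSym.eq_zero_iff]
        exact_mod_cast ZMod.natCast_self 3
      rw [hz, h1]
      have h30 : (3 : ZMod 3) = 0 := by exact_mod_cast ZMod.natCast_self 3
      push_cast
      rw [pow_one]
      linear_combination h30
    · -- p ≠ 3
      have h3ne : ((3 : ℤ) : ZMod p) ≠ 0 := by
        intro hc
        have : ((3 : ℕ) : ZMod p) = 0 := by exact_mod_cast hc
        rw [ZMod.natCast_eq_zero_iff] at this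
        have := (Nat.prime_dvd_prime_iff_eq hp Nat.prime_three).mp this
        exact hp3 this
      have hqr := legendreSym.quadratic_reciprocity (p := p) (q := 3) hp2 (by norm_num)
        (fun hc => hp3 hc)
      norm_num at hqr
      have hsq : legendreSym p 3 * legendreSym p 3 = 1 := by
        rcases legendreSym.eq_one_or_neg_one p (a := 3) h3ne with hh | hh <;> rw [hh] <;> norm_num
      have hmain : legendreSym 3 p = legendreSym p (-3) := by
        have e1 : legendreSym p (-3) = legendreSym p (-1) * legendreSym p 3 := by
          rw [← legendreSym.mul]; norm_num
        have e2 : legendreSym p (-1) = (-1) ^ (p / 2) := by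
          rw [legendreSym.at_neg_one hp2, ZMod.χ₄_eq_neg_one_pow (Nat.odd_iff.mp hodd)]
        have e3 : legendreSym 3 p * (legendreSym p 3 * legendreSym p 3) =
            (-1) ^ (p / 2) * legendreSym p 3 := by
          rw [← mul_assoc, hqr]
        rw [hsq, mul_one] at e3
        rw [e3, e1, e2]
      rw [hmain, legendreSym.eq_pow]
      have hdiv : p / 2 = h := by omega
      rw [hdiv]
      push_cast
      ring
  push_cast
  rw [hT, hpow, ← hleg]
end

section
/- For any odd prime p, the double sum over i and j from 0 to p-1 of (3i+3j+1)*S(i,j) is congruent to -7*(p/3) modulo p. -/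
open Finset

private def TT : ℕ → ℕ → ℤ
  | m, 0 => ((2 * m).choose m : ℤ)
  | m, n + 1 => 4 * TT m n - TT (m + 1) n
termination_by m n => n

private lemma TT_zero (m : ℕ) : TT m 0 = ((2 * m).choose m : ℤ) := by simp [TT]

private lemma TT_succ (m n : ℕ) : TT m (n + 1) = 4 * TT m n - TT (m + 1) n := by simp [TT]

-- central binomial step, cast to ℤ
private lemma cb_step (m : ℕ) :
    ((m : ℤ) + 1) * ((2 * (m + 1)).choose (m + 1) : ℤ)
      = 2 * (2 * m + 1) * ((2 * m).choose m : ℤ) := by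
  have h := Nat.succ_mul_centralBinom_succ m
  rw [Nat.centralBinom_eq_two_mul_choose, Nat.centralBinom_eq_two_mul_choose] at h
  exact_mod_cast h

private lemma TT_rec_n (n m : ℕ) :
    ((m : ℤ) + n + 1) * TT m (n + 1) = 2 * (2 * n + 1) * TT m n := by
  induction n generalizing m with
  | zero =>
    rw [TT_succ, TT_zero, TT_zero]
    push_cast
    linear_combination -(cb_step m)
  | succ n ih =>
    have h1 := ih m
    have h2 := ih (m + 1)
    have hdef : TT m (n + 1) = 4 * TT m n - TT (m + 1) n := TT_succ m n
    have hne : ((m : ℤ) + n + 1) ≠ 0 := by positivity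
    apply mul_left_cancel₀ hne
    rw [TT_succ m (n + 1)]
    push_cast at h2 ⊢
    linear_combination (4 * (m : ℤ) + 4 * n + 4) * h1 - ((m : ℤ) + n + 1) * h2
      - (4 * (n : ℤ) + 2) * ((m : ℤ) + n + 1) * hdef
private lemma TT_rec_m (n m : ℕ) :
    ((m : ℤ) + n + 1) * TT (m + 1) n = 2 * (2 * m + 1) * TT m n := by
  induction n generalizing m with
  | zero =>
    rw [TT_zero, TT_zero]
    push_cast
    linear_combination cb_step m
  | succ n ih =>
    have h2 := TT_rec_n n (m + 1)
    have h1 := TT_rec_n n m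
    have ih' := ih m
    have hne : ((m : ℤ) + n + 1) ≠ 0 := by positivity
    apply mul_left_cancel₀ hne
    push_cast at h2 ⊢
    linear_combination ((m : ℤ) + n + 1) * h2 + (4 * (n : ℤ) + 2) * ih'
      - 2 * (2 * (m : ℤ) + 1) * h1

private lemma choose_succ_cast (m n : ℕ) :
    ((n : ℤ) + 1) * ((m + (n + 1)).choose m : ℤ)
      = ((m : ℤ) + n + 1) * ((m + n).choose m : ℤ) := by
  have h1 := Nat.add_one_mul_choose_eq (m + n) n
  have h2 : (m + n).choose n = (m + n).choose m := by
    rw [← Nat.choose_symm (Nat.le_add_left n m)]; congr 1; omega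
  have h3 : (m + n + 1).choose (n + 1) = (m + (n + 1)).choose m := by
    rw [← Nat.choose_symm (by omega : m ≤ m + (n + 1))]; congr 1; omega
  rw [h2, h3] at h1
  have h1' : ((m : ℤ) + n + 1) * ((m + n).choose m : ℤ)
      = ((m + (n + 1)).choose m : ℤ) * ((n : ℤ) + 1) := by exact_mod_cast h1
  linear_combination -h1'

private lemma choose_mul_TT (n m : ℕ) :
    (((m + n).choose m : ℕ) : ℤ) * TT m n
      = ((2 * m).choose m : ℤ) * ((2 * n).choose n : ℤ) := by
  induction n generalizing m with
  | zero => simp [TT_zero]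
  | succ n ih =>
    have hN := choose_succ_cast m n
    have hC := cb_step n
    have hR := TT_rec_n n m
    have hI := ih m
    have hne : ((n : ℤ) + 1) * ((m : ℤ) + n + 1) ≠ 0 := by positivity
    apply mul_left_cancel₀ hne
    linear_combination (((m : ℤ) + n + 1) * TT m (n + 1)) * hN
      + (((m : ℤ) + n + 1) * (((m + n).choose m : ℕ) : ℤ)) * hR
      + (4 * (n : ℤ) + 2) * ((m : ℤ) + n + 1) * hI
      - ((m : ℤ) + n + 1) * ((2 * m).choose m : ℤ) * hC

private lemma TT_pos (m n : ℕ) : 0 < TT m n := by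
  have h := choose_mul_TT n m
  have h1 : (0 : ℤ) < ((2 * m).choose m : ℤ) * ((2 * n).choose n : ℤ) := by
    have := Nat.choose_pos (show m ≤ 2 * m by omega)
    have := Nat.choose_pos (show n ≤ 2 * n by omega)
    positivity
  have h2 : (0 : ℤ) < (((m + n).choose m : ℕ) : ℤ) := by
    have := Nat.choose_pos (show m ≤ m + n by omega)
    positivity
  nlinarith [h1, h2]

private lemma superCatalan_cast (m n : ℕ) : ((superCatalan m n : ℕ) : ℤ) = TT m n := by
  have h := choose_mul_TT n m
  have hpos := TT_pos m n
  have hN : (2 * m).choose m * (2 * n).choose n = (m + n).choose m * (TT m n).toNat := by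
    have : ((((m + n).choose m) * (TT m n).toNat : ℕ) : ℤ)
        = (((2 * m).choose m * (2 * n).choose n : ℕ) : ℤ) := by
      push_cast
      rw [Int.toNat_of_nonneg hpos.le]
      linarith [h]
    exact_mod_cast this.symm
  have hcpos : 0 < (m + n).choose m := Nat.choose_pos (by omega)
  have : superCatalan m n = (TT m n).toNat := by
    rw [superCatalan, hN, Nat.mul_div_cancel_left _ hcpos]
  rw [this, Int.toNat_of_nonneg hpos.le]
section ZModLemmas

variable {p : ℕ} [hpf : Fact p.Prime]

private lemma natCast_ne_zero_of_lt {a : ℕ} (h0 : 0 < a) (h1 : a < p) : (a : ZMod p) ≠ 0 := by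
  intro h
  rw [ZMod.natCast_eq_zero_iff] at h
  exact absurd (Nat.le_of_dvd h0 h) (by omega)

private lemma central_zero {k : ℕ} (h1 : p / 2 < k) (h2 : k < p) :
    (((2 * k).choose k : ℕ) : ZMod p) = 0 := by
  rw [ZMod.natCast_eq_zero_iff]
  have hp := hpf.out
  have h2p : 2 ≤ p := hp.two_le
  exact hp.dvd_choose h2 (by omega) (by omega)

private lemma two_h (hodd : Odd p) : (2 : ZMod p) * ((p / 2 : ℕ) : ZMod p) = -1 := by
  have h : 2 * (p / 2) + 1 = p := by
    have := Nat.odd_iff.mp hodd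
    omega
  have : ((2 * (p / 2) + 1 : ℕ) : ZMod p) = ((p : ℕ) : ZMod p) := by rw [h]
  push_cast at this
  rw [ZMod.natCast_self] at this
  linear_combination this

private lemma central_eq (hodd : Odd p) {k : ℕ} (hk : k ≤ p / 2) :
    (((2 * k).choose k : ℕ) : ZMod p) = (-4) ^ k * (((p / 2).choose k : ℕ) : ZMod p) := by
  induction k with
  | zero => simp
  | succ k ih =>
    have hkle : k ≤ p / 2 := by omega
    have hI := ih hkle
    have hp := hpf.out
    have hhp : p / 2 < p := by have := hp.two_le; omega
    have hne : ((k + 1 : ℕ) : ZMod p) ≠ 0 := natCast_ne_zero_of_lt (by omega) (by omega)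
    have hcN := Nat.succ_mul_centralBinom_succ k
    rw [Nat.centralBinom_eq_two_mul_choose, Nat.centralBinom_eq_two_mul_choose] at hcN
    have hc : ((k : ZMod p) + 1) * (((2 * (k + 1)).choose (k + 1) : ℕ) : ZMod p)
        = 2 * (2 * k + 1) * (((2 * k).choose k : ℕ) : ZMod p) := by
      exact_mod_cast congrArg (Nat.cast : ℕ → ZMod p) hcN
    have hdN := Nat.choose_succ_right_eq (p / 2) k
    have hsub : (((p / 2 - k : ℕ)) : ZMod p) = ((p / 2 : ℕ) : ZMod p) - (k : ZMod p) := by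
      rw [Nat.cast_sub hkle]
    have hd : (((p / 2).choose (k + 1) : ℕ) : ZMod p) * ((k : ZMod p) + 1)
        = (((p / 2).choose k : ℕ) : ZMod p) * (((p / 2 : ℕ) : ZMod p) - (k : ZMod p)) := by
      rw [← hsub]
      exact_mod_cast congrArg (Nat.cast : ℕ → ZMod p) hdN
    have hH := two_h (p := p) hodd
    have hne' : ((k : ZMod p) + 1) ≠ 0 := by exact_mod_cast hne
    apply mul_left_cancel₀ hne'
    linear_combination hc + 2 * (2 * (k : ZMod p) + 1) * hI - (-4 : ZMod p) ^ (k + 1) * hd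
      + 2 * (-4 : ZMod p) ^ k * (((p / 2).choose k : ℕ) : ZMod p) * hH

private lemma sum_central (hodd : Odd p) :
    ∑ k ∈ Finset.range p, (((2 * k).choose k : ℕ) : ZMod p) = (-3 : ZMod p) ^ (p / 2) := by
  have hp := hpf.out
  have hle : p / 2 + 1 ≤ p := by have := hp.two_le; omega
  rw [← Finset.sum_range_add_sum_Ico _ hle]
  have h2 : ∑ k ∈ Finset.Ico (p / 2 + 1) p, (((2 * k).choose k : ℕ) : ZMod p) = 0 := by
    apply Finset.sum_eq_zero
    intro k hk
    rw [Finset.mem_Ico] at hk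
    exact central_zero (by omega) hk.2
  rw [h2, add_zero]
  have h1 : ∑ k ∈ Finset.range (p / 2 + 1), (((2 * k).choose k : ℕ) : ZMod p)
      = ∑ k ∈ Finset.range (p / 2 + 1), (-4 : ZMod p) ^ k * (((p / 2).choose k : ℕ) : ZMod p) := by
    apply Finset.sum_congr rfl
    intro k hk
    rw [Finset.mem_range] at hk
    exact central_eq hodd (by omega)
  rw [h1]
  have h3 : (-3 : ZMod p) ^ (p / 2) = ((-4 : ZMod p) + 1) ^ (p / 2) := by norm_num
  rw [h3, add_pow]
  apply Finset.sum_congr rfl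
  intro k _
  simp

private lemma sum_tele :
    ∑ k ∈ Finset.range p, (3 * (k : ZMod p) + 2) * (((2 * k).choose k : ℕ) : ZMod p) = 0 := by
  have h := Finset.sum_range_sub (fun k => (k : ZMod p) * (((2 * k).choose k : ℕ) : ZMod p)) p
  simp only [ZMod.natCast_self, zero_mul, Nat.cast_zero] at h
  rw [sub_zero] at h
  have h2 : ∀ k : ℕ, ((k + 1 : ℕ) : ZMod p) * (((2 * (k + 1)).choose (k + 1) : ℕ) : ZMod p)
      - (k : ZMod p) * (((2 * k).choose k : ℕ) : ZMod p)
      = (3 * (k : ZMod p) + 2) * (((2 * k).choose k : ℕ) : ZMod p) := by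
    intro k
    have hcN := Nat.succ_mul_centralBinom_succ k
    rw [Nat.centralBinom_eq_two_mul_choose, Nat.centralBinom_eq_two_mul_choose] at hcN
    have hc : ((k + 1 : ℕ) : ZMod p) * (((2 * (k + 1)).choose (k + 1) : ℕ) : ZMod p)
        = 2 * (2 * (k : ZMod p) + 1) * (((2 * k).choose k : ℕ) : ZMod p) := by
      exact_mod_cast congrArg (Nat.cast : ℕ → ZMod p) hcN
    rw [hc]
    ring
  calc ∑ k ∈ Finset.range p, (3 * (k : ZMod p) + 2) * (((2 * k).choose k : ℕ) : ZMod p)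
      = ∑ k ∈ Finset.range p,
        (((k + 1 : ℕ) : ZMod p) * (((2 * (k + 1)).choose (k + 1) : ℕ) : ZMod p)
          - (k : ZMod p) * (((2 * k).choose k : ℕ) : ZMod p)) := by
        apply Finset.sum_congr rfl; intro k _; rw [h2 k]
    _ = 0 := h

end ZModLemmas
section ZModLemmas2

variable {p : ℕ} [hpf : Fact p.Prime]

private lemma choose_add : ∀ j : ℕ, j < p → (((p + j).choose j : ℕ) : ZMod p) = 1 := by
  intro j
  induction j with
  | zero => intro _; simp
  | succ j ih =>
    intro hj
    have hI := ih (by omega)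
    have h1 := Nat.add_one_mul_choose_eq (p + j) j
    have hc1 : ((p + j + 1 : ℕ) : ZMod p) = ((j + 1 : ℕ) : ZMod p) := by
      push_cast [ZMod.natCast_self]
      ring
    have h1' : ((p + j + 1 : ℕ) : ZMod p) * (((p + j).choose j : ℕ) : ZMod p)
        = (((p + j + 1).choose (j + 1) : ℕ) : ZMod p) * ((j + 1 : ℕ) : ZMod p) := by
      exact_mod_cast congrArg (Nat.cast : ℕ → ZMod p) h1
    rw [hc1, hI, mul_one] at h1'
    have hne : ((j + 1 : ℕ) : ZMod p) ≠ 0 := natCast_ne_zero_of_lt (by omega) hj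
    have hne' : ((j : ZMod p) + 1) ≠ 0 := by exact_mod_cast hne
    have h1'' : (1 : ZMod p) * ((j : ZMod p) + 1)
        = (((p + j + 1).choose (j + 1) : ℕ) : ZMod p) * ((j : ZMod p) + 1) := by
      push_cast at h1' ⊢
      linear_combination h1'
    have : (((p + j + 1).choose (j + 1) : ℕ) : ZMod p) = 1 :=
      (mul_right_cancel₀ hne' h1'').symm
    have heq : p + (j + 1) = p + j + 1 := by omega
    rw [heq, this]

private lemma C2p (hp2 : 2 ≤ p) : (((2 * p).choose p : ℕ) : ZMod p) = 2 := by
  obtain ⟨q, rfl⟩ : ∃ q, p = q + 1 := ⟨p - 1, by omega⟩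
  have h1 : (2 * (q + 1)).choose (q + 1) = (2 * q + 1).choose q + (2 * q + 1).choose (q + 1) := by
    have : 2 * (q + 1) = (2 * q + 1) + 1 := by ring
    rw [this, Nat.choose_succ_succ]
  have h2 : (2 * q + 1).choose (q + 1) = (2 * q + 1).choose q := by
    have := Nat.choose_symm (show q ≤ 2 * q + 1 by omega)
    have heq : 2 * q + 1 - q = q + 1 := by omega
    rw [heq] at this
    exact this
  have h3 : (2 * q + 1) = (q + 1) + q := by omega
  have h4 : (((2 * q + 1).choose q : ℕ) : ZMod (q + 1)) = 1 := by
    rw [h3]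
    exact choose_add q (by omega)
  rw [h1, h2]
  push_cast [h4]
  ring

private lemma TT_top_left (hp2 : 2 ≤ p) {j : ℕ} (hj : j < p) :
    ((TT p j : ℤ) : ZMod p) = 2 * (((2 * j).choose j : ℕ) : ZMod p) := by
  have h := choose_mul_TT j p
  have h' : (((p + j).choose p : ℕ) : ZMod p) * ((TT p j : ℤ) : ZMod p)
      = (((2 * p).choose p : ℕ) : ZMod p) * (((2 * j).choose j : ℕ) : ZMod p) := by
    exact_mod_cast congrArg (Int.cast : ℤ → ZMod p) h
  have hsymm : (p + j).choose p = (p + j).choose j := by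
    have := Nat.choose_symm (show p ≤ p + j by omega)
    have heq : p + j - p = j := by omega
    rw [heq] at this
    exact this.symm
  rw [hsymm, choose_add j hj, one_mul, C2p hp2] at h'
  exact h'

private lemma TT_top_right (hp2 : 2 ≤ p) {i : ℕ} (hi : i < p) :
    ((TT i p : ℤ) : ZMod p) = 2 * (((2 * i).choose i : ℕ) : ZMod p) := by
  have h := choose_mul_TT p i
  have h' : (((i + p).choose i : ℕ) : ZMod p) * ((TT i p : ℤ) : ZMod p)
      = (((2 * i).choose i : ℕ) : ZMod p) * (((2 * p).choose p : ℕ) : ZMod p) := by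
    exact_mod_cast congrArg (Int.cast : ℤ → ZMod p) h
  have hsymm : (i + p).choose i = (p + i).choose i := by rw [Nat.add_comm]
  rw [hsymm, choose_add i hi, one_mul, C2p hp2] at h'
  rw [h', mul_comm]

end ZModLemmas2

private lemma TT_left0 (j : ℕ) : TT 0 j = ((2 * j).choose j : ℤ) := by
  have h := choose_mul_TT j 0
  simpa using h

private lemma cert (m n : ℕ) :
    2 * (3 * (m : ℤ) + 3 * n + 1) * TT m n
      = ((6 * ((m : ℤ) + 1) - 6 * n - 11) * TT (m + 1) n - (6 * m - 6 * n - 11) * TT m n)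
        + ((12 * m + 1) * TT m (n + 1) - (12 * m + 1) * TT m n) := by
  have hR1 := TT_rec_m n m
  have hR2 := TT_rec_n n m
  have hne : ((m : ℤ) + n + 1) ≠ 0 := by positivity
  apply mul_left_cancel₀ hne
  linear_combination -(6 * ((m : ℤ) + 1) - 6 * n - 11) * hR1 - (12 * (m : ℤ) + 1) * hR2
private lemma leg_eq (p : ℕ) (hp : p.Prime) (hodd : Odd p) [Fact p.Prime] :
    ((legendreSym 3 (p : ℤ) : ℤ) : ZMod p) = (-3 : ZMod p) ^ (p / 2) := by
  haveI : Fact (Nat.Prime 3) := ⟨by norm_num⟩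
  by_cases hp3 : p = 3
  · subst hp3
    have h0 : legendreSym 3 ((3 : ℕ) : ℤ) = 0 := by
      rw [legendreSym.eq_zero_iff]
      have h33 : ((3:ℕ) : ZMod 3) = 0 := ZMod.natCast_self 3
      push_cast at h33 ⊢
      exact h33
    rw [h0]
    have h33 : ((3:ℕ) : ZMod 3) = 0 := ZMod.natCast_self 3
    have h32 : (3:ℕ) / 2 = 1 := rfl
    rw [h32, pow_one]
    push_cast at h33 ⊢
    linear_combination h33
  · have hne2 : p ≠ 2 := by rintro rfl; exact (Nat.not_odd_iff_even.mpr (by decide)) hodd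
    have hmod : p % 2 = 1 := Nat.odd_iff.mp hodd
    have hrec := legendreSym.quadratic_reciprocity' (p := p) (q := 3) hne2 (by norm_num)
    have h32 : (3 : ℕ) / 2 = 1 := by norm_num
    rw [h32, mul_one] at hrec
    norm_num at hrec
    have hneg1 : legendreSym p (-1) = (-1) ^ (p / 2) := by
      rw [legendreSym.at_neg_one hne2, ZMod.χ₄_eq_neg_one_pow hmod]
    have hm3 : legendreSym p (-3) = legendreSym p (-1) * legendreSym p 3 := by
      rw [show (-3 : ℤ) = -1 * 3 by norm_num, legendreSym.mul]
    have : legendreSym 3 (p : ℤ) = legendreSym p (-3) := by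
      rw [hrec, hm3, hneg1]
    rw [this, legendreSym.eq_pow]
    push_cast
    ring
theorem stmt1 (p : ℕ) (hp : p.Prime) (hodd : Odd p) :
    (↑(∑ i ∈ Finset.range p, ∑ j ∈ Finset.range p, (3 * i + 3 * j + 1) * superCatalan i j) :
        ZMod p) = -7 * (legendreSym 3 p : ZMod p) := by
  haveI : Fact p.Prime := ⟨hp⟩
  have hp2 : 2 ≤ p := hp.two_le
  have hne2 : p ≠ 2 := by rintro rfl; revert hodd; decide
  have hp3 : 3 ≤ p := by omega
  have h2ne : (2 : ZMod p) ≠ 0 := by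
    have h := natCast_ne_zero_of_lt (p := p) (a := 2) (by norm_num) (by omega)
    exact_mod_cast h
  have hcast : ∀ i j : ℕ, ((superCatalan i j : ℕ) : ZMod p) = ((TT i j : ℤ) : ZMod p) := by
    intro i j
    exact_mod_cast congrArg (Int.cast : ℤ → ZMod p) (superCatalan_cast i j)
  have hL : (↑(∑ i ∈ Finset.range p, ∑ j ∈ Finset.range p,
        (3 * i + 3 * j + 1) * superCatalan i j) : ZMod p)
      = ∑ i ∈ Finset.range p, ∑ j ∈ Finset.range p,
          (3 * (i : ZMod p) + 3 * (j : ZMod p) + 1) * ((TT i j : ℤ) : ZMod p) := by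
    push_cast [hcast]
    rfl
  rw [hL]
  apply mul_left_cancel₀ h2ne
  have hcertZ : ∀ i j : ℕ, (2 : ZMod p)
        * ((3 * (i : ZMod p) + 3 * (j : ZMod p) + 1) * ((TT i j : ℤ) : ZMod p))
      = ((6 * (((i + 1 : ℕ)) : ZMod p) - 6 * (j : ZMod p) - 11) * ((TT (i + 1) j : ℤ) : ZMod p)
          - (6 * (i : ZMod p) - 6 * (j : ZMod p) - 11) * ((TT i j : ℤ) : ZMod p))
        + ((12 * (i : ZMod p) + 1) * ((TT i (j + 1) : ℤ) : ZMod p)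
          - (12 * (i : ZMod p) + 1) * ((TT i j : ℤ) : ZMod p)) := by
    intro i j
    have h := congrArg (Int.cast : ℤ → ZMod p) (cert i j)
    push_cast at h ⊢
    linear_combination h
  have step1 : (2 : ZMod p) * ∑ i ∈ Finset.range p, ∑ j ∈ Finset.range p,
        (3 * (i : ZMod p) + 3 * (j : ZMod p) + 1) * ((TT i j : ℤ) : ZMod p)
      = (∑ i ∈ Finset.range p, ∑ j ∈ Finset.range p,
          ((6 * (((i + 1 : ℕ)) : ZMod p) - 6 * (j : ZMod p) - 11) * ((TT (i + 1) j : ℤ) : ZMod p)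
            - (6 * (i : ZMod p) - 6 * (j : ZMod p) - 11) * ((TT i j : ℤ) : ZMod p)))
        + (∑ i ∈ Finset.range p, ∑ j ∈ Finset.range p,
          ((12 * (i : ZMod p) + 1) * ((TT i (j + 1) : ℤ) : ZMod p)
            - (12 * (i : ZMod p) + 1) * ((TT i j : ℤ) : ZMod p))) := by
    rw [Finset.mul_sum, ← Finset.sum_add_distrib]
    apply Finset.sum_congr rfl
    intro i _
    rw [Finset.mul_sum, ← Finset.sum_add_distrib]
    apply Finset.sum_congr rfl
    intro j _
    exact hcertZ i j
  have stepA : (∑ i ∈ Finset.range p, ∑ j ∈ Finset.range p,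
        ((6 * (((i + 1 : ℕ)) : ZMod p) - 6 * (j : ZMod p) - 11) * ((TT (i + 1) j : ℤ) : ZMod p)
          - (6 * (i : ZMod p) - 6 * (j : ZMod p) - 11) * ((TT i j : ℤ) : ZMod p)))
      = ∑ j ∈ Finset.range p,
          (-6 * (j : ZMod p) - 11) * (((2 * j).choose j : ℕ) : ZMod p) := by
    rw [Finset.sum_comm]
    apply Finset.sum_congr rfl
    intro j hj
    rw [Finset.sum_range_sub (fun i =>
      (6 * ((i : ℕ) : ZMod p) - 6 * (j : ZMod p) - 11) * ((TT i j : ℤ) : ZMod p)) p]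
    have h1 := TT_top_left (p := p) hp2 (Finset.mem_range.mp hj)
    have h2 : ((TT 0 j : ℤ) : ZMod p) = (((2 * j).choose j : ℕ) : ZMod p) := by
      rw [TT_left0]
      push_cast
      ring
    simp only [h1, h2, ZMod.natCast_self, Nat.cast_zero]
    ring
  have stepB : (∑ i ∈ Finset.range p, ∑ j ∈ Finset.range p,
        ((12 * (i : ZMod p) + 1) * ((TT i (j + 1) : ℤ) : ZMod p)
          - (12 * (i : ZMod p) + 1) * ((TT i j : ℤ) : ZMod p)))
      = ∑ i ∈ Finset.range p,
          (12 * (i : ZMod p) + 1) * (((2 * i).choose i : ℕ) : ZMod p) := by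
    apply Finset.sum_congr rfl
    intro i hi
    rw [Finset.sum_range_sub (fun j => (12 * (i : ZMod p) + 1) * ((TT i j : ℤ) : ZMod p)) p]
    have h1 := TT_top_right (p := p) hp2 (Finset.mem_range.mp hi)
    have h2 : ((TT i 0 : ℤ) : ZMod p) = (((2 * i).choose i : ℕ) : ZMod p) := by
      rw [TT_zero]
      push_cast
      ring
    rw [h1, h2]
    ring
  rw [step1, stepA, stepB]
  have stepC : (∑ j ∈ Finset.range p,
        (-6 * (j : ZMod p) - 11) * (((2 * j).choose j : ℕ) : ZMod p))
      + (∑ i ∈ Finset.range p,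
        (12 * (i : ZMod p) + 1) * (((2 * i).choose i : ℕ) : ZMod p))
      = 2 * (∑ k ∈ Finset.range p,
          (3 * (k : ZMod p) + 2) * (((2 * k).choose k : ℕ) : ZMod p))
        - 14 * ∑ k ∈ Finset.range p, (((2 * k).choose k : ℕ) : ZMod p) := by
    rw [← Finset.sum_add_distrib, Finset.mul_sum, Finset.mul_sum, ← Finset.sum_sub_distrib]
    apply Finset.sum_congr rfl
    intro k _
    ring
  rw [stepC, sum_tele, sum_central hodd, leg_eq p hp hodd]
  ring
end

section
/- For any non-negative integer n, the double sum over i,j from 0 to n of (-4)^(i+j) * C(n,i)*C(n,j)/C(i+j,i) equals (-3)^n*(2n-1)/(4(n+1)) + (4^n/C(2n,n)) * (1/2 - sum over k from 0 to n of C_k*(-3/4)^(k+1)), where C_k is the k-th Catalan number. -/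
open Finset

private def fq (n i j : ℕ) : ℚ :=
  (-4 : ℚ) ^ (i + j) * (Nat.choose n i * Nat.choose n j) / Nat.choose (i + j) i

private def Aq (n i j : ℕ) : ℚ :=
  ((n:ℚ)+1)*(4*(n:ℚ)+3) + (2*(n:ℚ)+3)*(j:ℚ) - 6*(j:ℚ)^2 + 4*((n:ℚ)+1)*(i:ℚ) - 4*(i:ℚ)*(j:ℚ)

private def Bq (n i j : ℕ) : ℚ :=
  -(((n:ℚ)+1)*(4*(n:ℚ)+1)) - 3*(2*(n:ℚ)+1)*(j:ℚ) - 2*(j:ℚ)^2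

private lemma cert_s3 (n i j : ℕ) (hi : i ≤ n + 1) (hj : j ≤ n + 1) :
    6*((n:ℚ)+1)*((2*(n:ℚ)+1) * fq (n+1) i j - (2*(n:ℚ)+2) * fq n i j)
      = (Aq n (i+1) j * fq (n+1) (i+1) j - Aq n i j * fq (n+1) i j)
      + (Bq n i (j+1) * fq (n+1) i (j+1) - Bq n i j * fq (n+1) i j) := by
  have e1 : i + 1 + j = i + j + 1 := by omega
  have e2 : i + (j + 1) = i + j + 1 := by omega
  simp only [fq, Aq, Bq, e1, e2]
  push_cast
  have hi1 : ((i:ℚ)+1) ≠ 0 := by positivity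
  have hj1 : ((j:ℚ)+1) ≠ 0 := by positivity
  have hn1 : ((n:ℚ)+1) ≠ 0 := by positivity
  have hX : ((Nat.choose (i+j) i : ℚ)) ≠ 0 := by
    exact_mod_cast (Nat.choose_pos (Nat.le_add_right i j)).ne'
  have hy : ((Nat.choose (i+j+1) (i+1) : ℚ)) = (Nat.choose (i+j) i : ℚ) * ((i:ℚ)+(j:ℚ)+1)/((i:ℚ)+1) := by
    rw [eq_div_iff hi1]
    have h := Nat.add_one_mul_choose_eq (i+j) i
    have h' : (((i+j+1) * Nat.choose (i+j) i : ℕ) : ℚ) = ((Nat.choose (i+j+1) (i+1) * (i+1) : ℕ) : ℚ) := by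
      exact_mod_cast congrArg Nat.cast h
    push_cast at h'
    linarith [h']
  have hz : ((Nat.choose (i+j+1) i : ℚ)) = (Nat.choose (i+j) i : ℚ) * ((i:ℚ)+(j:ℚ)+1)/((j:ℚ)+1) := by
    rw [eq_div_iff hj1]
    have hs1 : Nat.choose (i+j+1) i = Nat.choose (i+j+1) (j+1) := by
      rw [← Nat.choose_symm (by omega : i ≤ i+j+1)]
      congr 1
      omega
    have hs2 : Nat.choose (i+j) j = Nat.choose (i+j) i := by
      rw [← Nat.choose_symm (Nat.le_add_right i j)]
      congr 1
      omega
    have h := Nat.add_one_mul_choose_eq (i+j) j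
    rw [hs2] at h
    have h' : (((i+j+1) * Nat.choose (i+j) i : ℕ) : ℚ) = ((Nat.choose (i+j+1) (j+1) * (j+1) : ℕ) : ℚ) := by
      exact_mod_cast congrArg Nat.cast h
    push_cast at h'
    rw [hs1]
    push_cast
    linarith [h']
  have hr : ((Nat.choose (n+1) (i+1) : ℚ)) = (Nat.choose n i : ℚ) * ((n:ℚ)+1)/((i:ℚ)+1) := by
    rw [eq_div_iff hi1]
    have h' : (((n+1) * Nat.choose n i : ℕ) : ℚ) = ((Nat.choose (n+1) (i+1) * (i+1) : ℕ) : ℚ) := by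
      exact_mod_cast congrArg Nat.cast (Nat.add_one_mul_choose_eq n i)
    push_cast at h'
    linarith [h']
  have hs : ((Nat.choose (n+1) (j+1) : ℚ)) = (Nat.choose n j : ℚ) * ((n:ℚ)+1)/((j:ℚ)+1) := by
    rw [eq_div_iff hj1]
    have h' : (((n+1) * Nat.choose n j : ℕ) : ℚ) = ((Nat.choose (n+1) (j+1) * (j+1) : ℕ) : ℚ) := by
      exact_mod_cast congrArg Nat.cast (Nat.add_one_mul_choose_eq n j)
    push_cast at h'
    linarith [h']
  have ha : ((Nat.choose n i : ℚ)) = (Nat.choose (n+1) i : ℚ) * ((n:ℚ)+1-(i:ℚ))/((n:ℚ)+1) := by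
    rw [eq_div_iff hn1]
    have h := Nat.choose_mul_succ_eq n i
    have h' : ((Nat.choose n i * (n+1) : ℕ) : ℚ) = ((Nat.choose (n+1) i * (n+1-i) : ℕ) : ℚ) := by
      exact_mod_cast congrArg Nat.cast h
    push_cast [Nat.cast_sub (show i ≤ n+1 by omega)] at h'
    linarith [h']
  have hb : ((Nat.choose n j : ℚ)) = (Nat.choose (n+1) j : ℚ) * ((n:ℚ)+1-(j:ℚ))/((n:ℚ)+1) := by
    rw [eq_div_iff hn1]
    have h := Nat.choose_mul_succ_eq n j
    have h' : ((Nat.choose n j * (n+1) : ℕ) : ℚ) = ((Nat.choose (n+1) j * (n+1-j) : ℕ) : ℚ) := by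
      exact_mod_cast congrArg Nat.cast h
    push_cast [Nat.cast_sub (show j ≤ n+1 by omega)] at h'
    linarith [h']
  rw [hy, hz, hr, hs, ha, hb]
  field_simp
  ring

private lemma bsum0 (m : ℕ) : ∑ j ∈ range (m+1), (-4:ℚ)^j * (Nat.choose m j : ℚ) = (-3)^m := by
  have h := add_pow (-4 : ℚ) 1 m
  norm_num at h
  rw [← h]

private lemma keymul (n j : ℕ) : ((j:ℚ)+1) * (Nat.choose (n+1) (j+1) : ℚ) = ((n:ℚ)+1) * (Nat.choose n j : ℚ) := by
  have h' : (((n+1) * Nat.choose n j : ℕ) : ℚ) = ((Nat.choose (n+1) (j+1) * (j+1) : ℕ) : ℚ) := by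
    exact_mod_cast congrArg Nat.cast (Nat.add_one_mul_choose_eq n j)
  push_cast at h'
  linarith

private lemma bsum1 (n : ℕ) : ∑ j ∈ range (n+2), (j:ℚ) * ((-4)^j * (Nat.choose (n+1) j : ℚ))
    = ((n:ℚ)+1) * (-4) * (-3)^n := by
  rw [Finset.sum_range_succ']
  have h1 : ∀ j ∈ range (n+1), ((j+1 : ℕ):ℚ) * ((-4)^(j+1) * (Nat.choose (n+1) (j+1) : ℚ))
      = (((n:ℚ)+1) * (-4)) * ((-4)^j * (Nat.choose n j : ℚ)) := by
    intro j _
    have := keymul n j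
    push_cast
    rw [pow_succ]
    linear_combination ((-4:ℚ)*(-4)^j) * this
  rw [Finset.sum_congr rfl h1, ← Finset.mul_sum, bsum0]
  norm_num

private lemma bsum1' (m : ℕ) : ∑ j ∈ range (m+1), (j:ℚ) * ((-4)^j * (Nat.choose m j : ℚ))
    = (m:ℚ) * (-4) * (-3)^(m-1) := by
  cases m with
  | zero => simp
  | succ k => simpa using bsum1 k

private lemma bsum2 (n : ℕ) : ∑ j ∈ range (n+2), (j:ℚ)^2 * ((-4)^j * (Nat.choose (n+1) j : ℚ))
    = ((n:ℚ)+1) * (-4) * ((n:ℚ) * (-4) * (-3)^(n-1) + (-3)^n) := by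
  rw [Finset.sum_range_succ']
  have h1 : ∀ j ∈ range (n+1), ((j+1 : ℕ):ℚ)^2 * ((-4)^(j+1) * (Nat.choose (n+1) (j+1) : ℚ))
      = (((n:ℚ)+1) * (-4)) * ((j:ℚ) * ((-4)^j * (Nat.choose n j : ℚ)) + (-4)^j * (Nat.choose n j : ℚ)) := by
    intro j _
    have := keymul n j
    push_cast
    rw [pow_succ]
    linear_combination ((-4:ℚ)*(-4)^j*((j:ℚ)+1)) * this
  rw [Finset.sum_congr rfl h1, ← Finset.mul_sum]
  rw [Finset.sum_add_distrib, bsum1', bsum0]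
  norm_num

private lemma Absum (n : ℕ) :
    (∑ j ∈ range (n+2), Aq n 0 j * fq (n+1) 0 j) + (∑ i ∈ range (n+2), Bq n i 0 * fq (n+1) i 0)
      = 6*((n:ℚ)+1)*((4*(n:ℚ)+1)*(-3)^n) := by
  have hA : ∀ j ∈ range (n+2), Aq n 0 j * fq (n+1) 0 j
      = (((n:ℚ)+1)*(4*(n:ℚ)+3)) * ((-4)^j * (Nat.choose (n+1) j : ℚ))
        + (2*(n:ℚ)+3) * ((j:ℚ) * ((-4)^j * (Nat.choose (n+1) j : ℚ)))
        + (-6) * ((j:ℚ)^2 * ((-4)^j * (Nat.choose (n+1) j : ℚ))) := by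
    intro j _
    simp [Aq, fq]
    ring
  have hB : ∀ i ∈ range (n+2), Bq n i 0 * fq (n+1) i 0
      = (-(((n:ℚ)+1)*(4*(n:ℚ)+1))) * ((-4)^i * (Nat.choose (n+1) i : ℚ)) := by
    intro i _
    simp [Bq, fq]
  rw [Finset.sum_congr rfl hA, Finset.sum_congr rfl hB]
  rw [Finset.sum_add_distrib, Finset.sum_add_distrib, ← Finset.mul_sum, ← Finset.mul_sum,
    ← Finset.mul_sum, ← Finset.mul_sum, bsum1, bsum2]
  have b0 : ∑ j ∈ range (n+2), (-4:ℚ)^j * (Nat.choose (n+1) j : ℚ) = (-3)^(n+1) := bsum0 (n+1)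
  rw [b0]
  cases n with
  | zero => norm_num
  | succ m =>
    simp only [Nat.succ_sub_one]
    push_cast
    ring

private lemma Lrec (n : ℕ) :
    (2*(n:ℚ)+1) * (∑ i ∈ range (n+2), ∑ j ∈ range (n+2), fq (n+1) i j)
      = (2*(n:ℚ)+2) * (∑ i ∈ range (n+1), ∑ j ∈ range (n+1), fq n i j)
        - (4*(n:ℚ)+1)*(-3)^n := by
  have hz1 : ∀ i j : ℕ, n < i → fq n i j = 0 := by
    intro i j h
    simp [fq, Nat.choose_eq_zero_of_lt h]
  have hz2 : ∀ i j : ℕ, n < j → fq n i j = 0 := by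
    intro i j h
    simp [fq, Nat.choose_eq_zero_of_lt h]
  have h0 : (∑ i ∈ range (n+2), ∑ j ∈ range (n+2), fq n i j)
      = ∑ i ∈ range (n+1), ∑ j ∈ range (n+1), fq n i j := by
    rw [Finset.sum_range_succ]
    have hlast : ∑ j ∈ range (n+2), fq n (n+1) j = 0 :=
      Finset.sum_eq_zero fun j _ => hz1 _ _ (by omega)
    rw [hlast, add_zero]
    refine Finset.sum_congr rfl fun i _ => ?_
    rw [Finset.sum_range_succ, hz2 i (n+1) (by omega), add_zero]
  have hsum : ∑ i ∈ range (n+2), ∑ j ∈ range (n+2),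
        (6*((n:ℚ)+1)*((2*(n:ℚ)+1) * fq (n+1) i j - (2*(n:ℚ)+2) * fq n i j))
      = ∑ i ∈ range (n+2), ∑ j ∈ range (n+2),
        ((Aq n (i+1) j * fq (n+1) (i+1) j - Aq n i j * fq (n+1) i j)
          + (Bq n i (j+1) * fq (n+1) i (j+1) - Bq n i j * fq (n+1) i j)) := by
    refine Finset.sum_congr rfl fun i hi => Finset.sum_congr rfl fun j hj => ?_
    exact cert_s3 n i j (by simp at hi; omega) (by simp at hj; omega)
  have hftop : ∀ j : ℕ, fq (n+1) (n+2) j = 0 := by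
    intro j
    simp [fq, Nat.choose_eq_zero_of_lt (show n+1 < n+2 by omega)]
  have hftop2 : ∀ i : ℕ, fq (n+1) i (n+2) = 0 := by
    intro i
    simp [fq, Nat.choose_eq_zero_of_lt (show n+1 < n+2 by omega)]
  have hAtel : ∑ i ∈ range (n+2), ∑ j ∈ range (n+2),
        (Aq n (i+1) j * fq (n+1) (i+1) j - Aq n i j * fq (n+1) i j)
      = -∑ j ∈ range (n+2), Aq n 0 j * fq (n+1) 0 j := by
    rw [Finset.sum_comm]
    have h1 : ∀ j ∈ range (n+2), ∑ i ∈ range (n+2),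
          (Aq n (i+1) j * fq (n+1) (i+1) j - Aq n i j * fq (n+1) i j)
        = -(Aq n 0 j * fq (n+1) 0 j) := by
      intro j _
      rw [Finset.sum_range_sub (fun i => Aq n i j * fq (n+1) i j)]
      rw [hftop j]
      ring
    rw [Finset.sum_congr rfl h1, Finset.sum_neg_distrib]
  have hBtel : ∑ i ∈ range (n+2), ∑ j ∈ range (n+2),
        (Bq n i (j+1) * fq (n+1) i (j+1) - Bq n i j * fq (n+1) i j)
      = -∑ i ∈ range (n+2), Bq n i 0 * fq (n+1) i 0 := by
    have h1 : ∀ i ∈ range (n+2), ∑ j ∈ range (n+2),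
          (Bq n i (j+1) * fq (n+1) i (j+1) - Bq n i j * fq (n+1) i j)
        = -(Bq n i 0 * fq (n+1) i 0) := by
      intro i _
      rw [Finset.sum_range_sub (fun j => Bq n i j * fq (n+1) i j)]
      rw [hftop2 i]
      ring
    rw [Finset.sum_congr rfl h1, Finset.sum_neg_distrib]
  have hL : ∑ i ∈ range (n+2), ∑ j ∈ range (n+2),
        (6*((n:ℚ)+1)*((2*(n:ℚ)+1) * fq (n+1) i j - (2*(n:ℚ)+2) * fq n i j))
      = 6*((n:ℚ)+1)*((2*(n:ℚ)+1) * (∑ i ∈ range (n+2), ∑ j ∈ range (n+2), fq (n+1) i j)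
          - (2*(n:ℚ)+2) * (∑ i ∈ range (n+1), ∑ j ∈ range (n+1), fq n i j)) := by
    rw [← h0]
    simp only [Finset.mul_sum, Finset.sum_sub_distrib, mul_sub]
  have hsplit : ∑ i ∈ range (n+2), ∑ j ∈ range (n+2),
        ((Aq n (i+1) j * fq (n+1) (i+1) j - Aq n i j * fq (n+1) i j)
          + (Bq n i (j+1) * fq (n+1) i (j+1) - Bq n i j * fq (n+1) i j))
      = (∑ i ∈ range (n+2), ∑ j ∈ range (n+2),
          (Aq n (i+1) j * fq (n+1) (i+1) j - Aq n i j * fq (n+1) i j))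
        + ∑ i ∈ range (n+2), ∑ j ∈ range (n+2),
          (Bq n i (j+1) * fq (n+1) i (j+1) - Bq n i j * fq (n+1) i j) := by
    simp only [Finset.sum_add_distrib]
  have hcomb := hsum
  rw [hL, hsplit, hAtel, hBtel] at hcomb
  have hAB := Absum n
  have h6 : (6*((n:ℚ)+1)) ≠ 0 := by positivity
  apply mul_left_cancel₀ h6
  linear_combination hcomb - hAB

private lemma Rrec (n : ℕ) :
    (2*(n:ℚ)+1) * ((-3 : ℚ) ^ (n+1) * (2 * ((n:ℚ)+1) - 1) / (4 * (((n:ℚ)+1) + 1)) +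
        (4 : ℚ) ^ (n+1) / Nat.choose (2 * (n+1)) (n+1) *
          (1 / 2 - ∑ k ∈ Finset.range ((n+1) + 1), (catalan k : ℚ) * (-3 / 4) ^ (k + 1)))
      = (2*(n:ℚ)+2) * ((-3 : ℚ) ^ n * (2 * (n:ℚ) - 1) / (4 * ((n:ℚ) + 1)) +
        (4 : ℚ) ^ n / Nat.choose (2 * n) n *
          (1 / 2 - ∑ k ∈ Finset.range (n + 1), (catalan k : ℚ) * (-3 / 4) ^ (k + 1)))
        - (4*(n:ℚ)+1)*(-3)^n := by
  have hx : ((Nat.choose (2*n) n : ℚ)) ≠ 0 := by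
    exact_mod_cast (Nat.choose_pos (by omega : n ≤ 2*n)).ne'
  have hn1 : ((n:ℚ)+1) ≠ 0 := by positivity
  have hn2 : ((n:ℚ)+2) ≠ 0 := by positivity
  have h21 : (2*(n:ℚ)+1) ≠ 0 := by positivity
  have hc : ((Nat.choose (2*(n+1)) (n+1) : ℚ)) = 2*(2*(n:ℚ)+1) * (Nat.choose (2*n) n : ℚ) / ((n:ℚ)+1) := by
    rw [eq_div_iff hn1]
    have h := Nat.succ_mul_centralBinom_succ n
    have h' : (((n+1) * Nat.centralBinom (n+1) : ℕ) : ℚ) = ((2 * (2*n+1) * Nat.centralBinom n : ℕ) : ℚ) := by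
      exact_mod_cast congrArg Nat.cast h
    have e1 : Nat.centralBinom (n+1) = Nat.choose (2*(n+1)) (n+1) := rfl
    have e2 : Nat.centralBinom n = Nat.choose (2*n) n := rfl
    rw [e1, e2] at h'
    push_cast at h'
    linarith
  have hcat : ((catalan (n+1) : ℚ)) = 2*(2*(n:ℚ)+1) * (Nat.choose (2*n) n : ℚ) / (((n:ℚ)+1)*((n:ℚ)+2)) := by
    rw [eq_div_iff (by positivity)]
    have h := succ_mul_catalan_eq_centralBinom (n+1)
    have h' : (((n+1+1) * catalan (n+1) : ℕ) : ℚ) = ((Nat.centralBinom (n+1) : ℕ) : ℚ) := by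
      exact_mod_cast congrArg Nat.cast h
    have e1 : Nat.centralBinom (n+1) = Nat.choose (2*(n+1)) (n+1) := rfl
    rw [e1] at h'
    rw [hc] at h'
    push_cast at h'
    field_simp at h'
    linarith
  rw [Finset.sum_range_succ, hcat, hc]
  have hdp : ((-3:ℚ)/4)^(n+1+1) = (-3:ℚ)^(n+1+1)/4^(n+1+1) := div_pow _ _ _
  rw [hdp]
  field_simp
  ring

theorem stmt3 (n : ℕ) :
    ∑ i ∈ Finset.range (n + 1), ∑ j ∈ Finset.range (n + 1),
        (-4 : ℚ) ^ (i + j) * (Nat.choose n i * Nat.choose n j) / Nat.choose (i + j) i =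
      (-3 : ℚ) ^ n * (2 * n - 1) / (4 * (n + 1)) +
        (4 : ℚ) ^ n / Nat.choose (2 * n) n *
          (1 / 2 - ∑ k ∈ Finset.range (n + 1), (catalan k : ℚ) * (-3 / 4) ^ (k + 1)) := by
  induction n with
  | zero =>
    norm_num [Finset.sum_range_one, catalan_zero]
  | succ n ih =>
    have hL := Lrec n
    have hR := Rrec n
    have hLdef : (∑ i ∈ range (n+2), ∑ j ∈ range (n+2), fq (n+1) i j)
        = ∑ i ∈ Finset.range ((n+1) + 1), ∑ j ∈ Finset.range ((n+1) + 1),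
          (-4 : ℚ) ^ (i + j) * (Nat.choose (n+1) i * Nat.choose (n+1) j) / Nat.choose (i + j) i := rfl
    have hLdef0 : (∑ i ∈ range (n+1), ∑ j ∈ range (n+1), fq n i j)
        = ∑ i ∈ Finset.range (n + 1), ∑ j ∈ Finset.range (n + 1),
          (-4 : ℚ) ^ (i + j) * (Nat.choose n i * Nat.choose n j) / Nat.choose (i + j) i := rfl
    rw [hLdef, hLdef0, ih] at hL
    have h21 : (2*(n:ℚ)+1) ≠ 0 := by positivity
    have key := hL.trans hR.symm
    have hmain := mul_left_cancel₀ h21 key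
    convert hmain using 2 <;> push_cast <;> ring_nf
end

section
/- For any non-negative integer n, the double sum over i,j from 0 to n of (-4)^(i+j)*(i+j)*C(n,i)*C(n,j)/C(i+j,i) equals 16n*(-3)^(n-1) + (8n*4^n/C(2n,n)) * sum over k from 0 to n of C(2k,k)*(-3/4)^k. -/
open Finset

private def Fq (m i j : ℕ) : ℚ :=
  (-4 : ℚ) ^ (i + j) * (i + j) * (Nat.choose m i * Nat.choose m j) / Nat.choose (i + j) i

private def Pq (n i j : ℕ) : ℚ :=
  (-4*n*(n+1)*(2*n-1)*(1+j)
   + i*(8*n^3-41*n-30) + i*j*(-8*n^2-71*n-48) + i*j^2*(48-42*n) + 18*i*j^3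
   + i^2*(8*n^2+29*n+24) + i^2*j*(36+36*n) - 54*i^2*j^2 + (6+6*n)*i^3) / 9

private def Gq (n i j : ℕ) : ℚ :=
  Pq n i j / (i + j + 1) *
    ((-4 : ℚ) ^ (i + j) * (Nat.choose (n+1) i * Nat.choose (n+1) j) / Nat.choose (i + j) i)

private lemma cast_csr (n k : ℕ) :
    ((n.choose (k+1) : ℚ)) * (k+1) = ((n:ℚ) - k) * n.choose k := by
  rcases le_or_gt k n with h | h
  · have h1 := congrArg (Nat.cast : ℕ → ℚ) (Nat.choose_succ_right_eq n k)
    push_cast [h] at h1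
    linarith
  · rw [Nat.choose_eq_zero_of_lt h, Nat.choose_eq_zero_of_lt (by omega)]
    simp

private lemma cast_smc (n k : ℕ) :
    ((n:ℚ)+1) * n.choose k = ((n+1).choose (k+1) : ℚ) * (k+1) := by
  have := congrArg (Nat.cast : ℕ → ℚ) (Nat.add_one_mul_choose_eq n k)
  push_cast at this
  linarith

private lemma pw (n i j : ℕ) :
    ((n:ℚ)*(2*n+1)) * Fq (n+1) i j - 2*((n:ℚ)+1)^2 * Fq n i j
      = (Gq n (i+1) j - Gq n i j) + (Gq n (j+1) i - Gq n j i) := by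
  have hi1 : ((i:ℚ)+1) ≠ 0 := by positivity
  have hj1 : ((j:ℚ)+1) ≠ 0 := by positivity
  have hn1 : ((n:ℚ)+1) ≠ 0 := by positivity
  have hc : ((Nat.choose (i+j) i : ℕ) : ℚ) ≠ 0 := by
    exact_mod_cast (Nat.choose_pos (Nat.le_add_right i j)).ne'
  -- choose relations
  have f1 : ((Nat.choose (i+1+j) (i+1) : ℕ) : ℚ)
      = ((i:ℚ)+j+1) * Nat.choose (i+j) i / ((i:ℚ)+1) := by
    rw [eq_div_iff hi1]
    have h := cast_smc (i+j) i
    have harg : i+1+j = i+j+1 := by omega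
    rw [harg]
    push_cast at h ⊢
    linarith
  have f2 : ((Nat.choose (j+1+i) (j+1) : ℕ) : ℚ)
      = ((i:ℚ)+j+1) * Nat.choose (i+j) i / ((j:ℚ)+1) := by
    rw [eq_div_iff hj1]
    have h := cast_smc (j+i) j
    have hsym : Nat.choose (j+i) j = Nat.choose (i+j) i := by
      have : Nat.choose (i+j) ((i+j) - i) = Nat.choose (i+j) i :=
        Nat.choose_symm (Nat.le_add_right i j)
      rw [show (i+j) - i = j by omega] at this
      rw [show j+i = i+j by omega, this]
    rw [hsym, show j+i = i+j by omega] at h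
    have harg : j+1+i = i+j+1 := by omega
    rw [harg]
    push_cast at h ⊢
    linarith
  have f3 : ((Nat.choose (n+1) (i+1) : ℕ) : ℚ)
      = ((n:ℚ)+1-i) * Nat.choose (n+1) i / ((i:ℚ)+1) := by
    rw [eq_div_iff hi1]
    have h := cast_csr (n+1) i
    push_cast at h ⊢
    linarith
  have f4 : ((Nat.choose (n+1) (j+1) : ℕ) : ℚ)
      = ((n:ℚ)+1-j) * Nat.choose (n+1) j / ((j:ℚ)+1) := by
    rw [eq_div_iff hj1]
    have h := cast_csr (n+1) j
    push_cast at h ⊢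
    linarith
  have f5 : ((Nat.choose n i : ℕ) : ℚ) = ((n:ℚ)+1-i) * Nat.choose (n+1) i / ((n:ℚ)+1) := by
    rw [eq_div_iff hn1]
    have h1 := cast_smc n i
    have h2 := cast_csr (n+1) i
    push_cast at h1 h2 ⊢
    linarith
  have f6 : ((Nat.choose n j : ℕ) : ℚ) = ((n:ℚ)+1-j) * Nat.choose (n+1) j / ((n:ℚ)+1) := by
    rw [eq_div_iff hn1]
    have h1 := cast_smc n j
    have h2 := cast_csr (n+1) j
    push_cast at h1 h2 ⊢
    linarith
  have hsym2 : Nat.choose (j+i) j = Nat.choose (i+j) i := by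
    have : Nat.choose (i+j) ((i+j) - i) = Nat.choose (i+j) i :=
      Nat.choose_symm (Nat.le_add_right i j)
    rw [show (i+j) - i = j by omega] at this
    rw [show j+i = i+j by omega, this]
  have e1 : (-4:ℚ) ^ (i+1+j) = (-4:ℚ)^(i+j) * (-4) := by
    rw [show i+1+j = (i+j)+1 by omega, pow_succ]
  have e2 : (-4:ℚ) ^ (j+1+i) = (-4:ℚ)^(i+j) * (-4) := by
    rw [show j+1+i = (i+j)+1 by omega, pow_succ]
  have e3 : (-4:ℚ) ^ (j+i) = (-4:ℚ)^(i+j) := by rw [show j+i = i+j by omega]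
  simp only [Fq, Gq, Pq, f1, f2, f3, f4, f5, f6, hsym2, e1, e2, e3]
  push_cast
  field_simp
  ring

private def Ls (n : ℕ) : ℚ := ∑ i ∈ range (n+1), ∑ j ∈ range (n+1), Fq n i j

private lemma G0 (n j : ℕ) :
    Gq n 0 j = (-4*(n:ℚ)*(n+1)*(2*n-1)/9) * ((-4:ℚ)^j * Nat.choose (n+1) j) := by
  have hj1 : ((j:ℚ)+1) ≠ 0 := by positivity
  simp only [Gq, Pq]
  push_cast
  rw [Nat.choose_zero_right, Nat.choose_zero_right]
  push_cast
  field_simp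
  ring

private lemma Gtop (n i j : ℕ) (h : n + 1 < i) : Gq n i j = 0 := by
  simp [Gq, Nat.choose_eq_zero_of_lt h]

private lemma keyGen (n : ℕ) :
    ((n:ℚ)*(2*n+1)) * Ls (n+1) = 2*((n:ℚ)+1)^2 * Ls n
      + (8*n*(n+1)*(2*n-1)/9) * (-3:ℚ)^(n+1) := by
  have hS : ∑ i ∈ range (n+2), ∑ j ∈ range (n+2),
        (((n:ℚ)*(2*n+1)) * Fq (n+1) i j - 2*((n:ℚ)+1)^2 * Fq n i j)
      = ∑ i ∈ range (n+2), ∑ j ∈ range (n+2),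
        ((Gq n (i+1) j - Gq n i j) + (Gq n (j+1) i - Gq n j i)) :=
    Finset.sum_congr rfl fun i _ => Finset.sum_congr rfl fun j _ => pw n i j
  -- way 1
  have hF2 : ∑ i ∈ range (n+2), ∑ j ∈ range (n+2), Fq n i j = Ls n := by
    have hz1 : ∀ i, Fq n i (n+1) = 0 := by
      intro i; simp [Fq, Nat.choose_succ_self]
    have hz2 : ∀ j, Fq n (n+1) j = 0 := by
      intro j; simp [Fq, Nat.choose_succ_self]
    calc ∑ i ∈ range (n+2), ∑ j ∈ range (n+2), Fq n i j
        = ∑ i ∈ range (n+2), ∑ j ∈ range (n+1), Fq n i j := by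
          refine Finset.sum_congr rfl fun i _ => ?_
          rw [Finset.sum_range_succ, hz1 i, add_zero]
      _ = ∑ i ∈ range (n+1), ∑ j ∈ range (n+1), Fq n i j := by
          rw [Finset.sum_range_succ]
          simp [hz2]
      _ = Ls n := rfl
  have way1 : ∑ i ∈ range (n+2), ∑ j ∈ range (n+2),
        (((n:ℚ)*(2*n+1)) * Fq (n+1) i j - 2*((n:ℚ)+1)^2 * Fq n i j)
      = ((n:ℚ)*(2*n+1)) * Ls (n+1) - 2*((n:ℚ)+1)^2 * Ls n := by
    simp only [Finset.sum_sub_distrib, ← Finset.mul_sum]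
    rw [hF2]
    rfl
  -- way 2
  have hA : ∑ i ∈ range (n+2), ∑ j ∈ range (n+2), (Gq n (i+1) j - Gq n i j)
      = ∑ j ∈ range (n+2), (Gq n (n+2) j - Gq n 0 j) := by
    rw [Finset.sum_comm]
    exact Finset.sum_congr rfl fun j _ => Finset.sum_range_sub (fun i => Gq n i j) _
  have hB : ∑ i ∈ range (n+2), ∑ j ∈ range (n+2), (Gq n (j+1) i - Gq n j i)
      = ∑ i ∈ range (n+2), (Gq n (n+2) i - Gq n 0 i) :=
    Finset.sum_congr rfl fun i _ => Finset.sum_range_sub (fun j => Gq n j i) _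
  have hbin : ∑ j ∈ range (n+2), (-4:ℚ)^j * Nat.choose (n+1) j = (-3:ℚ)^(n+1) := by
    have h := add_pow (-4:ℚ) 1 (n+1)
    norm_num at h
    rw [← h]
  have hG0sum : ∑ j ∈ range (n+2), Gq n 0 j
      = (-4*(n:ℚ)*(n+1)*(2*n-1)/9) * (-3:ℚ)^(n+1) := by
    simp only [G0]
    rw [← Finset.mul_sum, hbin]
  have way2 : ∑ i ∈ range (n+2), ∑ j ∈ range (n+2),
        ((Gq n (i+1) j - Gq n i j) + (Gq n (j+1) i - Gq n j i))
      = (8*(n:ℚ)*(n+1)*(2*n-1)/9) * (-3:ℚ)^(n+1) := by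
    simp only [Finset.sum_add_distrib]
    rw [hA, hB]
    have ht : ∀ j : ℕ, Gq n (n+2) j = 0 := fun j => Gtop n (n+2) j (by omega)
    simp only [ht, zero_sub, Finset.sum_neg_distrib, hG0sum]
    ring
  rw [way1, way2] at hS
  linarith

theorem stmt4 (n : ℕ) :
    ∑ i ∈ Finset.range (n + 1), ∑ j ∈ Finset.range (n + 1),
        (-4 : ℚ) ^ (i + j) * (i + j) * (Nat.choose n i * Nat.choose n j) / Nat.choose (i + j) i =
      16 * n * (-3 : ℚ) ^ (n - 1) +
        8 * n * (4 : ℚ) ^ n / Nat.choose (2 * n) n *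
          ∑ k ∈ Finset.range (n + 1), (Nat.choose (2 * k) k : ℚ) * (-3 / 4) ^ k := by
  induction n with
  | zero => norm_num
  | succ m ih =>
    rcases Nat.eq_zero_or_pos m with rfl | hm
    · norm_num [Finset.sum_range_succ, Nat.choose]
    · obtain ⟨k, rfl⟩ : ∃ k, m = k + 1 := ⟨m - 1, by omega⟩
      set m := k + 1 with hmdef
      have hLs : ∀ p : ℕ, (∑ i ∈ Finset.range (p + 1), ∑ j ∈ Finset.range (p + 1),
          (-4 : ℚ) ^ (i + j) * (i + j) * (Nat.choose p i * Nat.choose p j) / Nat.choose (i + j) i)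
          = Ls p := fun p => rfl
      rw [hLs] at ih ⊢
      have hkey := keyGen m
      have hC0 : ((Nat.choose (2*m) m : ℕ) : ℚ) ≠ 0 := by
        exact_mod_cast (Nat.choose_pos (by omega)).ne'
      have hCb : ((m:ℚ)+1) * (Nat.choose (2*(m+1)) (m+1) : ℚ)
          = 2*(2*(m:ℚ)+1) * (Nat.choose (2*m) m : ℚ) := by
        have h := Nat.succ_mul_centralBinom_succ m
        have h1 : Nat.centralBinom (m+1) = Nat.choose (2*(m+1)) (m+1) := rfl
        have h2 : Nat.centralBinom m = Nat.choose (2*m) m := rfl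
        rw [h1, h2] at h
        exact_mod_cast h
      have hCb' : ((Nat.choose (2*(m+1)) (m+1) : ℕ) : ℚ)
          = 2*(2*(m:ℚ)+1) * (Nat.choose (2*m) m : ℚ) / ((m:ℚ)+1) := by
        rw [eq_div_iff (by positivity)]
        linarith [hCb]
      have hm0 : ((m:ℚ)) ≠ 0 := by
        simp only [hmdef]; push_cast; positivity
      have h2m1 : (2*(m:ℚ)+1) ≠ 0 := by positivity
      have hL1 : Ls (m+1) = (2*((m:ℚ)+1)^2 * Ls m
          + (8*m*(m+1)*(2*m-1)/9) * (-3:ℚ)^(m+1)) / ((m:ℚ)*(2*m+1)) := by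
        rw [eq_div_iff (by positivity)]
        linarith [hkey]
      rw [Finset.sum_range_succ, hL1, ih, hCb']
      have hsub1 : m + 1 - 1 = m := by omega
      have hsub2 : m - 1 = k := by omega
      rw [hsub1, hsub2]
      have hp3 : (-3:ℚ)^m = (-3:ℚ)^k * (-3) := by rw [← pow_succ]
      have hp3' : (-3:ℚ)^(m+1) = (-3:ℚ)^k * 9 := by
        rw [show m+1 = k+2 by omega, pow_succ, pow_succ]; ring
      have hp4 : (4:ℚ)^(m+1) = (4:ℚ)^m * 4 := by rw [← pow_succ]
      have hq : (-3/4:ℚ)^(m+1) = ((-3:ℚ)^k * 9) / ((4:ℚ)^m * 4) := by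
        rw [div_pow, hp3', hp4]
      rw [hp3, hp3', hp4, hq]
      have hk4 : ((4:ℚ)^m) ≠ 0 := by positivity
      have hk3 : ((-3:ℚ)^k) ≠ 0 := by positivity
      field_simp
      push_cast
      ring
end

section
/- Let p be an odd prime and q a power of p. Then sum over k from 0 to q-1 of C(2k,k)*x^k is congruent to (1-4x)^((q-1)/2) modulo p, as polynomials in x over Z/pZ. -/
open Finset Polynomial

-- (2k)! = k! * 2^k * ∏_{j<k} (2j+1)
lemma fact_two_mul (k : ℕ) :
    (2 * k).factorial = k.factorial * 2 ^ k * ∏ j ∈ Finset.range k, (2 * j + 1) := by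
  induction k with
  | zero => simp
  | succ n ih =>
    have h : 2 * (n + 1) = (2 * n + 1) + 1 := by ring
    rw [h, Nat.factorial_succ, Nat.factorial_succ, Finset.prod_range_succ,
      Nat.factorial_succ, ih]
    ring

lemma cast_factorial_ne_zero {p : ℕ} [Fact p.Prime] {a : ℕ} (ha : a < p) :
    ((a.factorial : ZMod p)) ≠ 0 := by
  rw [Ne, ZMod.natCast_eq_zero_iff]
  intro h
  exact absurd ((Nat.Prime.dvd_factorial (Fact.out)).mp h) (not_le.mpr ha)

lemma single_digit_small {p : ℕ} [Fact p.Prime] (hodd : Odd p) {a : ℕ}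
    (ha : a ≤ (p - 1) / 2) :
    ((2 * a).choose a : ZMod p) = (-4) ^ a * (((p - 1) / 2).choose a : ZMod p) := by
  have hp : p.Prime := Fact.out
  have hp2 : 2 ≤ p := hp.two_le
  have hodd' : p % 2 = 1 := Nat.odd_iff.mp hodd
  have hp3 : 3 ≤ p := by omega
  have haN : a < p := lt_of_le_of_lt ha (by omega)
  have h2ne : (2 : ZMod p) ≠ 0 := by
    have h2 : ((2 : ℕ) : ZMod p) ≠ 0 := by
      rw [Ne, ZMod.natCast_eq_zero_iff]
      intro h
      have := Nat.le_of_dvd (by norm_num) h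
      omega
    simpa using h2
  have hfne : ((a.factorial : ZMod p)) ≠ 0 := cast_factorial_ne_zero haN
  set N := (p - 1) / 2 with hNdef
  have hN2 : 2 * N = p - 1 := by omega
  have hNcast : (N : ZMod p) * 2 = -1 := by
    have h0 : ((2 * N : ℕ) : ZMod p) = ((p - 1 : ℕ) : ZMod p) := by rw [hN2]
    push_cast [Nat.cast_sub (by omega : 1 ≤ p)] at h0
    rw [ZMod.natCast_self] at h0
    linear_combination h0
  set af : ZMod p := (a.factorial : ZMod p) with haf
  set P : ZMod p := ∏ j ∈ Finset.range a, ((2 * j + 1 : ℕ) : ZMod p) with hP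
  set ch : ZMod p := (N.choose a : ZMod p) with hch
  -- e1
  have e1 : ((2 * a).choose a : ZMod p) * af * af = ((2 * a).factorial : ZMod p) := by
    have h := Nat.choose_mul_factorial_mul_factorial (show a ≤ 2 * a by omega)
    rw [show 2 * a - a = a by omega] at h
    have h2 := congrArg (Nat.cast : ℕ → ZMod p) h
    push_cast at h2
    exact h2
  -- e2
  have e2 : ((2 * a).factorial : ZMod p) = af * 2 ^ a * P := by
    have := congrArg (Nat.cast : ℕ → ZMod p) (fact_two_mul a)
    push_cast at this
    rw [this, hP]
    push_cast
    ring
  -- e3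
  have e3 : af * ch = (-(2 : ZMod p)⁻¹) ^ a * P := by
    have hinv : (2 : ZMod p)⁻¹ * 2 = 1 := inv_mul_cancel₀ h2ne
    have hfac : ∀ j ∈ Finset.range a, ((N - j : ℕ) : ZMod p) =
        (-(2 : ZMod p)⁻¹) * ((2 * j + 1 : ℕ) : ZMod p) := by
      intro j hj
      have hj' : j < a := Finset.mem_range.mp hj
      have hjN : j ≤ N := by omega
      rw [Nat.cast_sub hjN]
      push_cast
      linear_combination (2 : ZMod p)⁻¹ * hNcast + ((j : ZMod p) - (N : ZMod p)) * hinv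
    have hd : ((N.descFactorial a : ZMod p)) = (-(2 : ZMod p)⁻¹) ^ a * P := by
      rw [Nat.descFactorial_eq_prod_range]
      push_cast [Finset.prod_congr rfl hfac]
      rw [Finset.prod_mul_distrib, Finset.prod_const, Finset.card_range, hP]
      push_cast
      ring
    have hd2 := congrArg (Nat.cast : ℕ → ZMod p) (Nat.descFactorial_eq_factorial_mul_choose N a)
    push_cast at hd2
    rw [hd2] at hd
    exact hd
  have hpow : ((-4 : ZMod p)) ^ a * ((-(2 : ZMod p)⁻¹)) ^ a = 2 ^ a := by
    rw [← mul_pow]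
    congr 1
    field_simp
    ring
  apply mul_right_cancel₀ hfne
  apply mul_right_cancel₀ hfne
  calc ((2 * a).choose a : ZMod p) * af * af = af * 2 ^ a * P := by rw [e1, e2]
    _ = 2 ^ a * P * af := by ring
    _ = ((-4 : ZMod p)) ^ a * ((-(2 : ZMod p)⁻¹)) ^ a * P * af := by rw [hpow]
    _ = ((-4 : ZMod p)) ^ a * (af * ch) * af := by rw [e3]; ring
    _ = (-4) ^ a * ch * af * af := by ring

lemma single_digit {p : ℕ} [Fact p.Prime] (hodd : Odd p) {a : ℕ} (ha : a < p) :
    ((2 * a).choose a : ZMod p) = (-4) ^ a * (((p - 1) / 2).choose a : ZMod p) := by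
  have hp : p.Prime := Fact.out
  have hodd' : p % 2 = 1 := Nat.odd_iff.mp hodd
  rcases le_or_gt a ((p - 1) / 2) with h | h
  · exact single_digit_small hodd h
  · rw [Nat.choose_eq_zero_of_lt h]
    have h2a : p ≤ 2 * a := by omega
    have h2a' : 2 * a - p < a := by omega
    have hm : (2 * a) % p = 2 * a - p := by
      rw [Nat.mod_eq_sub_mod h2a, Nat.mod_eq_of_lt (by omega)]
    have hL := (ZMod.natCast_eq_natCast_iff _ _ _).mpr
      (Choose.choose_modEq_choose_mod_mul_choose_div_nat (p := p) (n := 2 * a) (k := a))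
    rw [hm, Nat.mod_eq_of_lt ha, Nat.choose_eq_zero_of_lt h2a'] at hL
    simp at hL ⊢
    exact hL

lemma coeff_id {p : ℕ} [Fact p.Prime] (hodd : Odd p) :
    ∀ m k : ℕ, k < p ^ m →
      ((2 * k).choose k : ZMod p) = (-4) ^ k * (((p ^ m - 1) / 2).choose k : ZMod p) := by
  have hp : p.Prime := Fact.out
  have hodd' : p % 2 = 1 := Nat.odd_iff.mp hodd
  have hp2 : 2 ≤ p := hp.two_le
  intro m
  induction m with
  | zero =>
    intro k hk
    have hk0 : k = 0 := by simpa using hk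
    subst hk0
    simp
  | succ m ih =>
    intro k hk
    set a := k % p with hadef
    set b := k / p with hbdef
    have hppos : 0 < p := by omega
    have ha : a < p := Nat.mod_lt _ hppos
    have hb : b < p ^ m := by
      rw [hbdef, Nat.div_lt_iff_lt_mul hppos]
      calc k < p ^ (m + 1) := hk
        _ = p ^ m * p := by ring
    have hk' : k = a + p * b := (Nat.mod_add_div k p).symm
    have hPodd : p ^ m % 2 = 1 := Nat.odd_iff.mp (hodd.pow)
    have hQ : p ^ (m + 1) = p * p ^ m := by ring
    -- split of (p^(m+1)-1)/2
    set u := (p - 1) / 2 with hudef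
    set v := (p ^ m - 1) / 2 with hvdef
    have hu2 : 2 * u = p - 1 := by omega
    have hv2 : 2 * v = p ^ m - 1 := by omega
    have hpm1 : 1 ≤ p ^ m := Nat.one_le_pow _ _ (by omega)
    have hQ1 : 1 ≤ p ^ (m + 1) := Nat.one_le_pow _ _ (by omega)
    have hmul : p * (p ^ m - 1) + p = p ^ (m + 1) := by
      have h1 : p * (p ^ m - 1) + p = p * ((p ^ m - 1) + 1) := by ring
      rw [h1, Nat.sub_add_cancel hpm1]
      ring
    have hsplit : (p ^ (m + 1) - 1) / 2 = u + p * v := by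
      have key : 2 * (u + p * v) + 1 = p ^ (m + 1) := by
        have h1 : 2 * (u + p * v) + 1 = (2 * u + 1) + p * (2 * v) := by ring
        rw [h1, show 2 * u + 1 = p by omega, hv2, ← hmul]
        omega
      omega
    have hmod : (u + p * v) % p = u := by
      rw [Nat.add_mul_mod_self_left, Nat.mod_eq_of_lt (by omega)]
    have hdiv : (u + p * v) / p = v := by
      rw [Nat.add_mul_div_left _ _ hppos, Nat.div_eq_of_lt (by omega)]
      omega
    -- Lucas on RHS choose
    have hR := (ZMod.natCast_eq_natCast_iff _ _ _).mpr
      (Choose.choose_modEq_choose_mod_mul_choose_div_nat (p := p)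
        (n := (p ^ (m + 1) - 1) / 2) (k := k))
    rw [hsplit, hmod, hdiv, ← hadef, ← hbdef] at hR
    -- Lucas on LHS choose
    have hL := (ZMod.natCast_eq_natCast_iff _ _ _).mpr
      (Choose.choose_modEq_choose_mod_mul_choose_div_nat (p := p) (n := 2 * k) (k := k))
    have h2k : 2 * k = 2 * a + p * (2 * b) := by rw [hk']; ring
    have h2kmod : (2 * k) % p = (2 * a) % p := by rw [h2k, Nat.add_mul_mod_self_left]
    have h2kdiv : (2 * k) / p = (2 * a) / p + 2 * b := by
      rw [h2k, Nat.add_mul_div_left _ _ hppos]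
    rw [h2kmod, h2kdiv, ← hadef, ← hbdef] at hL
    -- power of -4
    have hpow : ((-4 : ZMod p)) ^ k = (-4) ^ a * (-4) ^ b := by
      rw [hk', pow_add, pow_mul', ZMod.pow_card]
    rw [hsplit, hpow]
    rcases lt_or_ge (2 * a) p with h2a | h2a
    · -- no carry
      rw [Nat.mod_eq_of_lt h2a, Nat.div_eq_of_lt h2a, Nat.zero_add] at hL
      rw [hL, hR]
      push_cast
      rw [single_digit hodd ha, ih b hb, ← hudef]
      ring
    · -- carry: both sides zero
      have h2a1 : p < 2 * a := by omega
      have hm' : (2 * a) % p = 2 * a - p := by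
        rw [Nat.mod_eq_sub_mod h2a, Nat.mod_eq_of_lt (by omega)]
      rw [hm', Nat.choose_eq_zero_of_lt (by omega : 2 * a - p < a)] at hL
      have hua : u < a := by omega
      rw [Nat.choose_eq_zero_of_lt hua] at hR
      rw [hL, hR]
      push_cast
      ring

theorem stmt5 (p q m : ℕ) (hp : p.Prime) (hodd : Odd p) (hq : q = p ^ m) :
    ∑ k ∈ Finset.range q, C ((Nat.choose (2 * k) k : ZMod p)) * X ^ k =
      (1 - 4 * X) ^ ((q - 1) / 2) := by
  haveI : Fact p.Prime := ⟨hp⟩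
  subst hq
  have hp2 : 2 ≤ p := hp.two_le
  have hq1 : 1 ≤ p ^ m := Nat.one_le_pow _ _ (by omega)
  set N := (p ^ m - 1) / 2 with hNdef
  have hN1 : N + 1 ≤ p ^ m := by
    have := Nat.div_le_self (p ^ m - 1) 2
    omega
  have hzero : ∀ x ∈ Finset.range (p ^ m), x ∉ Finset.range (N + 1) →
      (-(4 * X) : (ZMod p)[X]) ^ x * 1 ^ (N - x) * (N.choose x : (ZMod p)[X]) = 0 := by
    intro x hxt hxs
    have hNx : N < x := by
      by_contra h
      exact hxs (Finset.mem_range.mpr (by omega))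
    rw [Nat.choose_eq_zero_of_lt hNx]
    simp
  have hbin : (1 - 4 * X : (ZMod p)[X]) ^ N =
      ∑ k ∈ Finset.range (p ^ m), (-(4 * X)) ^ k * 1 ^ (N - k) * (N.choose k : (ZMod p)[X]) := by
    rw [show (1 - 4 * X : (ZMod p)[X]) = -(4 * X) + 1 by ring, add_pow,
      Finset.sum_subset (Finset.range_subset_range.mpr hN1) hzero]
  rw [hbin]
  apply Finset.sum_congr rfl
  intro k hk
  have hklt : k < p ^ m := Finset.mem_range.mp hk
  rw [coeff_id hodd m k hklt, ← hNdef, map_mul, map_pow, map_neg, map_ofNat,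
    ← Polynomial.C_eq_natCast]
  ring
end

section
/- Let p be an odd prime and q a power of p. Then sum over k from 0 to q-1 of C_k*x^(k+1) is congruent to (1-(1-4x)^((q+1)/2))/2 - x^q modulo p, as polynomials over Z/pZ. -/
open Finset Polynomial

open Nat

private lemma lucasSplit {p : ℕ} (hp : p.Prime) (m a b n k : ℕ) (hn : n < p ^ m) (hk : k < p ^ m) :
    (((a * p ^ m + n).choose (b * p ^ m + k) : ℕ) : ZMod p)
      = ((a.choose b : ℕ) : ZMod p) * ((n.choose k : ℕ) : ZMod p) := by
  haveI : Fact p.Prime := ⟨hp⟩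
  have hp1 : 0 < p ^ m := pow_pos hp.pos m
  have hdiv : ∀ x y : ℕ, y < p ^ m → (x * p ^ m + y) / p ^ m = x := by
    intro x y hy
    rw [add_comm, Nat.add_mul_div_right _ _ hp1, Nat.div_eq_of_lt hy, zero_add]
  have hdig : ∀ i, i < m → ∀ x y : ℕ, (x * p ^ m + y) / p ^ i % p = y / p ^ i % p := by
    intro i hi x y
    obtain ⟨j, hj⟩ : ∃ j, m = i + (j + 1) := ⟨m - i - 1, by omega⟩
    subst hj
    rw [pow_add, show x * (p ^ i * p ^ (j+1)) + y = y + x * p ^ (j+1) * p ^ i by ring,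
      Nat.add_mul_div_right _ _ (pow_pos hp.pos i), pow_succ,
      show y / p ^ i + x * (p ^ j * p) = y / p ^ i + x * p ^ j * p by ring,
      Nat.add_mul_mod_self_right]
  have h1 := Choose.choose_modEq_choose_mul_prod_range_choose
    (p := p) (n := a * p ^ m + n) (k := b * p ^ m + k) m
  have h2 := Choose.choose_modEq_prod_range_choose (p := p) (a := m) hn hk
  have e1 := (ZMod.intCast_eq_intCast_iff _ _ _).mpr h1
  have e2 := (ZMod.intCast_eq_intCast_iff _ _ _).mpr h2
  push_cast at e1 e2
  rw [hdiv a n hn, hdiv b k hk] at e1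
  have hprod : ∏ i ∈ range m, ((((a * p ^ m + n) / p ^ i % p).choose ((b * p ^ m + k) / p ^ i % p) : ℕ) : ZMod p)
      = ∏ i ∈ range m, (((n / p ^ i % p).choose (k / p ^ i % p) : ℕ) : ZMod p) :=
    Finset.prod_congr rfl fun i hi => by
      rw [hdig i (mem_range.mp hi) a n, hdig i (mem_range.mp hi) b k]
  rw [hprod] at e1
  rw [e1, ← e2]

private lemma catalanCast (p n : ℕ) :
    ((catalan n : ℕ) : ZMod p) = ((2*n).choose n : ZMod p) - ((2*n).choose (n+1) : ZMod p) := by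
  have h1 : (n + 1) * catalan n = (2*n).choose n := by
    rw [succ_mul_catalan_eq_centralBinom, Nat.centralBinom_eq_two_mul_choose]
  have h2 : (2*n).choose (n + 1) * (n + 1) = (2*n).choose n * n := by
    rw [Nat.choose_succ_right_eq]; congr 1; omega
  have key : ((n:ℤ) + 1) * (catalan n : ℤ) = ((n:ℤ)+1) * (((2*n).choose n : ℤ) - ((2*n).choose (n+1) : ℤ)) := by
    have h1' : ((n:ℤ) + 1) * (catalan n : ℤ) = ((2*n).choose n : ℤ) := by exact_mod_cast congrArg (Nat.cast (R := ℤ)) h1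
    have h2' : ((2*n).choose (n+1) : ℤ) * ((n:ℤ) + 1) = ((2*n).choose n : ℤ) * n := by exact_mod_cast congrArg (Nat.cast (R := ℤ)) h2
    rw [h1']; ring_nf; ring_nf at h2'; linarith [h2']
  have key2 : (catalan n : ℤ) = ((2*n).choose n : ℤ) - ((2*n).choose (n+1) : ℤ) :=
    mul_left_cancel₀ (by positivity) key
  have := congrArg (fun z : ℤ => (z : ZMod p)) key2
  push_cast at this
  exact_mod_cast this

private lemma catFactA {p : ℕ} (hp : p.Prime) (m : ℕ) (hq3 : 3 ≤ p ^ m) :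
    ((catalan (p ^ m - 1) : ℕ) : ZMod p) = -1 := by
  have c1 := lucasSplit hp m 1 0 (p ^ m - 2) (p ^ m - 1) (by omega) (by omega)
  rw [show 1 * p ^ m + (p ^ m - 2) = 2 * (p ^ m - 1) by omega,
    show 0 * p ^ m + (p ^ m - 1) = p ^ m - 1 by omega,
    Nat.choose_eq_zero_of_lt (show p ^ m - 2 < p ^ m - 1 by omega)] at c1
  have c2 := lucasSplit hp m 1 1 (p ^ m - 2) 0 (by omega) (by omega)
  rw [show 1 * p ^ m + (p ^ m - 2) = 2 * (p ^ m - 1) by omega,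
    show 1 * p ^ m + 0 = p ^ m - 1 + 1 by omega] at c2
  rw [catalanCast, c1, c2]
  simp

private lemma catFactB {p : ℕ} (hp : p.Prime) (m : ℕ) (hq3 : 3 ≤ p ^ m) :
    ((catalan (p ^ m) : ℕ) : ZMod p) = 2 := by
  have c1 := lucasSplit hp m 2 1 0 0 (by omega) (by omega)
  rw [show 2 * p ^ m + 0 = 2 * p ^ m by omega,
    show 1 * p ^ m + 0 = p ^ m by omega] at c1
  have c2 := lucasSplit hp m 2 1 0 1 (by omega) (by omega)
  rw [show 2 * p ^ m + 0 = 2 * p ^ m by omega,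
    show 1 * p ^ m + 1 = p ^ m + 1 by omega,
    Nat.choose_eq_zero_of_lt (show 0 < 1 by omega)] at c2
  rw [catalanCast, c1, c2]
  simp

private lemma catFactD {p : ℕ} (hp : p.Prime) (m k : ℕ) (hq3 : 3 ≤ p ^ m)
    (h1 : (p ^ m + 1) / 2 ≤ k) (h2 : k ≤ p ^ m - 2) : ((catalan k : ℕ) : ZMod p) = 0 := by
  have c1 := lucasSplit hp m 1 0 (2 * k - p ^ m) k (by omega) (by omega)
  rw [show 1 * p ^ m + (2 * k - p ^ m) = 2 * k by omega,
    show 0 * p ^ m + k = k by omega,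
    Nat.choose_eq_zero_of_lt (show 2 * k - p ^ m < k by omega)] at c1
  have c2 := lucasSplit hp m 1 0 (2 * k - p ^ m) (k + 1) (by omega) (by omega)
  rw [show 1 * p ^ m + (2 * k - p ^ m) = 2 * k by omega,
    show 0 * p ^ m + (k + 1) = k + 1 by omega,
    Nat.choose_eq_zero_of_lt (show 2 * k - p ^ m < k + 1 by omega)] at c2
  rw [catalanCast, c1, c2]
  simp

private lemma keyIdent {R : Type*} [CommRing R] (f : ℕ → R) (q : ℕ) (hq3 : 3 ≤ q) (hqodd : Odd q)
    (hrec : ∀ n : ℕ, f (n + 1) = ∑ i ∈ range (n + 1), f i * f (n - i))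
    (hf0 : f 0 = 1) (hA : f (q - 1) = -1) (hB : f q = 2)
    (hD : ∀ k, (q + 1) / 2 ≤ k → k ≤ q - 2 → f k = 0) :
    (∑ k ∈ range (q - 1), C (f k) * X ^ (k + 1)) ^ 2
      = (∑ k ∈ range q, C (f k) * X ^ (k + 1)) - X + C (4 : R) * X ^ (q + 1) := by
  obtain ⟨t, ht⟩ := hqodd
  have hcoeff : ∀ (N d : ℕ), (∑ k ∈ range N, C (f k) * X ^ (k + 1)).coeff d
      = if 1 ≤ d ∧ d ≤ N then f (d - 1) else 0 := by
    intro N d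
    rw [finset_sum_coeff]
    simp only [coeff_C_mul, coeff_X_pow]
    rcases d with _ | d
    · simp
    · have h1 : ∀ k ∈ range N, f k * (if (d + 1 : ℕ) = k + 1 then (1:R) else 0)
          = if k = d then f k else 0 := by
        intro k _
        by_cases h : k = d
        · subst h; simp
        · rw [if_neg (by omega), if_neg h, mul_zero]
      rw [Finset.sum_congr rfl h1, Finset.sum_ite_eq' (range N) d f]
      by_cases hd : d < N
      · rw [if_pos (mem_range.mpr hd), if_pos (by omega)]
        simp
      · rw [if_neg (by simpa using hd), if_neg (by omega)]
  set g : ℕ → R := fun i => if 1 ≤ i ∧ i ≤ q - 1 then f (i - 1) else 0 with hg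
  have hcoeffg : ∀ x, (∑ k ∈ range (q - 1), C (f k) * X ^ (k + 1)).coeff x = g x := by
    intro x; rw [hcoeff, hg]
  have hg0 : g 0 = 0 := by rw [hg]; norm_num
  have peel : ∀ d : ℕ, 2 ≤ d → (∑ i ∈ range (d + 1), g i * g (d - i))
      = ∑ j ∈ range (d - 1), g (j + 1) * g (d - (j + 1)) := by
    intro d hd
    rw [Finset.sum_range_succ, Nat.sub_self, hg0, mul_zero, add_zero]
    conv_lhs => rw [show d = d - 1 + 1 by omega]
    rw [Finset.sum_range_succ', hg0, zero_mul, add_zero]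
    simp only [show d - 1 + 1 = d from by omega]
  apply Polynomial.ext
  intro d
  rw [sq, coeff_mul, Finset.Nat.sum_antidiagonal_eq_sum_range_succ_mk]
  simp only [hcoeffg, coeff_add, coeff_sub, hcoeff q, coeff_X, coeff_C_mul, coeff_X_pow]
  rcases show d = 0 ∨ d = 1 ∨ 2 ≤ d by omega with rfl | rfl | hd2
  · simp [hg0]
  · rw [Finset.sum_range_succ, Finset.sum_range_one, show (1:ℕ) - 1 = 0 from rfl,
      show (1:ℕ) - 0 = 1 from rfl, hg0, if_pos (show (1:ℕ) ≤ 1 ∧ 1 ≤ q from ⟨le_refl 1, by omega⟩),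
      if_pos rfl, if_neg (show ¬(1 = q + 1) by omega), hf0]
    ring
  · rcases show d ≤ q ∨ d = q + 1 ∨ q + 2 ≤ d by omega with hdq | rfl | hdq
    · rw [peel d hd2]
      have conv : ∀ j ∈ range (d - 1), g (j + 1) * g (d - (j + 1)) = f j * f (d - 2 - j) := by
        intro j hj
        have hj' : j < d - 1 := mem_range.mp hj
        rw [hg]
        simp only
        rw [if_pos ⟨by omega, by omega⟩, if_pos ⟨by omega, by omega⟩,
          show j + 1 - 1 = j from by omega, show d - (j + 1) - 1 = d - 2 - j from by omega]
      rw [Finset.sum_congr rfl conv]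
      have hr := hrec (d - 2)
      rw [show d - 2 + 1 = d - 1 from by omega] at hr
      rw [← hr, if_pos ⟨by omega, hdq⟩, if_neg (by omega), if_neg (by omega)]
      ring
    · rw [peel (q + 1) hd2, show q + 1 - 1 = q from by omega]
      have conv : ∀ j ∈ range q, g (j + 1) * g (q + 1 - (j + 1))
          = f j * f (q - 1 - j)
            + ((if j = 0 then (1:R) else 0) + (if j = q - 1 then (1:R) else 0)) := by
        intro j hj
        have hj' : j < q := mem_range.mp hj
        rw [hg]
        simp only
        by_cases h0 : j = 0
        · subst h0
          rw [if_pos ⟨by omega, by omega⟩, if_neg (by omega), if_pos rfl, if_neg (by omega),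
            show 0 + 1 - 1 = 0 from rfl, show q - 1 - 0 = q - 1 from by omega, hf0, hA]
          ring
        · by_cases h1 : j = q - 1
          · subst h1
            rw [if_neg (by omega), if_pos ⟨by omega, by omega⟩, if_neg h0, if_pos rfl,
              show q - 1 - (q - 1) = 0 from by omega, hf0, hA]
            ring
          · rw [if_pos ⟨by omega, by omega⟩, if_pos ⟨by omega, by omega⟩, if_neg h0, if_neg h1,
              show j + 1 - 1 = j from by omega,
              show q + 1 - (j + 1) - 1 = q - 1 - j from by omega]
            ring
      rw [Finset.sum_congr rfl conv, Finset.sum_add_distrib, Finset.sum_add_distrib,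
        Finset.sum_ite_eq' (range q) 0 (fun _ => (1:R)),
        Finset.sum_ite_eq' (range q) (q - 1) (fun _ => (1:R)),
        if_pos (mem_range.mpr (by omega)), if_pos (mem_range.mpr (by omega))]
      have hr := hrec (q - 1)
      rw [show q - 1 + 1 = q from by omega] at hr
      rw [← hr, hB, if_neg (by omega), if_neg (by omega), if_pos rfl]
      ring
    · rw [Finset.sum_eq_zero, if_neg (by omega), if_neg (by omega), if_neg (by omega)]
      · ring
      · intro i hi
        rw [hg]
        simp only
        by_cases c1 : 1 ≤ i ∧ i ≤ q - 1
        · by_cases c2 : 1 ≤ d - i ∧ d - i ≤ q - 1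
          · rw [if_pos c1, if_pos c2]
            by_cases c3 : (q + 1) / 2 ≤ i - 1
            · rw [hD (i - 1) c3 (by omega), zero_mul]
            · rw [hD (d - i - 1) (by omega) (by omega), mul_zero]
          · rw [if_neg c2, mul_zero]
        · rw [if_neg c1, zero_mul]

theorem stmt6 (p q m : ℕ) (hp : p.Prime) (hodd : Odd p) (hq : q = p ^ m) :
    ∑ k ∈ Finset.range q, C ((catalan k : ZMod p)) * X ^ (k + 1) =
      C ((2 : ZMod p)⁻¹) * (1 - (1 - 4 * X) ^ ((q + 1) / 2)) - X ^ q := by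
  haveI : Fact p.Prime := ⟨hp⟩
  haveI : NeZero p := ⟨hp.ne_zero⟩
  have hp3 : 3 ≤ p := by
    rcases Nat.lt_or_ge p 3 with h | h
    · interval_cases p
      · exact absurd rfl hp.ne_zero
      · exact absurd hp Nat.not_prime_one
      · exact absurd hodd (by decide)
    · exact h
  have h2ne : (2 : ZMod p) ≠ 0 := by
    intro h
    have h' : ((2 : ℕ) : ZMod p) = 0 := by exact_mod_cast h
    rw [ZMod.natCast_eq_zero_iff] at h'
    have := Nat.le_of_dvd (by norm_num) h'
    omega
  have h2C : C ((2 : ZMod p)⁻¹) * 2 = (1 : (ZMod p)[X]) := by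
    rw [show ((2 : (ZMod p)[X])) = C (2 : ZMod p) from (map_ofNat C 2).symm, ← C_mul,
      inv_mul_cancel₀ h2ne, map_one]
  rcases Nat.eq_zero_or_pos m with rfl | hm
  · rw [pow_zero] at hq
    subst hq
    rw [Finset.sum_range_one, catalan_zero, Nat.cast_one, map_one, one_mul,
      show (1 + 1) / 2 = 1 from rfl, pow_one]
    have hC4 : C ((2 : ZMod p)⁻¹) * 4 = (2 : (ZMod p)[X]) := by
      rw [show ((4 : (ZMod p)[X])) = 2 * 2 from by norm_num, ← mul_assoc, h2C, one_mul]
    linear_combination (-(X : (ZMod p)[X])) * hC4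
  · have hq3 : 3 ≤ q := by
      rw [hq]
      exact le_trans hp3 (Nat.le_self_pow (by omega) p)
    have hq3' : 3 ≤ p ^ m := hq ▸ hq3
    have hqodd : Odd q := hq ▸ hodd.pow
    have hA : ((catalan (q - 1) : ℕ) : ZMod p) = -1 := by rw [hq]; exact catFactA hp m hq3'
    have hB : ((catalan q : ℕ) : ZMod p) = 2 := by rw [hq]; exact catFactB hp m hq3'
    have hD : ∀ k, (q + 1) / 2 ≤ k → k ≤ q - 2 → ((catalan k : ℕ) : ZMod p) = 0 := by
      intro k h1 h2
      exact catFactD hp m k hq3' (hq ▸ h1) (hq ▸ h2)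
    have hrec : ∀ n : ℕ, ((catalan (n + 1) : ℕ) : ZMod p)
        = ∑ i ∈ range (n + 1), ((catalan i : ℕ) : ZMod p) * ((catalan (n - i) : ℕ) : ZMod p) := by
      intro n
      have hnat : catalan (n + 1) = ∑ i ∈ range (n + 1), catalan i * catalan (n - i) := by
        rw [catalan_succ', Finset.Nat.sum_antidiagonal_eq_sum_range_succ_mk]
      rw [hnat]
      push_cast
      rfl
    have key := keyIdent (fun k => ((catalan k : ℕ) : ZMod p)) q hq3 hqodd hrec (by simp) hA hB hD
    have hS : (∑ k ∈ range q, C ((catalan k : ZMod p)) * X ^ (k + 1))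
        = (∑ k ∈ range (q - 1), C ((catalan k : ZMod p)) * X ^ (k + 1)) - X ^ q := by
      conv_lhs => rw [show q = q - 1 + 1 from by omega]
      rw [Finset.sum_range_succ, show q - 1 + 1 = q from by omega, hA, map_neg, map_one]
      ring
    have h4 : ((4 : (ZMod p)[X])) ^ (p ^ m) = 4 := by
      rw [show ((4 : (ZMod p)[X])) = C (4 : ZMod p) from (map_ofNat C 4).symm, ← map_pow,
        ZMod.pow_card_pow, map_ofNat]
    have hfrob : ((1 : (ZMod p)[X]) - 4 * X) ^ q = 1 - 4 * X ^ q := by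
      rw [hq, sub_pow_char_pow, one_pow, mul_pow, h4]
    have hpow : ((1 : (ZMod p)[X]) - 4 * X) ^ (q + 1) = (1 - 4 * X) * (1 - 4 * X ^ q) := by
      rw [pow_succ, hfrob]
      ring
    have hh2 : (((1 : (ZMod p)[X]) - 4 * X) ^ ((q + 1) / 2)) ^ 2 = (1 - 4 * X) * (1 - 4 * X ^ q) := by
      rw [← pow_mul, show (q + 1) / 2 * 2 = q + 1 from by obtain ⟨t, ht⟩ := hqodd; omega, hpow]
    rw [show (C (4 : ZMod p)) = (4 : (ZMod p)[X]) from map_ofNat C 4, hS] at key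
    have hu2 : ((1 : (ZMod p)[X]) - 2 * ∑ k ∈ range (q - 1), C ((catalan k : ZMod p)) * X ^ (k + 1)) ^ 2
        = (1 - 4 * X) * (1 - 4 * X ^ q) := by
      linear_combination 4 * key
    have hfac : (((1 : (ZMod p)[X]) - 2 * ∑ k ∈ range (q - 1), C ((catalan k : ZMod p)) * X ^ (k + 1))
          - (1 - 4 * X) ^ ((q + 1) / 2))
        * (((1 : (ZMod p)[X]) - 2 * ∑ k ∈ range (q - 1), C ((catalan k : ZMod p)) * X ^ (k + 1))
          + (1 - 4 * X) ^ ((q + 1) / 2)) = 0 := by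
      linear_combination hu2 - hh2
    rcases mul_eq_zero.mp hfac with hcase | hcase
    · have equ := sub_eq_zero.mp hcase
      rw [hS]
      linear_combination (-(C ((2 : ZMod p)⁻¹))) * equ
        - (∑ k ∈ range (q - 1), C ((catalan k : ZMod p)) * X ^ (k + 1)) * h2C
    · exfalso
      have equ : ((1 : (ZMod p)[X]) - 2 * ∑ k ∈ range (q - 1), C ((catalan k : ZMod p)) * X ^ (k + 1))
          = -((1 - 4 * X) ^ ((q + 1) / 2)) := by
        have := eq_neg_of_add_eq_zero_left hcase
        exact this
      have e0 := congrArg (fun P : (ZMod p)[X] => P.eval 0) equ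
      simp only [eval_sub, eval_add, eval_one, eval_mul, eval_neg, eval_pow, eval_finset_sum,
        eval_C, eval_X, eval_ofNat, mul_zero, zero_mul] at e0
      rw [Finset.sum_eq_zero (fun k _ => by simp)] at e0
      have : (2 : ZMod p) = 0 := by linear_combination e0
      exact h2ne this
end

section
/- For any prime p ≥ 5, sum over k from 0 to p-1 of C_k is congruent to (3/2)*(p/3) - 1/2 modulo p^2, where division by 2 denotes the inverse of 2 modulo p^2. -/
open Finset

open Polynomial


lemma pow_key {R : Type*} [CommRing R] (y : R) (hcube : y^3 = 1) (hsq : (y+1)^2 = y)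
    (p : ℕ) (h6 : p % 6 = 1 ∨ p % 6 = 5) : (y + 1)^p - 1 - y^p = 0 := by
  rcases h6 with h | h
  · obtain ⟨n, rfl⟩ : ∃ n, p = 6*n + 1 := ⟨p / 6, by omega⟩
    have e1 : y ^ (6*n+1) = y := by
      rw [show 6*n+1 = 3*(2*n)+1 by ring, pow_succ, pow_mul, hcube, one_pow, one_mul]
    have e2 : (y+1) ^ (6*n+1) = y + 1 := by
      rw [show 6*n+1 = 2*(3*n)+1 by ring, pow_succ, pow_mul, hsq, pow_mul, hcube,
        one_pow, one_mul]
    rw [e1, e2]; ring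
  · obtain ⟨n, rfl⟩ : ∃ n, p = 6*n + 5 := ⟨p / 6, by omega⟩
    have e1 : y ^ (6*n+5) = y^2 := by
      rw [show 6*n+5 = 3*(2*n+1)+2 by ring, pow_add, pow_mul, hcube, one_pow, one_mul]
    have e2 : (y+1) ^ (6*n+5) = 1 + y^2 := by
      rw [show 6*n+5 = 2*(3*n+2)+1 by ring, pow_succ, pow_mul, hsq, pow_add, pow_mul,
        hcube, one_pow, one_mul]
      linear_combination hcube
    rw [e1, e2]; ring

lemma dvd_key (p : ℕ) (hp : p.Prime) (hp5 : 5 ≤ p) :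
    (X^2 + X + 1 : ℤ[X]) ∣ (X + 1)^p - 1 - X^p := by
  have h2 : ¬ (2 ∣ p) := by
    intro h; have := (Nat.prime_dvd_prime_iff_eq (by norm_num) hp).mp h; omega
  have h3 : ¬ (3 ∣ p) := by
    intro h; have := (Nat.prime_dvd_prime_iff_eq (by norm_num) hp).mp h; omega
  have h6 : p % 6 = 1 ∨ p % 6 = 5 := by omega
  rw [← Ideal.Quotient.eq_zero_iff_dvd]
  have hcube : (Ideal.Quotient.mk (Ideal.span {(X^2 + X + 1 : ℤ[X])}) X) ^ 3 = 1 := by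
    have h0 : Ideal.Quotient.mk (Ideal.span {(X^2 + X + 1 : ℤ[X])}) (X^3 - 1) = 0 := by
      rw [Ideal.Quotient.eq_zero_iff_dvd]; exact ⟨X - 1, by ring⟩
    have h' := h0
    simp only [map_sub, map_pow, map_one] at h'
    linear_combination h'
  have hsq : ((Ideal.Quotient.mk (Ideal.span {(X^2 + X + 1 : ℤ[X])}) X) + 1) ^ 2
      = Ideal.Quotient.mk (Ideal.span {(X^2 + X + 1 : ℤ[X])}) X := by
    have h0 : Ideal.Quotient.mk (Ideal.span {(X^2 + X + 1 : ℤ[X])}) ((X+1)^2 - X) = 0 := by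
      rw [Ideal.Quotient.eq_zero_iff_dvd]; exact ⟨1, by ring⟩
    simp only [map_sub, map_pow, map_add, map_one] at h0
    linear_combination h0
  have := pow_key _ hcube hsq p h6
  simpa [map_sub, map_pow, map_add, map_one] using this



lemma exists_E1 (p : ℕ) (hp : p.Prime) (hp5 : 5 ≤ p) :
    ∃ E₁ : ℤ[X], (X+1)^p = 1 + X^p + C (p:ℤ) * ((X^2+X+1) * E₁) ∧
      E₁.coeff (p-1) = 0 ∧ E₁.coeff (p-2) = 0 := by
  haveI : Fact p.Prime := ⟨hp⟩
  obtain ⟨g, hg⟩ := dvd_key p hp hp5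
  -- show C p ∣ g
  have hmap : ((X + 1)^p - 1 - X^p : ℤ[X]).map (Int.castRingHom (ZMod p)) = 0 := by
    have : ((X + 1 : (ZMod p)[X]))^p = X^p + 1 := by
      rw [add_pow_char]; simp
    simp [Polynomial.map_sub, Polynomial.map_pow, Polynomial.map_add, Polynomial.map_one, this]
  have hdnz : ((X^2 + X + 1 : ℤ[X]).map (Int.castRingHom (ZMod p))) ≠ 0 := by
    intro h
    have h1 := congrArg (fun q => Polynomial.coeff q 0) h
    simp [coeff_map] at h1
  have hgmap : g.map (Int.castRingHom (ZMod p)) = 0 := by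
    rw [hg, Polynomial.map_mul] at hmap
    rcases mul_eq_zero.mp hmap with h | h
    · exact absurd h hdnz
    · exact h
  have hdvd : C (p:ℤ) ∣ g := by
    rw [Polynomial.C_dvd_iff_dvd_coeff]
    intro i
    have := congrArg (fun q => Polynomial.coeff q i) hgmap
    simpa [coeff_map, ZMod.intCast_zmod_eq_zero_iff_dvd] using this
  obtain ⟨E₁, rfl⟩ := hdvd
  have hdegE : ∀ n, p - 3 < n → E₁.coeff n = 0 := by
    by_cases hE : E₁ = 0
    · simp [hE]
    intro n hn
    have hkeydeg : ((X + 1)^p - 1 - X^p : ℤ[X]).natDegree ≤ p - 1 := by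
      rw [natDegree_le_iff_coeff_eq_zero]
      intro N hN
      simp only [coeff_sub, coeff_X_add_one_pow, coeff_one, coeff_X_pow]
      rcases eq_or_lt_of_le (show p ≤ N by omega) with h | h
      · rw [← h]
        simp only [Nat.choose_self]
        have hpz : ¬ p = 0 := by omega
        simp [hpz]
      · rw [Nat.choose_eq_zero_of_lt h, if_neg (by omega), if_neg (by omega)]
        ring
    have hd0 : (X^2+X+1:ℤ[X]) ≠ 0 := by
      intro h
      have h1 := congrArg (fun q => Polynomial.coeff q 0) h
      simp at h1
    have hC0 : (C (p:ℤ)) ≠ 0 := by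
      simp [Polynomial.C_eq_zero]
      omega
    have h2 : (X^2+X+1:ℤ[X]).natDegree = 2 := by compute_degree!
    rw [hg] at hkeydeg
    rw [natDegree_mul hd0 (mul_ne_zero hC0 hE), natDegree_C_mul (by exact_mod_cast (by omega : ¬ (p:ℤ) = 0)), h2] at hkeydeg
    exact coeff_eq_zero_of_natDegree_lt (by omega)
  exact ⟨E₁, by linear_combination hg, hdegE _ (by omega), hdegE _ (by omega)⟩


lemma coeff_3sum_zero (t a n : ℕ) (h : ∀ i, i < t → 3*i + a ≠ n) :
    (∑ i ∈ range t, (X:ℤ[X])^(3*i+a)).coeff n = 0 := by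
  rw [finset_sum_coeff]
  apply Finset.sum_eq_zero
  intro i hi
  rw [coeff_X_pow, if_neg (fun he => h i (Finset.mem_range.mp hi) he.symm)]

lemma coeff_3sum_one (t a n i0 : ℕ) (h0 : i0 < t) (he : 3*i0 + a = n) :
    (∑ i ∈ range t, (X:ℤ[X])^(3*i+a)).coeff n = 1 := by
  rw [finset_sum_coeff, Finset.sum_eq_single i0]
  · rw [coeff_X_pow, if_pos he.symm]
  · intro b hb hne
    rw [coeff_X_pow, if_neg (by omega)]
  · intro hn; exact absurd (Finset.mem_range.mpr h0) hn

lemma telescope_mul (t a : ℕ) :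
    (X^2+X+1 : ℤ[X]) * ((∑ i ∈ range t, X^(3*i+a+1)) - ∑ i ∈ range t, X^(3*i+a))
      = X^(3*t+a) - X^a := by
  rw [← Finset.sum_sub_distrib, Finset.mul_sum]
  rw [Finset.sum_congr rfl (fun i (_ : i ∈ range t) =>
    (by ring : (X^2+X+1 : ℤ[X]) * (X^(3*i+a+1) - X^(3*i+a)) = X^(3*(i+1)+a) - X^(3*i+a)))]
  rw [Finset.sum_range_sub (fun i => (X:ℤ[X])^(3*i+a))]
  norm_num

lemma cat_eq (i : ℕ) (hi : 1 ≤ i) :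
    (catalan i : ℤ) = (2*i).choose i - (2*i).choose (i-1) := by
  have h1 : ((i:ℤ)+1) * catalan i = (2*i).choose i := by
    exact_mod_cast congrArg (Nat.cast : ℕ → ℤ) (succ_mul_catalan_eq_centralBinom i)
  have h2 : ((2*i).choose (i-1) : ℤ) * ((i:ℤ)+1) = (2*i).choose i * i := by
    have h3 := Nat.choose_succ_right_eq (2*i) (i-1)
    rw [show i-1+1 = i by omega, show 2*i - (i-1) = i+1 by omega] at h3
    exact_mod_cast congrArg (Nat.cast : ℕ → ℤ) h3.symm
  have hne : ((i:ℤ)+1) ≠ 0 := by positivity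
  apply mul_left_cancel₀ hne
  linear_combination h1 + h2






lemma notsq2 : ¬ IsSquare (2 : ZMod 3) := by decide


theorem stmt8 (p : ℕ) (hp : p.Prime) (hp5 : 5 ≤ p) :
    (↑(∑ k ∈ Finset.range p, catalan k) : ZMod (p ^ 2)) =
      3 * (2 : ZMod (p ^ 2))⁻¹ * (legendreSym 3 p : ZMod (p ^ 2)) - (2 : ZMod (p ^ 2))⁻¹ := by
  haveI : Fact p.Prime := ⟨hp⟩
  haveI : Fact (Nat.Prime 3) := ⟨by norm_num⟩
  haveI : NeZero (p^2) := ⟨by positivity⟩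
  obtain ⟨E₁, hkey, hE1, hE2⟩ := exists_E1 p hp hp5
  have hd0 : (X^2+X+1:ℤ[X]) ≠ 0 := by
    intro h
    have h1 := congrArg (fun q => Polynomial.coeff q 0) h
    simp at h1
  set Qp : ℤ[X] := ∑ i ∈ range p, ((X+1)^2)^i * X^(p-1-i) with hQdef
  have hgeom : (X^2+X+1 : ℤ[X]) * Qp = ((X+1)^p)^2 - X^p := by
    have hg := geom_sum₂_mul ((X+1:ℤ[X])^2) X p
    calc (X^2+X+1 : ℤ[X]) * Qp
        = (∑ i ∈ range p, ((X+1)^2)^i * X^(p-1-i)) * ((X+1)^2 - X) := by rw [hQdef]; ring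
      _ = ((X+1)^2)^p - X^p := hg
      _ = ((X+1)^p)^2 - X^p := by rw [← pow_mul, mul_comm 2 p, pow_mul]
  have hc1 : Qp.coeff (p-1) = ∑ i ∈ range p, ((2*i).choose i : ℤ) := by
    rw [hQdef, finset_sum_coeff]
    apply Finset.sum_congr rfl
    intro i hi
    have hi' : i < p := Finset.mem_range.mp hi
    rw [← pow_mul, coeff_mul_X_pow', if_pos (by omega), show (p-1) - (p-1-i) = i by omega,
      coeff_X_add_one_pow]
  have hc2 : Qp.coeff (p-2) = ∑ i ∈ range p, (if 1 ≤ i then ((2*i).choose (i-1) : ℤ) else 0) := by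
    rw [hQdef, finset_sum_coeff]
    apply Finset.sum_congr rfl
    intro i hi
    have hi' : i < p := Finset.mem_range.mp hi
    rw [← pow_mul, coeff_mul_X_pow']
    rcases Nat.eq_zero_or_pos i with rfl | hpos
    · rw [if_neg (by omega), if_neg (by omega)]
    · rw [if_pos (show p-1-i ≤ p-2 by omega)]
      rw [if_pos (show 1 ≤ i by omega), show (p-2) - (p-1-i) = i-1 by omega,
        coeff_X_add_one_pow]
  have hSsum : (∑ k ∈ range p, (catalan k : ℤ)) = Qp.coeff (p-1) - Qp.coeff (p-2) := by
    rw [hc1, hc2, ← Finset.sum_sub_distrib]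
    apply Finset.sum_congr rfl
    intro i _
    rcases Nat.eq_zero_or_pos i with rfl | hpos
    · simp
    · rw [if_pos (show 1 ≤ i by omega), cat_eq i hpos]
  -- units
  have h2u : IsUnit (2 : ZMod (p^2)) := by
    have hco : Nat.Coprime 2 (p^2) := by
      apply Nat.Coprime.pow_right
      rw [Nat.coprime_primes (by norm_num) hp]
      omega
    have := (ZMod.isUnit_iff_coprime 2 (p^2)).mpr hco
    simpa using this
  have h2 : (2 : ZMod (p^2))⁻¹ * 2 = 1 := ZMod.inv_mul_of_unit _ h2u
  have h3p : ¬ (3 ∣ p) := by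
    intro h; have := (Nat.prime_dvd_prime_iff_eq (by norm_num) hp).mp h; omega
  -- main case analysis
  have hmain : ∀ A' : ℤ[X], (X^2+X+1 : ℤ[X]) * A' = 1 + X^p + X^p * X^p →
      (↑(∑ k ∈ Finset.range p, catalan k) : ZMod (p ^ 2))
        = ((A'.coeff (p-1) - A'.coeff (p-2) : ℤ) : ZMod (p^2)) := by
    intro A' hA
    have hQ : Qp = A' + C (2*(p:ℤ)) * (E₁*(1+X^p)) + C ((p:ℤ)^2) * ((X^2+X+1)*E₁^2) := by
      apply mul_left_cancel₀ hd0
      simp only [C_mul, C_pow, map_ofNat]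
      linear_combination hgeom - hA + ((X+1)^p + (1 + X^p + C (p:ℤ)*((X^2+X+1)*E₁))) * hkey
    have hco : ∀ n, n < p → E₁.coeff n = 0 →
        Qp.coeff n = A'.coeff n + (p:ℤ)^2 * ((X^2+X+1)*E₁^2).coeff n := by
      intro n hn hE
      rw [hQ, coeff_add, coeff_add, coeff_C_mul, coeff_C_mul]
      have hz : (E₁*(1+X^p)).coeff n = 0 := by
        rw [mul_add, mul_one, coeff_add, coeff_mul_X_pow', if_neg (by omega), hE]; ring
      rw [hz]; ring
    have e1 := hco (p-1) (by omega) hE1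
    have e2 := hco (p-2) (by omega) hE2
    have hfin : (∑ k ∈ range p, (catalan k : ℤ))
        = A'.coeff (p-1) - A'.coeff (p-2)
          + (p:ℤ)^2 * (((X^2+X+1)*E₁^2).coeff (p-1) - ((X^2+X+1)*E₁^2).coeff (p-2)) := by
      rw [hSsum, e1, e2]; ring
    calc (↑(∑ k ∈ Finset.range p, catalan k) : ZMod (p ^ 2))
        = ((∑ k ∈ range p, (catalan k : ℤ) : ℤ) : ZMod (p^2)) := by push_cast; rfl
      _ = ((A'.coeff (p-1) - A'.coeff (p-2)
            + (p:ℤ)^2 * (((X^2+X+1)*E₁^2).coeff (p-1) - ((X^2+X+1)*E₁^2).coeff (p-2)) : ℤ)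
              : ZMod (p^2)) := by rw [hfin]
      _ = ((A'.coeff (p-1) - A'.coeff (p-2) : ℤ) : ZMod (p^2)) := by
            push_cast
            have : ((p:ZMod (p^2)))^2 = 0 := by
              have := ZMod.natCast_self (p^2)
              push_cast at this
              exact this
            rw [this]
            ring
  rcases (by omega : p % 3 = 1 ∨ p % 3 = 2) with h3 | h3
  · -- p ≡ 1 mod 3
    obtain ⟨m, hm⟩ : ∃ m, p = 3*m+1 := ⟨p/3, by omega⟩
    have hm2 : 2 ≤ m := by
      rcases (by omega : m = 0 ∨ m = 1 ∨ 2 ≤ m) with h | h | h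
      · omega
      · exfalso; rw [hm, h] at hp; norm_num at hp
      · exact h
    set A' : ℤ[X] := 1 + ((∑ i ∈ range m, X^(3*i+2)) - ∑ i ∈ range m, X^(3*i+1))
        + ((∑ i ∈ range (2*m), X^(3*i+3)) - ∑ i ∈ range (2*m), X^(3*i+2)) with hA'
    have hA : (X^2+X+1 : ℤ[X]) * A' = 1 + X^p + X^p * X^p := by
      have t1 := telescope_mul m 1
      have t2 := telescope_mul (2*m) 2
      rw [hA', hm]
      linear_combination t1 + t2
    have ha1 : A'.coeff (p-1) = 1 := by
      rw [hA', show p - 1 = 3*m by omega]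
      simp only [coeff_add, coeff_sub, coeff_one]
      rw [coeff_3sum_zero m 2 (3*m) (by omega), coeff_3sum_zero m 1 (3*m) (by omega),
        coeff_3sum_one (2*m) 3 (3*m) (m-1) (by omega) (by omega),
        coeff_3sum_zero (2*m) 2 (3*m) (by omega), if_neg (by omega)]
      ring
    have ha2 : A'.coeff (p-2) = 0 := by
      rw [hA', show p - 2 = 3*m-1 by omega]
      simp only [coeff_add, coeff_sub, coeff_one]
      rw [coeff_3sum_one m 2 (3*m-1) (m-1) (by omega) (by omega),
        coeff_3sum_zero m 1 (3*m-1) (by omega),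
        coeff_3sum_zero (2*m) 3 (3*m-1) (by omega),
        coeff_3sum_one (2*m) 2 (3*m-1) (m-1) (by omega) (by omega), if_neg (by omega)]
      ring
    have hleg : legendreSym 3 p = 1 := by
      rw [legendreSym.mod, show ((p:ℤ) % ((3:ℕ):ℤ)) = 1 from by push_cast; omega]
      exact legendreSym.at_one 3
    rw [hmain A' hA, ha1, ha2, hleg]
    push_cast
    linear_combination -h2
  · -- p ≡ 2 mod 3
    obtain ⟨m, hm⟩ : ∃ m, p = 3*m+2 := ⟨p/3, by omega⟩
    have hm2 : 1 ≤ m := by omega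
    set A' : ℤ[X] := 1 + ((∑ i ∈ range m, X^(3*i+3)) - ∑ i ∈ range m, X^(3*i+2))
        + ((∑ i ∈ range (2*m+1), X^(3*i+2)) - ∑ i ∈ range (2*m+1), X^(3*i+1)) with hA'
    have hA : (X^2+X+1 : ℤ[X]) * A' = 1 + X^p + X^p * X^p := by
      have t1 := telescope_mul m 2
      have t2 := telescope_mul (2*m+1) 1
      rw [hA', hm]
      linear_combination t1 + t2
    have ha1 : A'.coeff (p-1) = -1 := by
      rw [hA', show p - 1 = 3*m+1 by omega]
      simp only [coeff_add, coeff_sub, coeff_one]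
      rw [coeff_3sum_zero m 3 (3*m+1) (by omega), coeff_3sum_zero m 2 (3*m+1) (by omega),
        coeff_3sum_zero (2*m+1) 2 (3*m+1) (by omega),
        coeff_3sum_one (2*m+1) 1 (3*m+1) m (by omega) (by omega), if_neg (by omega)]
      ring
    have ha2 : A'.coeff (p-2) = 1 := by
      rw [hA', show p - 2 = 3*m by omega]
      simp only [coeff_add, coeff_sub, coeff_one]
      rw [coeff_3sum_one m 3 (3*m) (m-1) (by omega) (by omega),
        coeff_3sum_zero m 2 (3*m) (by omega),
        coeff_3sum_zero (2*m+1) 2 (3*m) (by omega),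
        coeff_3sum_zero (2*m+1) 1 (3*m) (by omega), if_neg (by omega)]
      ring
    have hleg : legendreSym 3 p = -1 := by
      rw [legendreSym.mod, show ((p:ℤ) % ((3:ℕ):ℤ)) = 2 from by push_cast; omega,
        legendreSym.eq_neg_one_iff]
      show ¬IsSquare ((2:ℤ) : ZMod 3)
      rw [show ((2:ℤ) : ZMod 3) = 2 by push_cast; rfl]
      exact notsq2
    rw [hmain A' hA, ha1, ha2, hleg]
    push_cast
    linear_combination 2*h2
end

section
/- For an odd prime p with n = (p-1)/2, and any i with 0 ≤ i ≤ n, the central binomial coefficient C(2i,i) is congruent to (-4)^i * C(n,i) modulo p. -/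
theorem stmt9 (p : ℕ) (hp : p.Prime) (hodd : Odd p) (i : ℕ) (hi : i ≤ (p - 1) / 2) :
    ((Nat.choose (2 * i) i : ZMod p)) = (-4 : ZMod p) ^ i * Nat.choose ((p - 1) / 2) i := by
  haveI : Fact p.Prime := ⟨hp⟩
  induction i with
  | zero => simp
  | succ i ih =>
    have hi' : i ≤ (p - 1) / 2 := Nat.le_of_succ_le hi
    have IH := ih hi'
    obtain ⟨k, hk⟩ := hodd
    have hn : 2 * ((p - 1) / 2) = p - 1 := by omega
    have hilt : i + 1 < p := by omega
    have hiz : ((i : ZMod p) + 1) ≠ 0 := by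
      have h : ((i + 1 : ℕ) : ZMod p) ≠ 0 := by
        rw [Ne, ZMod.natCast_eq_zero_iff]
        exact Nat.not_dvd_of_pos_of_lt (Nat.succ_pos i) hilt
      simpa using h
    have h1 : (i + 1) * Nat.choose (2 * (i + 1)) (i + 1)
        = 2 * (2 * i + 1) * Nat.choose (2 * i) i := by
      simpa [Nat.centralBinom] using Nat.succ_mul_centralBinom_succ i
    have h2 : Nat.choose ((p - 1) / 2) (i + 1) * (i + 1)
        = Nat.choose ((p - 1) / 2) i * ((p - 1) / 2 - i) :=
      Nat.choose_succ_right_eq _ _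
    have e1 : ((i : ZMod p) + 1) * (Nat.choose (2 * (i + 1)) (i + 1) : ZMod p)
        = 2 * (2 * (i : ZMod p) + 1) * (Nat.choose (2 * i) i : ZMod p) := by
      have := congrArg (fun m : ℕ => (m : ZMod p)) h1
      push_cast at this
      linear_combination this
    have e2 : (Nat.choose ((p - 1) / 2) (i + 1) : ZMod p) * ((i : ZMod p) + 1)
        = (Nat.choose ((p - 1) / 2) i : ZMod p)
          * (((p - 1) / 2 : ℕ) - (i : ZMod p)) := by
      have := congrArg (fun m : ℕ => (m : ZMod p)) h2
      push_cast [Nat.cast_sub hi'] at this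
      linear_combination this
    have e3 : 2 * (((p - 1) / 2 : ℕ) : ZMod p) = -1 := by
      have := congrArg (fun m : ℕ => (m : ZMod p)) hn
      push_cast [Nat.cast_sub hp.one_le] at this
      simpa [ZMod.natCast_self] using this
    refine mul_left_cancel₀ hiz ?_
    linear_combination e1 + 2 * (2 * (i : ZMod p) + 1) * IH
      - (-4 : ZMod p) ^ (i + 1) * e2
      + 2 * (-4 : ZMod p) ^ i * (Nat.choose ((p - 1) / 2) i : ZMod p) * e3
end

section
/- For any odd prime p, the Catalan number C_{p-1} is congruent to -1 modulo p. -/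
lemma catalan_add_choose (n : ℕ) :
    catalan n + Nat.choose (2 * n) (n + 1) = Nat.centralBinom n := by
  have h1 : (n + 1) * catalan n = Nat.centralBinom n :=
    succ_mul_catalan_eq_centralBinom n
  have h2 : Nat.choose (2 * n) (n + 1) * (n + 1) = Nat.centralBinom n * n := by
    rw [Nat.choose_succ_right_eq, Nat.centralBinom]
    congr 1
    omega
  have h3 : (n + 1) * (catalan n + Nat.choose (2 * n) (n + 1)) =
      (n + 1) * Nat.centralBinom n := by
    rw [Nat.mul_add, h1, mul_comm (n+1), h2]
    ring
  exact Nat.eq_of_mul_eq_mul_left (Nat.succ_pos n) h3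

theorem stmt10 (p : ℕ) (hp : p.Prime) (hodd : Odd p) :
    ((catalan (p - 1) : ZMod p)) = -1 := by
  haveI : Fact p.Prime := ⟨hp⟩
  have hp2 := hp.two_le
  have hp3 : 3 ≤ p := by
    have := Nat.odd_iff.mp hodd
    omega
  set n := p - 1 with hn
  have hnp : n + 1 = p := by omega
  have key := catalan_add_choose n
  have hcb : (Nat.centralBinom n : ZMod p) = 0 := by
    rw [← succ_mul_catalan_eq_centralBinom, hnp]
    push_cast
    simp
  have hlucas : (Nat.choose (2 * n) (n + 1) : ZMod p) = 1 := by
    have hmodeq := (Choose.choose_modEq_choose_mod_mul_choose_div (p := p)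
      (n := 2 * n) (k := n + 1))
    have h2n : 2 * n = p + (p - 2) := by omega
    have hmod : (2 * n) % p = p - 2 := by
      rw [h2n, Nat.add_mod_left, Nat.mod_eq_of_lt (by omega)]
    have hdiv : (2 * n) / p = 1 := by
      rw [h2n, Nat.add_div_left _ (by omega), Nat.div_eq_of_lt (by omega)]
    have hkmod : (n + 1) % p = 0 := by rw [hnp, Nat.mod_self]
    have hkdiv : (n + 1) / p = 1 := by rw [hnp, Nat.div_self (by omega)]
    rw [hmod, hdiv, hkmod, hkdiv] at hmodeq
    simp only [Nat.choose_zero_right, Nat.choose_self, mul_one, one_mul] at hmodeq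
    have := (ZMod.intCast_eq_intCast_iff _ _ _).mpr hmodeq
    push_cast at this
    rw [this]
  have := congrArg (Nat.cast : ℕ → ZMod p) key
  push_cast at this
  rw [hcb, hlucas] at this
  linear_combination this
end

section
/- For any prime p ≥ 5 with n = (p-1)/2, sum over k from 0 to n of C_k * (-3/4)^(k+1) is congruent to -3/2 modulo p (interpreting fractions via inverses mod p). -/
open Finset

theorem stmt11 (p : ℕ) (hp : p.Prime) (hp5 : 5 ≤ p) :
    ∑ k ∈ Finset.range ((p - 1) / 2 + 1), (catalan k : ZMod p) * (-3 * (4 : ZMod p)⁻¹) ^ (k + 1) =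
      -(3 * (2 : ZMod p)⁻¹) := by
  haveI : Fact p.Prime := ⟨hp⟩
  set n := (p - 1) / 2 with hn
  have hodd : Odd p := hp.odd_of_ne_two (by omega)
  have h2n : 2 * n = p - 1 := by
    obtain ⟨m, hm⟩ := hodd; omega
  have hnp : n + 1 < p := by omega
  have hcast : ∀ m : ℕ, 0 < m → m < p → (m : ZMod p) ≠ 0 := by
    intro m hm hmp h
    rw [ZMod.natCast_eq_zero_iff] at h
    exact absurd (Nat.le_of_dvd hm h) (by omega)
  have h2 : (2 : ZMod p) ≠ 0 := by
    have := hcast 2 (by omega) (by omega); simpa using this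
  have h4 : (4 : ZMod p) ≠ 0 := by
    have := hcast 4 (by omega) (by omega); simpa using this
  have h4i : (4 : ZMod p) * (4 : ZMod p)⁻¹ = 1 := mul_inv_cancel₀ h4
  have h2i : (2 : ZMod p) * (2 : ZMod p)⁻¹ = 1 := mul_inv_cancel₀ h2
  -- 2 * n = -1 in ZMod p
  have hn2 : (2 : ZMod p) * (n : ZMod p) = -1 := by
    have : ((2 * n : ℕ) : ZMod p) = ((p - 1 : ℕ) : ZMod p) := by rw [h2n]
    rw [Nat.cast_mul, Nat.cast_sub (by omega : 1 ≤ p), ZMod.natCast_self] at this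
    simpa using this
  -- central binomial ≡ (-4)^k * choose n k
  have hA : ∀ k, k ≤ n → (Nat.centralBinom k : ZMod p) = (-4) ^ k * (n.choose k : ZMod p) := by
    intro k
    induction k with
    | zero => intro _; simp [Nat.centralBinom]
    | succ k ih =>
      intro hk
      have hk' : k ≤ n := by omega
      have ihk := ih hk'
      have hku : ((k : ZMod p) + 1) ≠ 0 := by
        have := hcast (k + 1) (by omega) (by omega)
        push_cast at this; exact this
      apply mul_left_cancel₀ hku
      have h1 : ((k : ZMod p) + 1) * (Nat.centralBinom (k + 1) : ZMod p)
          = 2 * (2 * (k : ZMod p) + 1) * (Nat.centralBinom k : ZMod p) := by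
        have := congrArg (Nat.cast : ℕ → ZMod p) (Nat.succ_mul_centralBinom_succ k)
        push_cast at this; exact this
      have h2' : ((n.choose (k + 1) : ℕ) : ZMod p) * ((k : ZMod p) + 1)
          = (n.choose k : ZMod p) * ((n : ZMod p) - (k : ZMod p)) := by
        have := congrArg (Nat.cast : ℕ → ZMod p) (Nat.choose_succ_right_eq n k)
        rw [Nat.cast_mul, Nat.cast_mul, Nat.cast_sub hk'] at this
        push_cast at this; exact this
      calc ((k : ZMod p) + 1) * (Nat.centralBinom (k + 1) : ZMod p)
          = 2 * (2 * (k : ZMod p) + 1) * ((-4) ^ k * (n.choose k : ZMod p)) := by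
            rw [h1, ihk]
        _ = ((k : ZMod p) + 1) * ((-4) ^ (k + 1) * (n.choose (k + 1) : ZMod p)) := by
            have e : (2 : ZMod p) * (2 * (k : ZMod p) + 1)
                = (-4) * ((n : ZMod p) - (k : ZMod p)) := by
              linear_combination 2 * hn2
            rw [pow_succ]
            linear_combination ((-4 : ZMod p)) ^ k * (n.choose k : ZMod p) * e
              + ((-4 : ZMod p)) ^ k * 4 * h2'
  -- the factor to cancel
  have hnu : ((n : ZMod p) + 1) ≠ 0 := by
    have := hcast (n + 1) (by omega) hnp
    push_cast at this; exact this
  have hu : ((n : ZMod p) + 1) * 4 ≠ 0 := mul_ne_zero hnu h4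
  apply mul_left_cancel₀ hu
  rw [Finset.mul_sum]
  have hterm : ∀ k ∈ Finset.range (n + 1),
      ((n : ZMod p) + 1) * 4 * ((catalan k : ZMod p) * (-3 * (4 : ZMod p)⁻¹) ^ (k + 1))
        = -(((n + 1).choose (k + 1) : ZMod p) * 3 ^ (k + 1)) := by
    intro k hk
    rw [Finset.mem_range] at hk
    have hk' : k ≤ n := by omega
    have hku : ((k : ZMod p) + 1) ≠ 0 := by
      have := hcast (k + 1) (by omega) (by omega)
      push_cast at this; exact this
    apply mul_left_cancel₀ hku
    have hcat : ((k : ZMod p) + 1) * (catalan k : ZMod p) = (Nat.centralBinom k : ZMod p) := by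
      have := congrArg (Nat.cast : ℕ → ZMod p) (succ_mul_catalan_eq_centralBinom k)
      push_cast at this; exact this
    have hch : ((n : ZMod p) + 1) * (n.choose k : ZMod p)
        = ((n + 1).choose (k + 1) : ZMod p) * ((k : ZMod p) + 1) := by
      have := congrArg (Nat.cast : ℕ → ZMod p) (Nat.add_one_mul_choose_eq n k)
      push_cast at this; exact this
    have hpow : ((-4 : ZMod p)) ^ k * (-3 * (4 : ZMod p)⁻¹) ^ (k + 1) * 4 = -(3 ^ (k + 1)) := by
      have e1 : ((-4 : ZMod p)) ^ k * (-3 * (4 : ZMod p)⁻¹) ^ k = 3 ^ k := by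
        rw [← mul_pow]
        congr 1
        linear_combination 3 * h4i
      calc ((-4 : ZMod p)) ^ k * (-3 * (4 : ZMod p)⁻¹) ^ (k + 1) * 4
          = ((-4 : ZMod p)) ^ k * (-3 * (4 : ZMod p)⁻¹) ^ k * ((-3 * (4 : ZMod p)⁻¹) * 4) := by
            ring
        _ = 3 ^ k * (-3) := by
            rw [e1]; congr 1; linear_combination (-3 : ZMod p) * h4i
        _ = -(3 ^ (k + 1)) := by ring
    calc ((k : ZMod p) + 1) * (((n : ZMod p) + 1) * 4 *
            ((catalan k : ZMod p) * (-3 * (4 : ZMod p)⁻¹) ^ (k + 1)))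
        = ((n : ZMod p) + 1) * (Nat.centralBinom k : ZMod p)
            * (-3 * (4 : ZMod p)⁻¹) ^ (k + 1) * 4 := by
          linear_combination ((n : ZMod p) + 1) * 4 * (-3 * (4 : ZMod p)⁻¹) ^ (k + 1) * hcat
      _ = ((n : ZMod p) + 1) * (n.choose k : ZMod p)
            * (((-4 : ZMod p)) ^ k * (-3 * (4 : ZMod p)⁻¹) ^ (k + 1) * 4) := by
          rw [hA k hk']; ring
      _ = ((n + 1).choose (k + 1) : ZMod p) * ((k : ZMod p) + 1) * (-(3 ^ (k + 1))) := by
          rw [hpow, hch]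
      _ = ((k : ZMod p) + 1) * -(((n + 1).choose (k + 1) : ZMod p) * 3 ^ (k + 1)) := by
          ring
  rw [Finset.sum_congr rfl hterm]
  -- binomial theorem: ∑ choose(n+1,k+1) 3^(k+1) = 4^(n+1) - 1
  have hbin : ((3 : ZMod p) + 1) ^ (n + 1)
      = ∑ m ∈ Finset.range (n + 2), 3 ^ m * 1 ^ (n + 1 - m) * ((n + 1).choose m : ZMod p) :=
    add_pow 3 1 (n + 1)
  have hsum : ∑ k ∈ Finset.range (n + 1), -(((n + 1).choose (k + 1) : ZMod p) * 3 ^ (k + 1))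
      = -((4 : ZMod p) ^ (n + 1) - 1) := by
    rw [Finset.sum_neg_distrib]
    have := Finset.sum_range_succ'
      (fun m => (3 : ZMod p) ^ m * 1 ^ (n + 1 - m) * ((n + 1).choose m : ZMod p)) (n + 1)
    rw [← hbin] at this
    have h31 : ((3 : ZMod p) + 1) = 4 := by norm_num
    rw [h31] at this
    simp only [one_pow, Nat.choose_zero_right, Nat.cast_one, pow_zero, mul_one, one_mul] at this
    have : ∑ k ∈ Finset.range (n + 1), ((n + 1).choose (k + 1) : ZMod p) * 3 ^ (k + 1)
        = (4 : ZMod p) ^ (n + 1) - 1 := by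
      rw [eq_sub_iff_add_eq, this]
      congr 1
      exact Finset.sum_congr rfl (fun k _ => by ring)
    rw [this]
  rw [hsum]
  -- 4^(n+1) = 4
  have h4pow : (4 : ZMod p) ^ (n + 1) = 4 := by
    have : (4 : ZMod p) ^ n = 1 := by
      have e : (4 : ZMod p) ^ n = (2 : ZMod p) ^ (p - 1) := by
        rw [← h2n, pow_mul]; norm_num
      rw [e]; exact ZMod.pow_card_sub_one_eq_one h2
    rw [pow_succ, this, one_mul]
  rw [h4pow]
  -- final: (n+1)*4*(-(3*2⁻¹)) = -(4-1)
  have hh : ((n : ZMod p) + 1) * 2 = 1 := by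
    linear_combination hn2
  linear_combination (6 * (2 : ZMod p)⁻¹) * hh + 3 * h2i
end

section
/- For any prime p ≥ 5 with n = (p-1)/2, sum over k from 0 to n of C(2k,k)*(-3/4)^k is congruent to 1 modulo p (interpreting 1/4 via the inverse of 4 mod p). -/
open Finset

lemma aux_key (p : ℕ) (hp : p.Prime) (hp5 : 5 ≤ p) :
    ∀ k, k ≤ (p - 1) / 2 →
      ((Nat.choose (2 * k) k : ℕ) : ZMod p) = (-4) ^ k * (Nat.choose ((p - 1) / 2) k : ℕ) := by
  haveI : Fact p.Prime := ⟨hp⟩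
  set n := (p - 1) / 2 with hn
  have hodd : Odd p := hp.odd_of_ne_two (by omega)
  have h2n : 2 * n = p - 1 := by
    obtain ⟨m, hm⟩ := hodd
    omega
  have hpm1 : ((p - 1 : ℕ) : ZMod p) = -1 := by
    have : ((p - 1 : ℕ) : ZMod p) = (p : ZMod p) - 1 := by
      push_cast [Nat.cast_sub (by omega : 1 ≤ p)]; ring
    rw [this, ZMod.natCast_self]; ring
  have h4n : (4 : ZMod p) * (n : ZMod p) = -2 := by
    have : ((2 * n : ℕ) : ZMod p) = -1 := by rw [h2n]; exact hpm1
    push_cast at this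
    linear_combination 2 * this
  intro k
  induction k with
  | zero => simp
  | succ k ih =>
    intro hk1
    have hk : k ≤ n := by omega
    have ihk := ih hk
    have hKne : ((k + 1 : ℕ) : ZMod p) ≠ 0 := by
      rw [Ne, ZMod.natCast_eq_zero_iff]
      intro hdvd
      have := Nat.le_of_dvd (by omega) hdvd
      omega
    have hc : (k + 1) * Nat.choose (2 * (k + 1)) (k + 1) = 2 * (2 * k + 1) * Nat.choose (2 * k) k := by
      have := Nat.succ_mul_centralBinom_succ k
      simpa [Nat.centralBinom] using this
    have hc' : ((k + 1 : ℕ) : ZMod p) * (Nat.choose (2 * (k + 1)) (k + 1) : ZMod p)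
        = 2 * (2 * (k : ZMod p) + 1) * (Nat.choose (2 * k) k : ZMod p) := by
      exact_mod_cast congrArg (Nat.cast : ℕ → ZMod p) hc
    have hr : Nat.choose n (k + 1) * (k + 1) = Nat.choose n k * (n - k) :=
      Nat.choose_succ_right_eq n k
    have hr' : (Nat.choose n (k + 1) : ZMod p) * ((k : ZMod p) + 1)
        = (Nat.choose n k : ZMod p) * ((n : ZMod p) - (k : ZMod p)) := by
      have := congrArg (Nat.cast : ℕ → ZMod p) hr
      push_cast [Nat.cast_sub hk] at this
      exact this
    apply mul_left_cancel₀ hKne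
    rw [hc', ihk]
    push_cast
    linear_combination (-(((-4 : ZMod p)) ^ (k + 1))) * hr'
      + (-4 : ZMod p) ^ k * (Nat.choose n k : ZMod p) * h4n

theorem stmt12 (p : ℕ) (hp : p.Prime) (hp5 : 5 ≤ p) :
    ∑ k ∈ Finset.range ((p - 1) / 2 + 1),
        (Nat.choose (2 * k) k : ZMod p) * (-3 * (4 : ZMod p)⁻¹) ^ k = 1 := by
  haveI : Fact p.Prime := ⟨hp⟩
  set n := (p - 1) / 2 with hn
  have h4ne : (4 : ZMod p) ≠ 0 := by
    have : ((4 : ℕ) : ZMod p) ≠ 0 := by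
      rw [Ne, ZMod.natCast_eq_zero_iff]
      intro hdvd
      have := Nat.le_of_dvd (by omega) hdvd
      omega
    simpa using this
  have h2ne : (2 : ZMod p) ≠ 0 := by
    have : ((2 : ℕ) : ZMod p) ≠ 0 := by
      rw [Ne, ZMod.natCast_eq_zero_iff]
      intro hdvd
      have := Nat.le_of_dvd (by omega) hdvd
      omega
    simpa using this
  have hbase : (-4 : ZMod p) * (-3 * (4 : ZMod p)⁻¹) = 3 := by
    field_simp
  have hstep : ∀ k ∈ Finset.range (n + 1),
      (Nat.choose (2 * k) k : ZMod p) * (-3 * (4 : ZMod p)⁻¹) ^ k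
        = (Nat.choose n k : ZMod p) * 3 ^ k := by
    intro k hkmem
    rw [Finset.mem_range] at hkmem
    rw [aux_key p hp hp5 k (by omega)]
    have hk3 : (3 : ZMod p) ^ k = (-4 : ZMod p) ^ k * (-3 * (4 : ZMod p)⁻¹) ^ k := by
      rw [← mul_pow, hbase]
    rw [hk3]; ring
  rw [Finset.sum_congr rfl hstep]
  have hbin : ((3 : ZMod p) + 1) ^ n = ∑ k ∈ Finset.range (n + 1),
      (3 : ZMod p) ^ k * 1 ^ (n - k) * (Nat.choose n k : ZMod p) := add_pow 3 1 n
  have h4n1 : (4 : ZMod p) ^ n = 1 := by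
    have hodd : Odd p := hp.odd_of_ne_two (by omega)
    have h2n : 2 * n = p - 1 := by obtain ⟨m, hm⟩ := hodd; omega
    have : (4 : ZMod p) ^ n = (2 : ZMod p) ^ (p - 1) := by
      rw [show (4 : ZMod p) = 2 ^ 2 by norm_num, ← pow_mul, h2n]
    rw [this]
    exact ZMod.pow_card_sub_one_eq_one h2ne
  calc ∑ k ∈ Finset.range (n + 1), (Nat.choose n k : ZMod p) * 3 ^ k
      = ((3 : ZMod p) + 1) ^ n := by
        rw [hbin]; apply Finset.sum_congr rfl; intro k _; ring
    _ = 1 := by norm_num [h4n1]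
end

section
/- For any odd prime p with n = (p-1)/2, the sum S_2 = sum over i from 0 to n and j from n+1 to 2n of S(i,j) is congruent to (p/3) - (-1)^n modulo p. -/
open Finset

open Nat

lemma choose_q (a b : ℕ) : ((a+b).choose a : ℚ) = (a+b)! / (a ! * b !) := by
  rw [eq_div_iff (by positivity)]
  exact_mod_cast congrArg (Nat.cast (R := ℚ)) (by
    have := Nat.choose_mul_factorial_mul_factorial (Nat.le_add_right a b)
    simpa [Nat.add_sub_cancel_left, mul_assoc] using this)

lemma key_id (m n : ℕ) :
    ((2*m).choose m * (2*(n+1)).choose (n+1) : ℚ) * ((m+n).choose m) * ((m+1+n).choose (m+1))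
    + ((2*(m+1)).choose (m+1) * (2*n).choose n : ℚ) * ((m+n).choose m) * ((m+(n+1)).choose m)
    = 4 * ((2*m).choose m * (2*n).choose n : ℚ) * ((m+(n+1)).choose m) * ((m+1+n).choose (m+1)) := by
  have h1 : ((2*m).choose m : ℚ) = (m+m)! / (m ! * m !) := by
    rw [show 2*m = m+m by ring] at *; exact choose_q m m
  have h2 : ((2*(n+1)).choose (n+1) : ℚ) = ((n+1)+(n+1))! / ((n+1)! * (n+1)!) := by
    rw [show 2*(n+1) = (n+1)+(n+1) by ring]; exact choose_q (n+1) (n+1)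
  have h3 : ((m+n).choose m : ℚ) = (m+n)! / (m ! * n !) := choose_q m n
  have h4 : ((m+1+n).choose (m+1) : ℚ) = ((m+1)+n)! / ((m+1)! * n !) := choose_q (m+1) n
  have h5 : ((2*(m+1)).choose (m+1) : ℚ) = ((m+1)+(m+1))! / ((m+1)! * (m+1)!) := by
    rw [show 2*(m+1) = (m+1)+(m+1) by ring]; exact choose_q (m+1) (m+1)
  have h6 : ((2*n).choose n : ℚ) = (n+n)! / (n ! * n !) := by
    rw [show 2*n = n+n by ring]; exact choose_q n n
  have h7 : ((m+(n+1)).choose m : ℚ) = (m+(n+1))! / (m ! * (n+1)!) := choose_q m (n+1)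
  rw [h1, h2, h3, h4, h5, h6, h7]
  have e1 : (((n+1)+(n+1))! : ℚ) = (2*n+2) * ((2*n+1) * (n+n)!) := by
    rw [show (n+1)+(n+1) = (n+n+1)+1 by ring, Nat.factorial_succ, Nat.factorial_succ]
    push_cast; ring
  have e2 : (((m+1)+(m+1))! : ℚ) = (2*m+2) * ((2*m+1) * (m+m)!) := by
    rw [show (m+1)+(m+1) = (m+m+1)+1 by ring, Nat.factorial_succ, Nat.factorial_succ]
    push_cast; ring
  have e3 : ((m+(n+1))! : ℚ) = (m+n+1) * (m+n)! := by
    rw [show m+(n+1) = (m+n)+1 by ring, Nat.factorial_succ]; push_cast; ring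
  have e4 : (((m+1)+n)! : ℚ) = (m+n+1) * (m+n)! := by
    rw [show (m+1)+n = (m+n)+1 by ring, Nat.factorial_succ]; push_cast; ring
  have e5 : ((n+1)! : ℚ) = (n+1) * n ! := by rw [Nat.factorial_succ]; push_cast; ring
  have e6 : ((m+1)! : ℚ) = (m+1) * m ! := by rw [Nat.factorial_succ]; push_cast; ring
  rw [e1, e2, e3, e4, e5, e6]
  have fm : (m ! : ℚ) ≠ 0 := by positivity
  have fn : (n ! : ℚ) ≠ 0 := by positivity
  have fmm : ((m+m)! : ℚ) ≠ 0 := by positivity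
  have fnn : ((n+n)! : ℚ) ≠ 0 := by positivity
  have fmn : ((m+n)! : ℚ) ≠ 0 := by positivity
  field_simp
  ring

lemma superCatalan_dvd (m n : ℕ) : (m+n).choose m ∣ (2*m).choose m * (2*n).choose n := by
  induction n generalizing m with
  | zero => simp
  | succ n ih =>
    obtain ⟨k0, h0⟩ := ih m
    obtain ⟨k2, h2⟩ := ih (m+1)
    have key : ((2*m).choose m * (2*(n+1)).choose (n+1) : ℤ) * ((m+n).choose m) * ((m+1+n).choose (m+1))
        + ((2*(m+1)).choose (m+1) * (2*n).choose n : ℤ) * ((m+n).choose m) * ((m+(n+1)).choose m)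
        = 4 * ((2*m).choose m * (2*n).choose n : ℤ) * ((m+(n+1)).choose m) * ((m+1+n).choose (m+1)) := by
      exact_mod_cast key_id m n
    have c0 : (0:ℤ) < ((m+n).choose m : ℤ) := by
      exact_mod_cast Nat.choose_pos (Nat.le_add_right m n)
    have c2 : (0:ℤ) < ((m+1+n).choose (m+1) : ℤ) := by
      exact_mod_cast Nat.choose_pos (Nat.le_add_right (m+1) n)
    have h0' : ((2*m).choose m * (2*n).choose n : ℤ) = ((m+n).choose m) * k0 := by
      exact_mod_cast congrArg (Nat.cast (R := ℤ)) h0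
    have h2' : ((2*(m+1)).choose (m+1) * (2*n).choose n : ℤ) = ((m+1+n).choose (m+1)) * k2 := by
      exact_mod_cast congrArg (Nat.cast (R := ℤ)) h2
    have hne : (((m+n).choose m : ℤ) * ((m+1+n).choose (m+1) : ℤ)) ≠ 0 := by positivity
    have main : ((2*m).choose m * (2*(n+1)).choose (n+1) : ℤ)
        = ((m+(n+1)).choose m) * (4 * k0 - k2) := by
      apply mul_right_cancel₀ (b := (((m+n).choose m : ℤ) * ((m+1+n).choose (m+1) : ℤ))) hne
      linear_combination key - (((m+n).choose m : ℤ) * ((m+(n+1)).choose m : ℤ)) * h2' + 4 * (((m+(n+1)).choose m : ℤ) * ((m+1+n).choose (m+1) : ℤ)) * h0'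
    have : ((m+(n+1)).choose m : ℤ) ∣ ((2*m).choose m * (2*(n+1)).choose (n+1) : ℤ) := ⟨_, main⟩
    exact_mod_cast this

lemma superCatalan_mul (m n : ℕ) :
    superCatalan m n * (m+n).choose m = (2*m).choose m * (2*n).choose n :=
  Nat.div_mul_cancel (superCatalan_dvd m n)

lemma sc_fact (i j : ℕ) :
    superCatalan i j * ((i+j)! * (i ! * j !)) = (2*i)! * (2*j)! := by
  have h1 : (i+j).choose i * i ! * j ! = (i+j)! := by
    have := Nat.choose_mul_factorial_mul_factorial (Nat.le_add_right i j)
    simpa [Nat.add_sub_cancel_left] using this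
  have h2 : (2*i).choose i * i ! * i ! = (2*i)! := by
    have := Nat.choose_mul_factorial_mul_factorial (show i ≤ 2*i by omega)
    simpa [show 2*i - i = i by omega] using this
  have h3 : (2*j).choose j * j ! * j ! = (2*j)! := by
    have := Nat.choose_mul_factorial_mul_factorial (show j ≤ 2*j by omega)
    simpa [show 2*j - j = j by omega] using this
  calc superCatalan i j * ((i+j)! * (i ! * j !))
      = (superCatalan i j * (i+j).choose i) * (i ! * j ! * (i ! * j !)) := by
        rw [← h1]; ring
    _ = ((2*i).choose i * (2*j).choose j) * (i ! * j ! * (i ! * j !)) := by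
        rw [superCatalan_mul]
    _ = ((2*i).choose i * i ! * i !) * ((2*j).choose j * j ! * j !) := by ring
    _ = (2*i)! * (2*j)! := by rw [h2, h3]

variable {p : ℕ} [hpf : Fact p.Prime]

lemma fact_ne {m : ℕ} (h : m < p) : ((m ! : ZMod p)) ≠ 0 := by
  rw [Ne, ZMod.natCast_eq_zero_iff]
  rw [hpf.out.dvd_factorial]
  omega

lemma pfac_cast (d : ℕ) : (((p + d)! / p : ℕ) : ZMod p) = -(d ! : ZMod p) := by
  induction d with
  | zero =>
    have hp1 : p = (p-1) + 1 := (Nat.succ_pred_eq_of_pos hpf.out.pos).symm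
    have : p ! = p * (p-1)! := by
      conv_lhs => rw [hp1]
      rw [Nat.factorial_succ, ← hp1]
    simp only [Nat.add_zero, this, Nat.mul_div_cancel_left _ hpf.out.pos]
    simp [ZMod.wilsons_lemma]
  | succ d ih =>
    have hdvd : p ∣ (p+d)! := Nat.dvd_factorial hpf.out.pos (Nat.le_add_right p d)
    have h1 : (p+(d+1))! = (p+d+1) * (p+d)! := by
      rw [show p+(d+1) = (p+d)+1 from rfl, Nat.factorial_succ]
    rw [h1, Nat.mul_div_assoc _ hdvd, Nat.cast_mul, ih]
    have : ((p+d+1 : ℕ) : ZMod p) = (d+1 : ℕ) := by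
      push_cast [ZMod.natCast_self]; ring
    rw [this, Nat.factorial_succ]
    push_cast
    ring

lemma reflect : ∀ t : ℕ, t + 1 ≤ p →
    (((p-(t+1))! : ZMod p)) * ((t ! : ZMod p)) * (-1)^(t+1) = 1 := by
  intro t
  induction t with
  | zero => intro _; simp [ZMod.wilsons_lemma]
  | succ t ih =>
    intro ht
    have ih' := ih (by omega)
    have h1 : (p - (t+1)) = (p-(t+2)) + 1 := by omega
    have h2 : (p - (t+1))! = (p - (t+1)) * (p-(t+2))! := by
      conv_lhs => rw [h1, Nat.factorial_succ, ← h1]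
    have h3 : ((p - (t+1) : ℕ) : ZMod p) = -(t+1 : ℕ) := by
      have : ((p - (t+1) : ℕ) : ZMod p) + ((t+1 : ℕ) : ZMod p) = ((p : ℕ) : ZMod p) := by
        rw [← Nat.cast_add]; congr 1; omega
      rw [ZMod.natCast_self] at this
      linear_combination this
    rw [h2, Nat.cast_mul, h3] at ih'
    rw [Nat.factorial_succ]
    push_cast at ih' ⊢
    linear_combination ih'

lemma cast_ne_zero2 {m : ℕ} (h0 : 0 < m) (h : m < p) : ((m : ZMod p)) ≠ 0 := by
  rw [Ne, ZMod.natCast_eq_zero_iff]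
  intro hd
  exact absurd (Nat.le_of_dvd h0 hd) (by omega)

lemma cb {n : ℕ} (hpn : p = 2*n+1) : ∀ i, i ≤ n →
    (((2*i).choose i : ZMod p)) = (-4)^i * ((n.choose i : ZMod p)) := by
  intro i
  induction i with
  | zero => intro _; simp
  | succ i ih =>
    intro hin
    have ih' := ih (by omega)
    have h1 : (i+1) * (2*(i+1)).choose (i+1) = 2 * (2*i+1) * ((2*i).choose i) :=
      Nat.succ_mul_centralBinom_succ i
    have h2 : n.choose (i+1) * (i+1) = n.choose i * (n - i) := Nat.choose_succ_right_eq n i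
    have h1c : ((i:ZMod p)+1) * (((2*(i+1)).choose (i+1) : ZMod p))
        = 2 * (2*(i:ZMod p)+1) * (((2*i).choose i : ZMod p)) := by
      exact_mod_cast congrArg (Nat.cast (R := ZMod p)) h1
    have h2c : ((n.choose (i+1) : ZMod p)) * ((i:ZMod p)+1)
        = ((n.choose i : ZMod p)) * ((n:ZMod p) - (i:ZMod p)) := by
      have := congrArg (Nat.cast (R := ZMod p)) h2
      push_cast [Nat.cast_sub (show i ≤ n by omega)] at this
      exact_mod_cast this
    have hne : ((i:ZMod p)+1) ≠ 0 := by
      have := cast_ne_zero2 (p := p) (m := i+1) (by omega) (by omega)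
      push_cast at this; exact this
    have hn0 : 2*(n : ZMod p) + 1 = 0 := by
      have : ((2*n+1 : ℕ) : ZMod p) = 0 := by rw [← hpn]; exact ZMod.natCast_self p
      push_cast at this; linear_combination this
    apply mul_left_cancel₀ hne
    rw [h1c, ih']
    linear_combination 4*(-4 : ZMod p)^i * h2c + 2*(-4:ZMod p)^i * ((n.choose i : ZMod p)) * hn0

lemma termA {n : ℕ} (hpn : p = 2*n+1) (i j : ℕ) (hj : n+1 ≤ j) (hij : i + j ≤ 2*n) :
    ((superCatalan i j : ZMod p)) = 0 := by
  have key := sc_fact i j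
  have h2j : p ∣ (2*j)! := hpf.out.dvd_factorial.mpr (by omega)
  have hz : (((2*j)! : ℕ) : ZMod p) = 0 := (ZMod.natCast_eq_zero_iff _ _).mpr h2j
  have hcast : ((superCatalan i j : ZMod p)) * (((i+j)! * (i ! * j !) : ℕ) : ZMod p) = 0 := by
    rw [← Nat.cast_mul, key, Nat.cast_mul, hz, mul_zero]
  rcases mul_eq_zero.mp hcast with h | h
  · exact h
  · exfalso
    apply absurd h
    push_cast
    exact mul_ne_zero (fact_ne (by omega)) (mul_ne_zero (fact_ne (by omega)) (fact_ne (by omega)))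

lemma termB {n : ℕ} (hpn : p = 2*n+1) (i k : ℕ) (hk1 : 1 ≤ k) (hki : k ≤ i) (hin : i ≤ n) :
    ((superCatalan i (p - k) : ZMod p))
      = 2 * (-1)^k * (-4)^(i-k) * (((n-k).choose (i-k) : ZMod p)) := by
  have hkn : k ≤ n := le_trans hki hin
  have key := sc_fact i (p - k)
  rw [show i + (p - k) = p + (i - k) from by omega,
      show 2*(p - k) = p + (p - 2*k) from by omega] at key
  have pd1 : p ∣ (p + (i-k))! := Nat.dvd_factorial hpf.out.pos (Nat.le_add_right _ _)
  have pd2 : p ∣ (p + (p-2*k))! := Nat.dvd_factorial hpf.out.pos (Nat.le_add_right _ _)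
  have hu1 : (p + (i-k))! = p * ((p + (i-k))!/p) := (Nat.mul_div_cancel' pd1).symm
  have hu2 : (p + (p-2*k))! = p * ((p + (p-2*k))!/p) := (Nat.mul_div_cancel' pd2).symm
  rw [hu1, hu2] at key
  have key2 : p * (superCatalan i (p-k) * (((p + (i-k))!/p) * (i ! * (p-k)!)))
      = p * ((2*i)! * ((p + (p-2*k))!/p)) := by
    calc p * (superCatalan i (p-k) * (((p + (i-k))!/p) * (i ! * (p-k)!)))
        = superCatalan i (p-k) * (p * ((p + (i-k))!/p) * (i ! * (p-k)!)) := by ring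
      _ = (2*i)! * (p * ((p + (p-2*k))!/p)) := key
      _ = p * ((2*i)! * ((p + (p-2*k))!/p)) := by ring
  have key3 := Nat.eq_of_mul_eq_mul_left hpf.out.pos key2
  have E : (superCatalan i (p-k) : ZMod p) * (((i-k)! : ZMod p) * ((i ! : ZMod p) * ((p-k)! : ZMod p)))
      = ((2*i)! : ZMod p) * ((p-2*k)! : ZMod p) := by
    have := congrArg (Nat.cast (R := ZMod p)) key3
    push_cast at this
    rw [pfac_cast, pfac_cast] at this
    linear_combination -this
  -- reflection facts
  have hsq : (-1 : ZMod p)^k * (-1)^k = 1 := by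
    rw [← pow_add, show k + k = 2*k from by ring, pow_mul]; norm_num
  have R1 : ((p-k)! : ZMod p) * ((k-1)! : ZMod p) * (-1)^k = 1 := by
    have := reflect (p := p) (k-1) (by omega)
    rw [show k - 1 + 1 = k from by omega] at this
    exact this
  have R2 : ((p-2*k)! : ZMod p) * ((2*k-1)! : ZMod p) = 1 := by
    have := reflect (p := p) (2*k-1) (by omega)
    rw [show 2*k - 1 + 1 = 2*k from by omega] at this
    calc ((p-2*k)! : ZMod p) * ((2*k-1)! : ZMod p)
        = ((p-2*k)! : ZMod p) * ((2*k-1)! : ZMod p) * ((-1)^(2*k)) := by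
          rw [pow_mul]; norm_num
      _ = 1 := this
  have v2' : ((p-k)! : ZMod p) * ((k-1)! : ZMod p) = (-1)^k := by
    linear_combination (-1 : ZMod p)^k * R1 - ((p-k)! : ZMod p)*((k-1)! : ZMod p)*hsq
  -- binomial facts
  have hc_i := cb hpn i hin
  have hc_k := cb hpn k hkn
  have m1c : ((2*i).choose i : ZMod p) * ((i ! : ZMod p) * (i ! : ZMod p)) = ((2*i)! : ZMod p) := by
    have := Nat.choose_mul_factorial_mul_factorial (show i ≤ 2*i by omega)
    rw [show 2*i - i = i from by omega] at this
    exact_mod_cast congrArg (Nat.cast (R := ZMod p)) (by rw [← this]; ring)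
  have hval2i : ((2*i)! : ZMod p) = (-4)^i * (n.choose i : ZMod p) * ((i ! : ZMod p) * (i ! : ZMod p)) := by
    rw [← m1c, hc_i]
  have m2c : ((2*k).choose k : ZMod p) * ((k ! : ZMod p) * (k ! : ZMod p)) = ((2*k)! : ZMod p) := by
    have := Nat.choose_mul_factorial_mul_factorial (show k ≤ 2*k by omega)
    rw [show 2*k - k = k from by omega] at this
    exact_mod_cast congrArg (Nat.cast (R := ZMod p)) (by rw [← this]; ring)
  have n3 : (2*k)! = (2*k) * (2*k-1)! := by
    have h := Nat.factorial_succ (2*k-1)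
    rw [show 2*k - 1 + 1 = 2*k from by omega] at h
    exact h
  have n4 : k ! = k * (k-1)! := by
    have h := Nat.factorial_succ (k-1)
    rw [show k - 1 + 1 = k from by omega] at h
    exact h
  have n3c : ((2:ZMod p)*k) * ((2*k-1)! : ZMod p) = ((2*k)! : ZMod p) := by
    have := congrArg (Nat.cast (R := ZMod p)) n3
    push_cast at this
    linear_combination -this
  have m4c : (k : ZMod p) * ((k-1)! : ZMod p) = (k ! : ZMod p) := by
    have := congrArg (Nat.cast (R := ZMod p)) n4
    push_cast at this
    linear_combination -this
  have h2kfact : ((2:ZMod p)*k) * ((2*k-1)! : ZMod p)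
      = (-4)^k * (n.choose k : ZMod p) * ((k ! : ZMod p) * (k ! : ZMod p)) := by
    rw [n3c, ← m2c, hc_k]
  have m5c : (i.choose k : ZMod p) * ((k ! : ZMod p) * ((i-k)! : ZMod p)) = (i ! : ZMod p) := by
    have := Nat.choose_mul_factorial_mul_factorial hki
    exact_mod_cast congrArg (Nat.cast (R := ZMod p)) (by rw [← this]; ring)
  have m6c : (n.choose i : ZMod p) * (i.choose k : ZMod p)
      = (n.choose k : ZMod p) * ((n-k).choose (i-k) : ZMod p) := by
    exact_mod_cast congrArg (Nat.cast (R := ZMod p)) (Nat.choose_mul (n := n) hki)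
  have haFi : (n.choose i : ZMod p) * (i ! : ZMod p)
      = ((n.choose k : ZMod p) * ((n-k).choose (i-k) : ZMod p)) * ((k ! : ZMod p) * ((i-k)! : ZMod p)) := by
    rw [← m5c]
    linear_combination ((k ! : ZMod p) * ((i-k)! : ZMod p)) * m6c
  have hpow : (-4 : ZMod p)^(i-k) * (-4)^k = (-4)^i := by
    rw [← pow_add, show i - k + k = i from by omega]
  -- nonzero facts
  have hAne : (((i-k)! : ZMod p) * ((i ! : ZMod p) * ((p-k)! : ZMod p))) ≠ 0 :=
    mul_ne_zero (fact_ne (by omega)) (mul_ne_zero (fact_ne (by omega)) (fact_ne (by omega)))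
  have hWne : (((k-1)! : ZMod p) * (((2*k-1)! : ZMod p) * ((k : ZMod p) * ((2:ZMod p)*k)))) ≠ 0 := by
    have hk : ((k : ℕ) : ZMod p) ≠ 0 := cast_ne_zero2 (by omega) (by omega)
    have h2k : ((2*k : ℕ) : ZMod p) ≠ 0 := cast_ne_zero2 (by omega) (by omega)
    push_cast at h2k
    exact mul_ne_zero (fact_ne (by omega)) (mul_ne_zero (fact_ne (by omega)) (mul_ne_zero hk h2k))
  -- final
  apply mul_right_cancel₀ hAne
  rw [E]
  apply mul_right_cancel₀ hWne
  have hL : ((2*i)! : ZMod p) * ((p-2*k)! : ZMod p) * (((k-1)! : ZMod p) * (((2*k-1)! : ZMod p) * ((k : ZMod p) * ((2:ZMod p)*k))))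
      = 2 * ((-4 : ZMod p)^(i-k) * (-4)^k) * ((n-k).choose (i-k) : ZMod p) * ((i-k)! : ZMod p) * (i ! : ZMod p) * (k : ZMod p) * ((n.choose k : ZMod p) * ((k ! : ZMod p) * (k ! : ZMod p))) := by
    calc ((2*i)! : ZMod p) * ((p-2*k)! : ZMod p) * (((k-1)! : ZMod p) * (((2*k-1)! : ZMod p) * ((k : ZMod p) * ((2:ZMod p)*k))))
        = ((2*i)! : ZMod p) * ((k : ZMod p) * ((k-1)! : ZMod p)) * ((2:ZMod p)*k) * (((p-2*k)! : ZMod p) * ((2*k-1)! : ZMod p)) := by ring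
      _ = ((2*i)! : ZMod p) * (k ! : ZMod p) * ((2:ZMod p)*k) * 1 := by rw [R2, m4c]
      _ = ((-4)^i * (n.choose i : ZMod p) * ((i ! : ZMod p) * (i ! : ZMod p))) * (k ! : ZMod p) * ((2:ZMod p)*k) * 1 := by rw [hval2i]
      _ = (-4)^i * ((n.choose i : ZMod p) * (i ! : ZMod p)) * (i ! : ZMod p) * (k ! : ZMod p) * ((2:ZMod p)*k) := by ring
      _ = (-4)^i * (((n.choose k : ZMod p) * ((n-k).choose (i-k) : ZMod p)) * ((k ! : ZMod p) * ((i-k)! : ZMod p))) * (i ! : ZMod p) * (k ! : ZMod p) * ((2:ZMod p)*k) := by rw [haFi]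
      _ = ((-4 : ZMod p)^(i-k) * (-4)^k) * (((n.choose k : ZMod p) * ((n-k).choose (i-k) : ZMod p)) * ((k ! : ZMod p) * ((i-k)! : ZMod p))) * (i ! : ZMod p) * (k ! : ZMod p) * ((2:ZMod p)*k) := by rw [hpow]
      _ = 2 * ((-4 : ZMod p)^(i-k) * (-4)^k) * ((n-k).choose (i-k) : ZMod p) * ((i-k)! : ZMod p) * (i ! : ZMod p) * (k : ZMod p) * ((n.choose k : ZMod p) * ((k ! : ZMod p) * (k ! : ZMod p))) := by ring
  have hR : (2 * (-1 : ZMod p)^k * (-4)^(i-k) * (((n-k).choose (i-k) : ZMod p))) * (((i-k)! : ZMod p) * ((i ! : ZMod p) * ((p-k)! : ZMod p))) * (((k-1)! : ZMod p) * (((2*k-1)! : ZMod p) * ((k : ZMod p) * ((2:ZMod p)*k))))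
      = 2 * ((-4 : ZMod p)^(i-k) * (-4)^k) * ((n-k).choose (i-k) : ZMod p) * ((i-k)! : ZMod p) * (i ! : ZMod p) * (k : ZMod p) * ((n.choose k : ZMod p) * ((k ! : ZMod p) * (k ! : ZMod p))) := by
    calc (2 * (-1 : ZMod p)^k * (-4)^(i-k) * (((n-k).choose (i-k) : ZMod p))) * (((i-k)! : ZMod p) * ((i ! : ZMod p) * ((p-k)! : ZMod p))) * (((k-1)! : ZMod p) * (((2*k-1)! : ZMod p) * ((k : ZMod p) * ((2:ZMod p)*k))))
        = (2 * (-1 : ZMod p)^k * (-4)^(i-k) * (((n-k).choose (i-k) : ZMod p)) * (((i-k)! : ZMod p) * ((i ! : ZMod p) * (k : ZMod p)))) * (((p-k)! : ZMod p) * ((k-1)! : ZMod p)) * (((2:ZMod p)*k) * ((2*k-1)! : ZMod p)) := by ring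
      _ = (2 * (-1 : ZMod p)^k * (-4)^(i-k) * (((n-k).choose (i-k) : ZMod p)) * (((i-k)! : ZMod p) * ((i ! : ZMod p) * (k : ZMod p)))) * ((-1 : ZMod p)^k) * ((-4)^k * (n.choose k : ZMod p) * ((k ! : ZMod p) * (k ! : ZMod p))) := by rw [v2', h2kfact]
      _ = ((-1 : ZMod p)^k * (-1)^k) * (2 * ((-4 : ZMod p)^(i-k) * (-4)^k) * ((n-k).choose (i-k) : ZMod p) * ((i-k)! : ZMod p) * (i ! : ZMod p) * (k : ZMod p) * ((n.choose k : ZMod p) * ((k ! : ZMod p) * (k ! : ZMod p)))) := by ring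
      _ = 2 * ((-4 : ZMod p)^(i-k) * (-4)^k) * ((n-k).choose (i-k) : ZMod p) * ((i-k)! : ZMod p) * (i ! : ZMod p) * (k : ZMod p) * ((n.choose k : ZMod p) * ((k ! : ZMod p) * (k ! : ZMod p))) := by rw [hsq, one_mul]
  exact hL.trans hR.symm

theorem stmt14 (p : ℕ) (hp : p.Prime) (hodd : Odd p) :
    (↑(∑ i ∈ Finset.range ((p - 1) / 2 + 1),
          ∑ j ∈ Finset.Icc ((p - 1) / 2 + 1) (2 * ((p - 1) / 2)), superCatalan i j) : ZMod p) =
      (legendreSym 3 p : ZMod p) - (-1 : ZMod p) ^ ((p - 1) / 2) := by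
  haveI hpf : Fact p.Prime := ⟨hp⟩
  obtain ⟨n, hpn⟩ := hodd
  have hp2 : p ≠ 2 := by omega
  have hn2 : (p - 1) / 2 = n := by omega
  have hp3 : 3 ≤ p := by
    rcases Nat.lt_or_ge p 3 with h | h
    · interval_cases p
      · exact absurd hp (by norm_num)
      · exact absurd hp (by norm_num)
      · omega
    · exact h
  have hn1 : 1 ≤ n := by omega
  rw [hn2]
  -- Step 1: evaluate the sum
  have hsum : ((∑ i ∈ Finset.range (n + 1),
      ∑ j ∈ Finset.Icc (n + 1) (2 * n), superCatalan i j : ℕ) : ZMod p)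
      = (-3 : ZMod p)^n - (-1)^n := by
    push_cast
    rw [Finset.sum_comm]
    have himg : Finset.Icc (n+1) (2*n) = (Finset.Icc 1 n).image (fun k => p - k) := by
      ext j
      simp only [Finset.mem_Icc, Finset.mem_image]
      constructor
      · intro hj
        exact ⟨p - j, by omega, by omega⟩
      · rintro ⟨k, hk, rfl⟩
        omega
    rw [himg, Finset.sum_image (by intro x hx y hy hxy; simp only [Finset.coe_Icc, Set.mem_Icc] at hx hy hxy; omega)]
    have hinner : ∀ k ∈ Finset.Icc 1 n,
        (∑ i ∈ Finset.range (n+1), ((superCatalan i (p - k) : ZMod p)))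
          = 2 * (-1:ZMod p)^n * 3^(n-k) := by
      intro k hk
      simp only [Finset.mem_Icc] at hk
      have hsub : Finset.Icc k n ⊆ Finset.range (n+1) := by
        intro i hi; simp only [Finset.mem_Icc] at hi; simp only [Finset.mem_range]; omega
      rw [← Finset.sum_subset hsub (by
        intro i hi hni
        simp only [Finset.mem_range] at hi
        simp only [Finset.mem_Icc] at hni
        exact termA hpn i (p - k) (by omega) (by omega))]
      have hIm : Finset.Icc k n = (Finset.range (n - k + 1)).image (fun t => k + t) := by
        ext i
        simp only [Finset.mem_Icc, Finset.mem_image, Finset.mem_range]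
        constructor
        · intro hi; exact ⟨i - k, by omega, by omega⟩
        · rintro ⟨t, ht, rfl⟩; omega
      rw [hIm, Finset.sum_image (by intro x _ y _ h; simp only at h; omega)]
      have : ∀ t ∈ Finset.range (n - k + 1),
          ((superCatalan (k + t) (p - k) : ZMod p))
            = 2 * (-1:ZMod p)^k * ((-4)^t * ((n-k).choose t : ZMod p)) := by
        intro t ht
        simp only [Finset.mem_range] at ht
        rw [termB hpn (k+t) k hk.1 (by omega) (by omega)]
        rw [show k + t - k = t from by omega]
        ring
      rw [Finset.sum_congr rfl this, ← Finset.mul_sum]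
      have hbin : (∑ t ∈ Finset.range (n - k + 1), ((-4 : ZMod p)^t * ((n-k).choose t : ZMod p)))
          = (-3 : ZMod p)^(n-k) := by
        have := add_pow (-4 : ZMod p) 1 (n-k)
        simp only [one_pow, mul_one] at this
        rw [show (-3 : ZMod p) = -4 + 1 from by norm_num, this]
      rw [hbin]
      have hfl : (-3 : ZMod p)^(n-k) = (-1)^(n-k) * 3^(n-k) := by
        rw [show (-3 : ZMod p) = (-1) * 3 from by norm_num, mul_pow]
      rw [hfl]
      have : (-1 : ZMod p)^k * (-1)^(n-k) = (-1)^n := by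
        rw [← pow_add, show k + (n-k) = n from by omega]
      calc 2 * (-1:ZMod p)^k * ((-1)^(n-k) * 3^(n-k))
          = 2 * ((-1:ZMod p)^k * (-1)^(n-k)) * 3^(n-k) := by ring
        _ = 2 * (-1:ZMod p)^n * 3^(n-k) := by rw [this]
    rw [Finset.sum_congr rfl hinner]
    have hgeo : (∑ k ∈ Finset.Icc 1 n, (3 : ZMod p)^(n-k)) = ∑ t ∈ Finset.range n, (3:ZMod p)^t := by
      have : Finset.range n = (Finset.Icc 1 n).image (fun k => n - k) := by
        ext t
        simp only [Finset.mem_range, Finset.mem_Icc, Finset.mem_image]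
        constructor
        · intro ht; exact ⟨n - t, by omega, by omega⟩
        · rintro ⟨k, hk, rfl⟩; omega
      rw [this, Finset.sum_image (by intro x hx y hy h; simp only [Finset.coe_Icc, Set.mem_Icc] at hx hy h; omega)]
    have hg := geom_sum_mul (3 : ZMod p) n
    rw [show (3 : ZMod p) - 1 = 2 from by norm_num] at hg
    calc (∑ k ∈ Finset.Icc 1 n, 2 * (-1:ZMod p)^n * 3^(n-k))
        = 2 * (-1:ZMod p)^n * ∑ k ∈ Finset.Icc 1 n, (3:ZMod p)^(n-k) := by rw [Finset.mul_sum]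
      _ = (-1:ZMod p)^n * ((∑ t ∈ Finset.range n, (3:ZMod p)^t) * 2) := by rw [hgeo]; ring
      _ = (-1:ZMod p)^n * (3^n - 1) := by rw [hg]
      _ = (-3 : ZMod p)^n - (-1)^n := by
          rw [show (-3 : ZMod p) = (-1) * 3 from by norm_num, mul_pow]; ring
  -- Step 2: Legendre symbol
  have hleg : ((legendreSym 3 p : ℤ) : ZMod p) = (-3 : ZMod p)^n := by
    haveI : Fact (Nat.Prime 3) := ⟨by norm_num⟩
    have hq := legendreSym.quadratic_reciprocity' (p := p) (q := 3) hp2 (by norm_num)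
    have hp2' : p / 2 = n := by omega
    rw [hq, hp2']
    have he := legendreSym.eq_pow p 3
    rw [hp2'] at he
    push_cast
    rw [he]
    rw [show ((3:ℤ) : ZMod p) = (3 : ZMod p) from by push_cast; ring]
    rw [show (-3 : ZMod p) = (-1) * 3 from by norm_num, mul_pow]
    norm_num
  rw [hsum, hleg]
end
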